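/- arXiv:2302.00050 — 11 statements merged into one kernel-verified Lean document; each statement's English description precedes it below -/
import Mathlib

section
/- Let C be a category with colimits of directed diagrams, and let M be a class of morphisms of C that contains all isomorphisms and is closed under composition. If M is closed under colimits of continuous chains, then M is closed under all directed colimits; that is, for every diagram D indexed by a directed partially ordered set whose connecting morphisms all lie in M, with colimit cocone (c_i : Z_i → colim D), (1) every colimit injection c_i lies in M, and (2) for every cocone (f_i : Z_i → A) over D with all f_i in M, the unique induced morphism colim D → A lies in M. -/
open CategoryTheory CategoryTheory.Limits

universe v u w

variable {C : Type u} [Category.{v} C]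

/-- The inclusion functor from the poset of stages strictly below `j` into the
chain index `Set.Iio α`. -/
def Iio.incl {α : Ordinal.{w}} (j : Set.Iio α) :
    {i : Set.Iio α // i < j} ⥤ Set.Iio α :=
  Monotone.functor (f := (Subtype.val : {i : Set.Iio α // i < j} → Set.Iio α))
    (fun _ _ h => h)

/-- For a chain `F` indexed by the ordinals below `α` and a stage `j < α`, the canonical
cocone over the subchain of all stages `i < j` whose apex is `F.obj j`, with legs the
connecting morphisms. -/
def chainCoconeAt {α : Ordinal.{w}} (F : Set.Iio α ⥤ C) (j : Set.Iio α) :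
    Cocone (Iio.incl j ⋙ F) where
  pt := F.obj j
  ι :=
    { app := fun i => F.map (homOfLE i.2.le)
      naturality := fun i i' f => by
        dsimp [Iio.incl]
        rw [Category.comp_id, ← F.map_comp]
        congr 1 }

/-- A chain indexed by the ordinals below `α` is continuous if, for every limit ordinal
`j < α`, the object at stage `j` together with the connecting morphisms from the earlier
stages is a colimit of the subchain indexed by the `i < j`. -/
def IsContinuousChain {α : Ordinal.{w}} (F : Set.Iio α ⥤ C) : Prop :=
  ∀ j : Set.Iio α, Order.IsSuccLimit j.1 → Nonempty (IsColimit (chainCoconeAt F j))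

/-- A class of morphisms `M` is closed under the colimit (given by the colimit cocone `c`
with colimiting structure `hc`) of a diagram `F` if (1) all colimit injections lie in `M`,
and (2) for every cocone over `F` all of whose legs lie in `M`, the induced morphism out
of the colimit lies in `M`. -/
def ClosedUnderColimit (M : MorphismProperty C) {J : Type*} [Category J]
    {F : J ⥤ C} {c : Cocone F} (hc : IsColimit c) : Prop :=
  (∀ j : J, M (c.ι.app j)) ∧
  ∀ s : Cocone F, (∀ j : J, M (s.ι.app j)) → M (hc.desc s)

open Cardinal

namespace DirColimAux

section Closure
variable {I : Type w}



/-- Iterated closure of a set under a binary "upper bound" operation. -/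
def clSeq (u : I → I → I) (S : Set I) : ℕ → Set I
  | 0 => S
  | n+1 => clSeq u S n ∪ Set.image2 u (clSeq u S n) (clSeq u S n)

def cl (u : I → I → I) (S : Set I) : Set I := ⋃ n, clSeq u S n

theorem subset_cl (u : I → I → I) (S : Set I) : S ⊆ cl u S :=
  Set.subset_iUnion (clSeq u S) 0

theorem clSeq_mono_n (u : I → I → I) (S : Set I) : Monotone (clSeq u S) := by
  apply monotone_nat_of_le_succ
  intro n
  exact Set.subset_union_left

theorem clSeq_mono_S (u : I → I → I) {S T : Set I} (h : S ⊆ T) (n : ℕ) :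
    clSeq u S n ⊆ clSeq u T n := by
  induction n with
  | zero => exact h
  | succ n ih => exact Set.union_subset_union ih (Set.image2_subset ih ih)

theorem cl_mono (u : I → I → I) {S T : Set I} (h : S ⊆ T) : cl u S ⊆ cl u T :=
  Set.iUnion_mono fun n => clSeq_mono_S u h n

theorem u_mem_cl (u : I → I → I) (S : Set I) {x y : I} (hx : x ∈ cl u S) (hy : y ∈ cl u S) :
    u x y ∈ cl u S := by
  obtain ⟨n, hn⟩ := Set.mem_iUnion.mp hx
  obtain ⟨m, hm⟩ := Set.mem_iUnion.mp hy
  exact Set.mem_iUnion.mpr ⟨(max n m) + 1,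
    Set.mem_union_right _ (Set.mem_image2_of_mem
      (clSeq_mono_n u S (le_max_left n m) hn) (clSeq_mono_n u S (le_max_right n m) hm))⟩

theorem cl_directedOn [Preorder I] {u : I → I → I} (hu1 : ∀ a b, a ≤ u a b)
    (hu2 : ∀ a b, b ≤ u a b) (S : Set I) : DirectedOn (· ≤ ·) (cl u S) := by
  intro x hx y hy
  exact ⟨u x y, u_mem_cl u S hx hy, hu1 x y, hu2 x y⟩

theorem cl_iUnion {ι : Type*} [Nonempty ι] [LinearOrder ι] (u : I → I → I)
    (A : ι → Set I) (hA : Monotone A) : cl u (⋃ i, A i) = ⋃ i, cl u (A i) := by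
  apply Set.Subset.antisymm
  · have key : ∀ n, clSeq u (⋃ i, A i) n ⊆ ⋃ i, clSeq u (A i) n := by
      intro n
      induction n with
      | zero => exact le_refl _
      | succ n ih =>
        rintro x (hx | hx)
        · obtain ⟨i, hi⟩ := Set.mem_iUnion.mp (ih hx)
          exact Set.mem_iUnion.mpr ⟨i, Set.mem_union_left _ hi⟩
        · obtain ⟨a, ha, b, hb, rfl⟩ := hx
          obtain ⟨i, hi⟩ := Set.mem_iUnion.mp (ih ha)
          obtain ⟨j, hj⟩ := Set.mem_iUnion.mp (ih hb)
          refine Set.mem_iUnion.mpr ⟨max i j, Set.mem_union_right _ ?_⟩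
          exact Set.mem_image2_of_mem
            (clSeq_mono_S u (hA (le_max_left i j)) n hi)
            (clSeq_mono_S u (hA (le_max_right i j)) n hj)
    intro x hx
    obtain ⟨n, hn⟩ := Set.mem_iUnion.mp hx
    obtain ⟨i, hi⟩ := Set.mem_iUnion.mp (key n hn)
    exact Set.mem_iUnion.mpr ⟨i, Set.mem_iUnion.mpr ⟨n, hi⟩⟩
  · exact Set.iUnion_subset fun i => cl_mono u (Set.subset_iUnion A i)

theorem mk_clSeq_le (u : I → I → I) (S : Set I) (n : ℕ) :
    Cardinal.mk (clSeq u S n) ≤ max (Cardinal.mk S) Cardinal.aleph0 := by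
  induction n with
  | zero => exact le_max_left _ _
  | succ n ih =>
    have h2 : Cardinal.mk (Set.image2 u (clSeq u S n) (clSeq u S n)) ≤
        max (Cardinal.mk S) Cardinal.aleph0 := by
      refine le_trans Cardinal.mk_image2_le ?_
      calc Cardinal.mk (clSeq u S n) * Cardinal.mk (clSeq u S n)
          ≤ max (Cardinal.mk S) Cardinal.aleph0 * max (Cardinal.mk S) Cardinal.aleph0 :=
            mul_le_mul' ih ih
        _ = max (Cardinal.mk S) Cardinal.aleph0 :=
            Cardinal.mul_eq_self (le_max_right _ _)
    refine le_trans (Cardinal.mk_union_le _ _) ?_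
    refine le_trans (add_le_add ih h2) ?_
    rw [Cardinal.add_eq_self (le_max_right _ _)]

theorem mk_cl_le (u : I → I → I) (S : Set I) :
    Cardinal.mk (cl u S) ≤ max (Cardinal.mk S) Cardinal.aleph0 := by
  have : cl u S = ⋃ (n : ULift.{w} ℕ), clSeq u S n.down := by
    apply Set.Subset.antisymm
    · exact Set.iUnion_subset fun n =>
        Set.subset_iUnion (fun m : ULift.{w} ℕ => clSeq u S m.down) ⟨n⟩
    · exact Set.iUnion_subset fun n => Set.subset_iUnion (clSeq u S) n.down
  rw [this]
  refine le_trans (Cardinal.mk_iUnion_le (fun n : ULift.{w} ℕ => clSeq u S n.down)) ?_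
  have hm : Cardinal.mk (ULift.{w} ℕ) = Cardinal.aleph0 := by simp
  rw [hm]
  calc Cardinal.aleph0 * ⨆ n : ULift.{w} ℕ, Cardinal.mk (clSeq u S n.down)
      ≤ Cardinal.aleph0 * max (Cardinal.mk S) Cardinal.aleph0 :=
        mul_le_mul' (le_refl _) (ciSup_le' fun n => mk_clSeq_le u S n.down)
    _ ≤ max (Cardinal.mk S) Cardinal.aleph0 * max (Cardinal.mk S) Cardinal.aleph0 :=
        mul_le_mul' (le_max_right _ _) (le_refl _)
    _ = max (Cardinal.mk S) Cardinal.aleph0 := Cardinal.mul_eq_self (le_max_right _ _)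

end Closure

variable {I : Type w} [PartialOrder I]

/-- Restriction of a diagram to a subset of the index poset. -/
def restrictF (F : I ⥤ C) (S : Set I) : ↥S ⥤ C :=
  Monotone.functor (f := (Subtype.val : S → I)) (fun _ _ h => h) ⋙ F

@[simp] theorem restrictF_obj (F : I ⥤ C) (S : Set I) (x : S) :
    (restrictF F S).obj x = F.obj x.1 := rfl

@[simp] theorem restrictF_map (F : I ⥤ C) (S : Set I) {x y : S} (f : x ⟶ y) :
    (restrictF F S).map f = F.map (homOfLE (leOfHom f)) := rfl

/-- Restriction of a cocone along an inclusion of index subsets. -/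
def resCocone (F : I ⥤ C) {S T : Set I} (h : S ⊆ T) (d : Cocone (restrictF F T)) :
    Cocone (restrictF F S) where
  pt := d.pt
  ι :=
    { app := fun x => d.ι.app ⟨x.1, h x.2⟩
      naturality := fun x y f => by
        have := d.ι.naturality (homOfLE (leOfHom f) :
          (⟨x.1, h x.2⟩ : T) ⟶ ⟨y.1, h y.2⟩)
        simpa using this }

@[simp] theorem resCocone_app (F : I ⥤ C) {S T : Set I} (h : S ⊆ T)
    (d : Cocone (restrictF F T)) (x : S) :
    (resCocone F h d).ι.app x = d.ι.app ⟨x.1, h x.2⟩ := rfl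

/-- Restriction of a cocone over the whole diagram to a subset. -/
def resCoconeTop (F : I ⥤ C) (S : Set I) (d : Cocone F) : Cocone (restrictF F S) where
  pt := d.pt
  ι :=
    { app := fun x => d.ι.app x.1
      naturality := fun x y f => by
        have := d.ι.naturality (homOfLE (leOfHom f) : x.1 ⟶ y.1)
        simp only [Functor.const_obj_map, Category.comp_id] at this ⊢
        simpa using this }

@[simp] theorem resCoconeTop_app (F : I ⥤ C) (S : Set I) (d : Cocone F) (x : S) :
    (resCoconeTop F S d).ι.app x = d.ι.app x.1 := rfl

section Glue

variable (F : I ⥤ C) {lam : Ordinal.{w}}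
  (S : Set.Iio lam → Set I) (hSmono : Monotone S)
  (K : ∀ γ, Cocone (restrictF F (S γ))) (hK : ∀ γ, IsColimit (K γ))

/-- The chain of colimits of the subdiagrams. -/
noncomputable def chainG : Set.Iio lam ⥤ C where
  obj γ := (K γ).pt
  map {β γ} f := (hK β).desc (resCocone F (hSmono (leOfHom f)) (K γ))
  map_id γ := (hK γ).hom_ext (by intro x; exact ((hK γ).fac _ x).trans (Category.comp_id _).symm)
  map_comp {β γ δ} f g := (hK β).hom_ext (by
    intro x
    simp only [IsColimit.fac, resCocone_app, IsColimit.fac_assoc]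
    refine Eq.symm (((hK β).fac_assoc _ x _).trans ?_); exact (hK γ).fac _ _)

@[simp] theorem chainG_fac {β γ : Set.Iio lam} (f : β ⟶ γ) (x : S β) :
    (K β).ι.app x ≫ (chainG F S hSmono K hK).map f =
      (K γ).ι.app ⟨x.1, hSmono (leOfHom f) x.2⟩ :=
  (hK β).fac _ x

section LimitStage

variable (j : Set.Iio lam)
  (hScont : ∀ x ∈ S j, ∃ i : Set.Iio lam, i < j ∧ x ∈ S i)

/-- A choice of an earlier stage containing a given element. -/
noncomputable def pickLt (x : S j) : {i : Set.Iio lam // i < j} :=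
  ⟨(hScont x.1 x.2).choose, (hScont x.1 x.2).choose_spec.1⟩

theorem pickLt_mem (x : S j) : x.1 ∈ S (pickLt S j hScont x).1 :=
  (hScont x.1 x.2).choose_spec.2

variable (s : Cocone (Iio.incl j ⋙ chainG F S hSmono K hK))

/-- The leg of the induced cocone through an earlier stage. -/
def legAt (i : {i : Set.Iio lam // i < j}) (x : I) (hx : x ∈ S i.1) :
    F.obj x ⟶ s.pt :=
  (K i.1).ι.app ⟨x, hx⟩ ≫ s.ι.app i

theorem legAt_mono {i i' : {i : Set.Iio lam // i < j}} (h : i ≤ i')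
    (x : I) (hx : x ∈ S i.1) :
    legAt F S hSmono K hK j s i x hx =
      legAt F S hSmono K hK j s i' x
        (hSmono (Subtype.coe_le_coe.mpr h) hx) := by
  have hnat := s.w (homOfLE h : i ⟶ i')
  dsimp [legAt]
  rw [← hnat]; refine (Category.assoc _ _ _).symm.trans ?_
  congr 1
  exact chainG_fac F S hSmono K hK ((Iio.incl j).map (homOfLE h)) ⟨x, hx⟩

theorem legAt_eq {i i' : {i : Set.Iio lam // i < j}}
    (x : I) (hx : x ∈ S i.1) (hx' : x ∈ S i'.1) :
    legAt F S hSmono K hK j s i x hx = legAt F S hSmono K hK j s i' x hx' := by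
  rcases le_total i i' with h | h
  · rw [legAt_mono F S hSmono K hK j s h x hx]
  · rw [legAt_mono F S hSmono K hK j s h x hx']

/-- The induced cocone on the top of a limit stage. -/
noncomputable def descCoconeAt : Cocone (restrictF F (S j)) where
  pt := s.pt
  ι :=
    { app := fun x =>
        legAt F S hSmono K hK j s (pickLt S j hScont x) x.1 (pickLt_mem S j hScont x)
      naturality := fun x y f => by
        set i := pickLt S j hScont x ⊔ pickLt S j hScont y with hi
        have hxi : x.1 ∈ S i.1 :=
          hSmono (Subtype.coe_le_coe.mpr (le_sup_left : pickLt S j hScont x ≤ i))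
            (pickLt_mem S j hScont x)
        have hyi : y.1 ∈ S i.1 :=
          hSmono (Subtype.coe_le_coe.mpr (le_sup_right : pickLt S j hScont y ≤ i))
            (pickLt_mem S j hScont y)
        rw [legAt_eq F S hSmono K hK j s x.1 (pickLt_mem S j hScont x) hxi,
          legAt_eq F S hSmono K hK j s y.1 (pickLt_mem S j hScont y) hyi]
        dsimp [legAt]
        rw [Category.comp_id]; refine (Category.assoc _ _ _).symm.trans ?_
        congr 1
        have := (K i.1).w (homOfLE (leOfHom f) :
          (⟨x.1, hxi⟩ : S i.1) ⟶ ⟨y.1, hyi⟩)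
        simpa using this }

@[simp] theorem descCoconeAt_app (x : S j) :
    (descCoconeAt F S hSmono K hK j hScont s).ι.app x =
      legAt F S hSmono K hK j s (pickLt S j hScont x) x.1 (pickLt_mem S j hScont x) := rfl

/-- At a limit stage covered by the earlier stages, the chain of colimits is continuous. -/
noncomputable def isColimitAt :
    IsColimit (chainCoconeAt (chainG F S hSmono K hK) j) where
  desc s := (hK j).desc (descCoconeAt F S hSmono K hK j hScont s)
  fac s i := (hK i.1).hom_ext (by
    intro x
    refine (Category.assoc _ _ _).symm.trans ?_
    have h1 : (K i.1).ι.app x ≫ (chainCoconeAt (chainG F S hSmono K hK) j).ι.app i =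
        (K j).ι.app ⟨x.1, hSmono i.2.le x.2⟩ :=
      chainG_fac F S hSmono K hK (homOfLE i.2.le) x
    rw [h1]
    exact ((hK j).fac _ _).trans <| legAt_eq F S hSmono K hK j s x.1 _ x.2)
  uniq s m hm := (hK j).hom_ext (by
    intro x
    refine Eq.trans ?_ ((hK j).fac (descCoconeAt F S hSmono K hK j hScont s) x).symm
    rw [descCoconeAt_app]
    set p := pickLt S j hScont x with hp
    have h1 : (K j).ι.app x =
        (K p.1).ι.app ⟨x.1, pickLt_mem S j hScont x⟩ ≫
          (chainG F S hSmono K hK).map (homOfLE p.2.le) := by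
      rw [chainG_fac F S hSmono K hK (homOfLE p.2.le) ⟨x.1, pickLt_mem S j hScont x⟩]
    have hm' : (chainG F S hSmono K hK).map (homOfLE p.2.le) ≫ m = s.ι.app p := hm p
    rw [h1]
    exact (Category.assoc _ _ _).trans
      (congrArg (CategoryStruct.comp ((K p.1).ι.app ⟨x.1, pickLt_mem S j hScont x⟩)) hm'))

end LimitStage

section Total

variable (c : Cocone F) (hScov : ∀ i : I, ∃ γ : Set.Iio lam, i ∈ S γ)

/-- The cocone over the chain of stage colimits induced by a cocone over the
full diagram. -/
noncomputable def totalCocone : Cocone (chainG F S hSmono K hK) where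
  pt := c.pt
  ι :=
    { app := fun γ => (hK γ).desc (resCoconeTop F (S γ) c)
      naturality := fun β γ f => (hK β).hom_ext (by
        intro x
        refine (Category.assoc _ _ _).symm.trans ?_
        rw [chainG_fac F S hSmono K hK f x]
        exact ((hK γ).fac _ _).trans (((hK β).fac (resCoconeTop F (S β) c) x).symm.trans ((Category.assoc _ _ _).symm.trans (Category.comp_id _)).symm)) }

@[simp] theorem totalCocone_fac (γ : Set.Iio lam) (x : S γ) :
    (K γ).ι.app x ≫ (totalCocone F S hSmono K hK c).ι.app γ = c.ι.app x.1 :=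
  (hK γ).fac _ x

noncomputable def pickCov (i : I) : Set.Iio lam := (hScov i).choose

theorem pickCov_mem (i : I) : i ∈ S (pickCov S hScov i) := (hScov i).choose_spec

variable (s : Cocone (chainG F S hSmono K hK))

def legTot (γ : Set.Iio lam) (i : I) (hi : i ∈ S γ) : F.obj i ⟶ s.pt :=
  (K γ).ι.app ⟨i, hi⟩ ≫ s.ι.app γ

theorem legTot_mono {γ γ' : Set.Iio lam} (h : γ ≤ γ') (i : I) (hi : i ∈ S γ) :
    legTot F S hSmono K hK s γ i hi = legTot F S hSmono K hK s γ' i (hSmono h hi) := by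
  have hnat := s.w (homOfLE h : γ ⟶ γ')
  dsimp [legTot]
  rw [← hnat]; refine (Category.assoc _ _ _).symm.trans ?_
  congr 1
  exact chainG_fac F S hSmono K hK (homOfLE h) ⟨i, hi⟩

theorem legTot_eq {γ γ' : Set.Iio lam} (i : I) (hi : i ∈ S γ) (hi' : i ∈ S γ') :
    legTot F S hSmono K hK s γ i hi = legTot F S hSmono K hK s γ' i hi' := by
  rcases le_total γ γ' with h | h
  · rw [legTot_mono F S hSmono K hK s h i hi]
  · rw [legTot_mono F S hSmono K hK s h i hi']

/-- The cocone over the full diagram induced by a cocone over the chain. -/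
noncomputable def fullCocone : Cocone F where
  pt := s.pt
  ι :=
    { app := fun i =>
        legTot F S hSmono K hK s (pickCov S hScov i) i (pickCov_mem S hScov i)
      naturality := fun i i' f => by
        set γ := pickCov S hScov i ⊔ pickCov S hScov i' with hγ
        have hiγ : i ∈ S γ :=
          hSmono (le_sup_left : pickCov S hScov i ≤ γ) (pickCov_mem S hScov i)
        have hi'γ : i' ∈ S γ :=
          hSmono (le_sup_right : pickCov S hScov i' ≤ γ) (pickCov_mem S hScov i')
        rw [legTot_eq F S hSmono K hK s i (pickCov_mem S hScov i) hiγ,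
          legTot_eq F S hSmono K hK s i' (pickCov_mem S hScov i') hi'γ]
        dsimp [legTot]
        rw [Category.comp_id]; refine (Category.assoc _ _ _).symm.trans ?_
        congr 1
        have := (K γ).w (homOfLE (leOfHom f) : (⟨i, hiγ⟩ : S γ) ⟶ ⟨i', hi'γ⟩)
        simp at this
        exact this }

@[simp] theorem fullCocone_app (i : I) :
    (fullCocone F S hSmono K hK hScov s).ι.app i =
      legTot F S hSmono K hK s (pickCov S hScov i) i (pickCov_mem S hScov i) := rfl

variable (hc : IsColimit c)

/-- The total cocone is a colimit. -/
noncomputable def totalIsColimit : IsColimit (totalCocone F S hSmono K hK c) where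
  desc s := hc.desc (fullCocone F S hSmono K hK hScov s)
  fac s γ := (hK γ).hom_ext (by
    intro x
    refine (Category.assoc _ _ _).symm.trans ?_
    rw [totalCocone_fac]
    refine (hc.fac _ _).trans ?_
    rw [fullCocone_app]
    exact legTot_eq F S hSmono K hK s x.1 _ x.2)
  uniq s m hm := hc.hom_ext (by
    intro i
    refine Eq.trans ?_ (hc.fac (fullCocone F S hSmono K hK hScov s) i).symm
    rw [fullCocone_app]
    set γ := pickCov S hScov i with hγ
    have h1 : c.ι.app i =
        (K γ).ι.app ⟨i, pickCov_mem S hScov i⟩ ≫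
          (totalCocone F S hSmono K hK c).ι.app γ :=
      (totalCocone_fac F S hSmono K hK c γ ⟨i, pickCov_mem S hScov i⟩).symm
    rw [h1]
    exact (Category.assoc _ _ _).trans
      (congrArg (CategoryStruct.comp ((K γ).ι.app ⟨i, pickCov_mem S hScov i⟩)) (hm γ)))

end Total

end Glue

section GlueTheorem

variable (M : MorphismProperty C)

theorem glue
    (hcomp : M.IsStableUnderComposition)
    (hchain : ∀ (α : Ordinal.{w}), Order.IsSuccLimit α →
      ∀ (G : Set.Iio α ⥤ C), (∀ {i j : Set.Iio α} (f : i ⟶ j), M (G.map f)) →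
        IsContinuousChain G →
        ∀ {c : Cocone G} (hc : IsColimit c), ClosedUnderColimit M hc)
    (F : I ⥤ C) {lam : Ordinal.{w}} (hlam : Order.IsSuccLimit lam)
    (S : Set.Iio lam → Set I) (hSmono : Monotone S)
    (hScov : ∀ i : I, ∃ γ : Set.Iio lam, i ∈ S γ)
    (hScont : ∀ j : Set.Iio lam, Order.IsSuccLimit j.1 →
      ∀ x ∈ S j, ∃ i : Set.Iio lam, i < j ∧ x ∈ S i)
    (K : ∀ γ, Cocone (restrictF F (S γ))) (hK : ∀ γ, IsColimit (K γ))
    (hIH : ∀ γ, ClosedUnderColimit M (hK γ))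
    {c : Cocone F} (hc : IsColimit c) :
    ClosedUnderColimit M hc := by
  have hGM : ∀ {β γ : Set.Iio lam} (f : β ⟶ γ), M ((chainG F S hSmono K hK).map f) := by
    intro β γ f
    exact (hIH β).2 (resCocone F (hSmono (leOfHom f)) (K γ))
      (fun x => (hIH γ).1 ⟨x.1, hSmono (leOfHom f) x.2⟩)
  have hGcont : IsContinuousChain (chainG F S hSmono K hK) := fun j hj =>
    ⟨isColimitAt F S hSmono K hK j (hScont j hj)⟩
  have happ := hchain lam hlam _ hGM hGcont
    (totalIsColimit F S hSmono K hK c hScov hc)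
  constructor
  · intro i
    obtain ⟨γ, hγ⟩ := hScov i
    have h1 : c.ι.app i =
        (K γ).ι.app ⟨i, hγ⟩ ≫ (totalCocone F S hSmono K hK c).ι.app γ :=
      (totalCocone_fac F S hSmono K hK c γ ⟨i, hγ⟩).symm
    rw [h1]
    exact hcomp.comp_mem _ _ ((hIH γ).1 _) (happ.1 γ)
  · intro s hs
    have sGnat : ∀ {β γ : Set.Iio lam} (f : β ⟶ γ),
        (chainG F S hSmono K hK).map f ≫ (hK γ).desc (resCoconeTop F (S γ) s) =
          (hK β).desc (resCoconeTop F (S β) s) := by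
      intro β γ f
      apply (hK β).hom_ext
      intro x
      refine (Category.assoc _ _ _).symm.trans ?_
      rw [chainG_fac F S hSmono K hK f x]
      exact ((hK γ).fac _ _).trans ((hK β).fac (resCoconeTop F (S β) s) x).symm
    let sG : Cocone (chainG F S hSmono K hK) :=
      { pt := s.pt
        ι :=
          { app := fun γ => (hK γ).desc (resCoconeTop F (S γ) s)
            naturality := fun β γ f =>
              (sGnat f).trans (Category.comp_id _).symm } }
    have hdesc := happ.2 sG (fun γ => (hIH γ).2 _ (fun x => hs x.1))
    have heq : hc.desc s = (totalIsColimit F S hSmono K hK c hScov hc).desc sG := by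
      apply hc.hom_ext
      intro i
      rw [hc.fac]
      obtain ⟨γ, hγ⟩ := hScov i
      have h1 : c.ι.app i =
          (K γ).ι.app ⟨i, hγ⟩ ≫ (totalCocone F S hSmono K hK c).ι.app γ :=
        (totalCocone_fac F S hSmono K hK c γ ⟨i, hγ⟩).symm
      rw [h1]
      refine Eq.trans ?_ (Category.assoc _ _ _).symm
      refine Eq.trans ?_ (congrArg (CategoryStruct.comp ((K γ).ι.app ⟨i, hγ⟩))
        ((totalIsColimit F S hSmono K hK c hScov hc).fac sG γ).symm)
      show s.ι.app i = (K γ).ι.app ⟨i, hγ⟩ ≫ (hK γ).desc (resCoconeTop F (S γ) s)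
      rw [(hK γ).fac]
      rfl
    rw [heq]
    exact hdesc

/-- Base case: index poset with a greatest element. -/
theorem closedUnderColimit_of_top
    (hiso : MorphismProperty.isomorphisms C ≤ M)
    (hcomp : M.IsStableUnderComposition)
    {J : Type*} [PartialOrder J] (t : J) (ht : ∀ i, i ≤ t)
    (F : J ⥤ C) (hF : ∀ {i j : J} (f : i ⟶ j), M (F.map f))
    {c : Cocone F} (hc : IsColimit c) : ClosedUnderColimit M hc := by
  have hterm : IsTerminal t :=
    IsTerminal.ofUniqueHom (fun X => homOfLE (ht X)) (fun X m => Subsingleton.elim _ _)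
  have h2 : IsColimit (coconeOfDiagramTerminal hterm F) := colimitOfDiagramTerminal hterm F
  have hcompid : c.ι.app t ≫ (hc.coconePointUniqueUpToIso h2).hom = 𝟙 (F.obj t) := by
    rw [IsColimit.comp_coconePointUniqueUpToIso_hom]
    show F.map (hterm.from t) = 𝟙 (F.obj t)
    rw [show hterm.from t = 𝟙 t from Subsingleton.elim _ _, F.map_id]
  have hft : c.ι.app t = (hc.coconePointUniqueUpToIso h2).inv := by
    have h4 : c.ι.app t ≫ (hc.coconePointUniqueUpToIso h2).hom ≫
        (hc.coconePointUniqueUpToIso h2).inv =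
        𝟙 (F.obj t) ≫ (hc.coconePointUniqueUpToIso h2).inv := by
      rw [← Category.assoc, hcompid]
    simpa using h4
  have hiso_t : IsIso (c.ι.app t) := by rw [hft]; infer_instance
  constructor
  · intro i
    have h1 : c.ι.app i = F.map (homOfLE (ht i)) ≫ c.ι.app t := (c.w (homOfLE (ht i))).symm
    rw [h1]
    exact hcomp.comp_mem _ _ (hF _) (hiso _ hiso_t)
  · intro s hs
    have h3 : hc.desc s = CategoryTheory.inv (c.ι.app t) ≫ s.ι.app t := by
      rw [← hc.fac s t, IsIso.inv_hom_id_assoc]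
    rw [h3]
    refine hcomp.comp_mem _ _ (hiso _ ?_) (hs t)
    rw [MorphismProperty.isomorphisms.iff]
    haveI := hiso_t
    infer_instance
  
/-- Induction step: decompose a directed poset into a chain of smaller
directed subposets and use the glue theorem. -/
theorem step
    (hcolim : ∀ (J : Type w) (_ : PartialOrder J) (_ : Nonempty J)
      (_ : IsDirected J (· ≤ ·)), HasColimitsOfShape J C)
    (hcomp : M.IsStableUnderComposition)
    (hchain : ∀ (α : Ordinal.{w}), Order.IsSuccLimit α →
      ∀ (G : Set.Iio α ⥤ C), (∀ {i j : Set.Iio α} (f : i ⟶ j), M (G.map f)) →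
        IsContinuousChain G →
        ∀ {c : Cocone G} (hc : IsColimit c), ClosedUnderColimit M hc)
    (F : I ⥤ C) (hF : ∀ {i j : I} (f : i ⟶ j), M (F.map f))
    {lam : Ordinal.{w}} (hlam : Order.IsSuccLimit lam)
    (S : Set.Iio lam → Set I) (hSmono : Monotone S)
    (hScov : ∀ i : I, ∃ γ : Set.Iio lam, i ∈ S γ)
    (hScont : ∀ j : Set.Iio lam, Order.IsSuccLimit j.1 →
      ∀ x ∈ S j, ∃ i : Set.Iio lam, i < j ∧ x ∈ S i)
    (hSne : ∀ γ, (S γ).Nonempty)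
    (hSdir : ∀ γ, DirectedOn (· ≤ ·) (S γ))
    (hScard : ∀ γ, #(S γ) < #I)
    (IH : ∀ (J : Type w) [PartialOrder J] [Nonempty J] [IsDirected J (· ≤ ·)],
      Cardinal.mk J < #I → ∀ (F' : J ⥤ C), (∀ {i j : J} (f : i ⟶ j), M (F'.map f)) →
        ∀ (c' : Cocone F') (hc' : IsColimit c'), ClosedUnderColimit M hc')
    {c : Cocone F} (hc : IsColimit c) :
    ClosedUnderColimit M hc := by
  have instN : ∀ γ, Nonempty ↥(S γ) := fun γ => ⟨⟨(hSne γ).choose, (hSne γ).choose_spec⟩⟩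
  have instD : ∀ γ, IsDirected ↥(S γ) (· ≤ ·) := fun γ => ⟨fun a b => by
    obtain ⟨z, hz, h1, h2⟩ := hSdir γ a.1 a.2 b.1 b.2
    exact ⟨⟨z, hz⟩, h1, h2⟩⟩
  let K : ∀ γ, (cc : Cocone (restrictF F (S γ))) × IsColimit cc := fun γ => by
    haveI := instN γ
    haveI := instD γ
    haveI := hcolim ↥(S γ) inferInstance inferInstance inferInstance
    exact ⟨colimit.cocone _, colimit.isColimit _⟩
  have hIH : ∀ γ, ClosedUnderColimit M (K γ).2 := fun γ => by
    haveI := instN γ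
    haveI := instD γ
    exact IH ↥(S γ) (hScard γ) (restrictF F (S γ)) (fun f => hF _) (K γ).1 (K γ).2
  exact glue M hcomp hchain F hlam S hSmono hScov hScont
    (fun γ => (K γ).1) (fun γ => (K γ).2) hIH hc

end GlueTheorem

end DirColimAux

/-- Let `C` be a category with colimits of directed diagrams and `M` a
class of morphisms of `C` containing all isomorphisms and closed under composition. If `M`
is closed under colimits of continuous chains, then `M` is closed under all directed
colimits: for every diagram indexed by a directed poset (every finite subset has an upper
bound) with all connecting morphisms in `M` and any colimit cocone, all colimit injections
lie in `M`, and the morphism induced by any cocone with legs in `M` lies in `M`. -/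
theorem MorphismProperty.closedUnderDirectedColimits_of_closedUnderChains
    (hcolim : ∀ (J : Type w) (_ : PartialOrder J) (_ : Nonempty J)
      (_ : IsDirected J (· ≤ ·)), HasColimitsOfShape J C)
    (M : MorphismProperty C)
    (hiso : MorphismProperty.isomorphisms C ≤ M)
    (hcomp : M.IsStableUnderComposition)
    (hchain : ∀ (α : Ordinal.{w}), Order.IsSuccLimit α →
      ∀ (F : Set.Iio α ⥤ C), (∀ {i j : Set.Iio α} (f : i ⟶ j), M (F.map f)) →
        IsContinuousChain F →
        ∀ {c : Cocone F} (hc : IsColimit c), ClosedUnderColimit M hc)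
    (I : Type w) [PartialOrder I] [Nonempty I] [IsDirected I (· ≤ ·)]
    (F : I ⥤ C) (hF : ∀ {i j : I} (f : i ⟶ j), M (F.map f))
    {c : Cocone F} (hc : IsColimit c) :
    ClosedUnderColimit M hc := by
  have main : ∀ (κ : Cardinal.{w}) (J : Type w) [PartialOrder J] [Nonempty J]
      [IsDirected J (· ≤ ·)], #J = κ →
      ∀ (F : J ⥤ C), (∀ {i j : J} (f : i ⟶ j), M (F.map f)) →
      ∀ (c : Cocone F) (hc : IsColimit c), ClosedUnderColimit M hc := by
    intro κ
    induction κ using WellFoundedLT.induction with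
    | ind κ IH =>
    intro J _ _ _ hJ F hF c hc
    subst hJ
    obtain ⟨x0⟩ := ‹Nonempty J›
    have hdirJ : ∀ a b : J, ∃ z, a ≤ z ∧ b ≤ z := fun a b => directed_of (· ≤ ·) a b
    set u : J → J → J := fun a b => (hdirJ a b).choose with hu
    have hu1 : ∀ a b, a ≤ u a b := fun a b => (hdirJ a b).choose_spec.1
    have hu2 : ∀ a b, b ≤ u a b := fun a b => (hdirJ a b).choose_spec.2
    have IH' : ∀ (J' : Type w) [PartialOrder J'] [Nonempty J'] [IsDirected J' (· ≤ ·)],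
        Cardinal.mk J' < #J → ∀ (F' : J' ⥤ C), (∀ {i j : J'} (f : i ⟶ j), M (F'.map f)) →
          ∀ (c' : Cocone F') (hc' : IsColimit c'), ClosedUnderColimit M hc' :=
      fun J' _ _ _ hlt => IH #J' hlt J' rfl
    rcases lt_trichotomy #J ℵ₀ with hfin | heq | hbig
    · -- finite case: there is a top element
      have : Finite J := Cardinal.lt_aleph0_iff_finite.mp hfin
      haveI := Fintype.ofFinite J
      obtain ⟨t, ht⟩ := Finset.exists_le (Finset.univ : Finset J)
      exact DirColimAux.closedUnderColimit_of_top M hiso hcomp t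
        (fun i => ht i (Finset.mem_univ i)) F hF hc
    · -- countably infinite case: chain of length ω of finite stages
      have hCount : Countable J := Cardinal.mk_le_aleph0_iff.mp heq.le
      have hInf : Infinite J := Cardinal.infinite_iff.mpr heq.ge
      obtain ⟨dJ⟩ := nonempty_denumerable J
      let e := @Denumerable.eqv J dJ
      let y : ℕ → J := fun n => Nat.rec (e.symm 0) (fun n yn => u yn (e.symm (n + 1))) n
      have hy_mono : Monotone y := monotone_nat_of_le_succ (fun n => hu1 _ _)
      have hey : ∀ n, e.symm n ≤ y n := by
        intro n
        cases n with
        | zero => exact le_refl _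
        | succ n => exact hu2 _ _
      set S : Set.Iio (Ordinal.omega0 : Ordinal.{w}) → Set J := fun γ =>
        {i | ∃ n : ℕ, (n : Ordinal.{w}) ≤ γ.1 ∧ (i = e.symm n ∨ i = y n)} with hS
      refine DirColimAux.step M hcolim hcomp hchain F hF Ordinal.isSuccLimit_omega0 S
        ?_ ?_ ?_ ?_ ?_ ?_ IH' hc
      · -- monotone
        rintro γ γ' h i ⟨n, hn, hx⟩
        exact ⟨n, hn.trans (Subtype.coe_le_coe.mpr h), hx⟩
      · -- covers
        intro i
        exact ⟨⟨((e i : ℕ) : Ordinal.{w}), Ordinal.nat_lt_omega0 _⟩,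
          ⟨e i, le_refl _, Or.inl (e.symm_apply_apply i).symm⟩⟩
      · -- continuity: vacuous below ω
        intro j hj
        exact absurd (Ordinal.omega0_le_of_isSuccLimit hj) (not_le.mpr j.2)
      · -- nonempty
        intro γ
        exact ⟨e.symm 0, 0, by simp, Or.inl rfl⟩
      · -- directed
        rintro γ a ⟨n1, hn1, hxa⟩ b ⟨n2, hn2, hxb⟩
        have hmem : ((max n1 n2 : ℕ) : Ordinal.{w}) ≤ γ.1 := by
          rcases max_choice n1 n2 with h | h <;> rw [h]
          · exact hn1
          · exact hn2
        refine ⟨y (max n1 n2), ⟨max n1 n2, hmem, Or.inr rfl⟩, ?_, ?_⟩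
        · rcases hxa with rfl | rfl
          · exact (hey n1).trans (hy_mono (le_max_left n1 n2))
          · exact hy_mono (le_max_left n1 n2)
        · rcases hxb with rfl | rfl
          · exact (hey n2).trans (hy_mono (le_max_right n1 n2))
          · exact hy_mono (le_max_right n1 n2)
      · -- small stages
        intro γ
        obtain ⟨m, hm⟩ := Ordinal.lt_omega0.mp γ.2
        have hsub : S γ ⊆ (e.symm '' Set.Iic m) ∪ (y '' Set.Iic m) := by
          rintro i ⟨n, hn, hi | hi⟩
          · exact Or.inl ⟨n, Nat.cast_le.mp (by rw [← hm]; exact hn), hi.symm⟩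
          · exact Or.inr ⟨n, Nat.cast_le.mp (by rw [← hm]; exact hn), hi.symm⟩
        have hfin : (S γ).Finite := Set.Finite.subset
          (((Set.finite_Iic m).image _).union ((Set.finite_Iic m).image _)) hsub
        rw [heq]
        exact hfin.lt_aleph0
    · -- uncountable case: chain of length (#J).ord
      have haleph : ℵ₀ ≤ #J := hbig.le
      set lam : Ordinal.{w} := (#J).ord with hlamdef
      have hlam : Order.IsSuccLimit lam := Cardinal.isSuccLimit_ord haleph
      have hmkT : #(lam.ToType) = #J := by
        rw [mk_toType, hlamdef, Cardinal.card_ord]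
      obtain ⟨e⟩ := Cardinal.eq.mp hmkT
      set enum := Ordinal.ToType.mk (o := lam) with henum
      set en : Set.Iio lam → J := fun δ => e (enum δ) with hen
      have hen_surj : ∀ i : J, ∃ δ, en δ = i := fun i =>
        ⟨enum.symm (e.symm i), by simp [hen]⟩
      set base : Set.Iio lam → Set J := fun γ =>
        insert x0 {i | ∃ δ : Set.Iio lam, δ < γ ∧ en δ = i} with hbase
      have hbase_mono : Monotone base := fun γ γ' h =>
        Set.insert_subset_insert (by
          rintro i ⟨δ, hδ, hi⟩
          exact ⟨δ, lt_of_lt_of_le hδ h, hi⟩)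
      set S : Set.Iio lam → Set J := fun γ => DirColimAux.cl u (base γ) with hSdef
      refine DirColimAux.step M hcolim hcomp hchain F hF hlam S
        ?_ ?_ ?_ ?_ ?_ ?_ IH' hc
      · -- monotone
        exact fun γ γ' h => DirColimAux.cl_mono u (hbase_mono h)
      · -- covers
        intro i
        obtain ⟨δ, hδ⟩ := hen_surj i
        refine ⟨⟨Order.succ δ.1, hlam.succ_lt δ.2⟩, ?_⟩
        apply DirColimAux.subset_cl u
        exact Set.mem_insert_of_mem _ ⟨δ, Order.lt_succ δ.1, hδ⟩
      · -- continuity at limits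
        intro j hj x hx
        haveI hne : Nonempty {i : Set.Iio lam // i < j} :=
          ⟨⟨⟨0, lt_trans hj.pos j.2⟩, hj.pos⟩⟩
        have hbase_eq : base j = ⋃ (i : {i : Set.Iio lam // i < j}), base i.1 := by
          apply Set.Subset.antisymm
          · rintro i (rfl | ⟨δ, hδ, hi⟩)
            · exact Set.mem_iUnion.mpr ⟨Classical.arbitrary _, Set.mem_insert _ _⟩
            · refine Set.mem_iUnion.mpr ⟨⟨⟨Order.succ δ.1, lt_trans (hj.succ_lt hδ) j.2⟩,
                hj.succ_lt hδ⟩, ?_⟩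
              exact Set.mem_insert_of_mem _ ⟨δ, Order.lt_succ δ.1, hi⟩
          · exact Set.iUnion_subset fun i => hbase_mono i.2.le
        have hcl : x ∈ ⋃ (i : {i : Set.Iio lam // i < j}), DirColimAux.cl u (base i.1) := by
          rw [← DirColimAux.cl_iUnion u (fun i : {i : Set.Iio lam // i < j} => base i.1)
            (fun i i' h => hbase_mono (Subtype.coe_le_coe.mpr h)), ← hbase_eq]
          exact hx
        obtain ⟨i, hi⟩ := Set.mem_iUnion.mp hcl
        exact ⟨i.1, i.2, hi⟩
      · -- nonempty
        exact fun γ => ⟨x0, DirColimAux.subset_cl u _ (Set.mem_insert _ _)⟩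
      · -- directed
        exact fun γ => DirColimAux.cl_directedOn hu1 hu2 _
      · -- small stages
        intro γ
        have h1 : #{i : J | ∃ δ : Set.Iio lam, δ < γ ∧ en δ = i} < #J := by
          set g : (γ.1).ToType → J := fun t =>
            en ⟨((Ordinal.ToType.mk (o := γ.1)).symm t).1,
              Set.mem_Iio.mpr (lt_trans ((Ordinal.ToType.mk (o := γ.1)).symm t).2 γ.2)⟩ with hg
          have hsub : {i : J | ∃ δ : Set.Iio lam, δ < γ ∧ en δ = i} ⊆ Set.range g := by
            rintro i ⟨δ, hδ, rfl⟩
            refine ⟨Ordinal.ToType.mk (o := γ.1) ⟨δ.1, hδ⟩, ?_⟩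
            simp [hg]
          calc #{i : J | ∃ δ : Set.Iio lam, δ < γ ∧ en δ = i}
              ≤ #(Set.range g) := Cardinal.mk_le_mk_of_subset hsub
            _ ≤ #((γ.1).ToType) := Cardinal.mk_range_le
            _ = (γ.1).card := mk_toType _
            _ < #J := Cardinal.lt_ord.mp γ.2
        have h2 : #(base γ) < #J := by
          refine lt_of_le_of_lt Cardinal.mk_insert_le ?_
          exact Cardinal.add_lt_of_lt haleph h1 (Cardinal.one_lt_aleph0.trans_le haleph)
        calc #(S γ) ≤ max #(base γ) Cardinal.aleph0 := DirColimAux.mk_cl_le u _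
          _ < #J := max_lt h2 hbig
  exact main #I I rfl F hF c hc
end

section
/- In the category Top of topological spaces and continuous maps, the class of open embeddings is closed under directed colimits: for every diagram (Z_i)_{i∈I} indexed by a directed partially ordered set I whose connecting continuous maps are all open embeddings, with colimit cocone (c_i : Z_i → Z) in Top, (1) every colimit injection c_i is an open embedding, and (2) for every cocone (f_i : Z_i → A) of open embeddings over the diagram, the unique induced continuous map Z → A is an open embedding. -/
open CategoryTheory CategoryTheory.Limits

universe u

/-- In `Top`, the class of open embeddings is closed under directed
colimits: for every diagram indexed by a directed partially ordered set whose connecting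
maps are open embeddings, with a colimit cocone `c`, (1) every colimit injection is an
open embedding, and (2) for every cocone of open embeddings over the diagram, the induced
continuous map out of the colimit is an open embedding. -/
theorem TopCat.isOpenEmbedding_closed_under_directed_colimits
    (I : Type u) [PartialOrder I] [Nonempty I] [IsDirected I (· ≤ ·)]
    (F : I ⥤ TopCat.{u})
    (hF : ∀ {i j : I} (f : i ⟶ j), Topology.IsOpenEmbedding (F.map f))
    (c : Cocone F) (hc : IsColimit c) :
    (∀ i : I, Topology.IsOpenEmbedding (c.ι.app i)) ∧
    (∀ s : Cocone F, (∀ i : I, Topology.IsOpenEmbedding (s.ι.app i)) →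
      Topology.IsOpenEmbedding (hc.desc s)) := by
  -- the colimit cocone in `Type u`
  have hc' : IsColimit ((forget TopCat).mapCocone c) :=
    isColimitOfPreserves (forget TopCat) hc
  -- equality characterization in the colimit
  have key : ∀ {i j : I} (xi : F.obj i) (xj : F.obj j),
      c.ι.app i xi = c.ι.app j xj ↔
        ∃ (k : I) (f : i ⟶ k) (g : j ⟶ k), F.map f xi = F.map g xj := by
    intro i j xi xj
    exact Types.FilteredColimit.isColimit_eq_iff (F ⋙ forget TopCat) hc'
  -- openness characterization in the colimit
  have hopen : ∀ U : Set c.pt, IsOpen U ↔ ∀ i : I, IsOpen (c.ι.app i ⁻¹' U) := by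
    intro U
    conv_lhs => rw [TopCat.coinduced_of_isColimit c hc]
    exact isOpen_iSup_iff
  -- naturality of `c`
  have cnat : ∀ {i j : I} (f : i ⟶ j) (x : F.obj i),
      c.ι.app j (F.map f x) = c.ι.app i x := by
    intro i j f x
    exact ConcreteCategory.congr_hom (c.ι.naturality f) x
  -- part 1
  have part1 : ∀ i : I, Topology.IsOpenEmbedding (c.ι.app i) := by
    intro i
    have hinj : Function.Injective (c.ι.app i) := by
      intro x y hxy
      rw [key] at hxy
      obtain ⟨k, f, g, hfg⟩ := hxy
      obtain rfl : f = g := Subsingleton.elim f g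
      exact (hF f).injective hfg
    have hmap : IsOpenMap (c.ι.app i) := by
      intro U hU
      rw [hopen]
      intro j
      rw [isOpen_iff_forall_mem_open]
      intro z hz
      obtain ⟨u, hu, he⟩ := hz
      obtain ⟨k, f, g, hfg⟩ := (key u z).mp he
      refine ⟨F.map g ⁻¹' (F.map f '' U), ?_, ?_, ?_⟩
      · intro w hw
        obtain ⟨u', hu', he'⟩ := hw
        exact ⟨u', hu', (key u' w).mpr ⟨k, f, g, he'⟩⟩
      · exact ((hF f).isOpenMap U hU).preimage (F.map g).hom.continuous
      · exact ⟨u, hu, hfg⟩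
    exact Topology.IsOpenEmbedding.of_continuous_injective_isOpenMap
      (c.ι.app i).hom.continuous hinj hmap
  refine ⟨part1, ?_⟩
  intro s hs
  have hfac : ∀ (i : I) (x : F.obj i), hc.desc s (c.ι.app i x) = s.ι.app i x := by
    intro i x
    exact ConcreteCategory.congr_hom (hc.fac s i) x
  have snat : ∀ {i j : I} (f : i ⟶ j) (x : F.obj i),
      s.ι.app j (F.map f x) = s.ι.app i x := by
    intro i j f x
    exact ConcreteCategory.congr_hom (s.ι.naturality f) x
  have hinj : Function.Injective (hc.desc s) := by
    intro x y hxy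
    obtain ⟨i, a, rfl⟩ := Types.jointly_surjective (F ⋙ forget TopCat) hc' x
    obtain ⟨j, b, rfl⟩ := Types.jointly_surjective (F ⋙ forget TopCat) hc' y
    show c.ι.app i a = c.ι.app j b
    obtain ⟨k, hik, hjk⟩ := directed_of (· ≤ ·) i j
    have hxy' : s.ι.app i a = s.ι.app j b := by
      rw [← hfac i a, ← hfac j b]; exact hxy
    rw [← snat hik.hom a, ← snat hjk.hom b] at hxy'
    have := (hs k).injective hxy'
    rw [← cnat hik.hom a, ← cnat hjk.hom b, this]
  have hmap : IsOpenMap (hc.desc s) := by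
    intro U hU
    have : hc.desc s '' U = ⋃ i : I, s.ι.app i '' (c.ι.app i ⁻¹' U) := by
      ext x
      constructor
      · rintro ⟨z, hz, rfl⟩
        obtain ⟨i, a, rfl⟩ := Types.jointly_surjective (F ⋙ forget TopCat) hc' z
        exact Set.mem_iUnion.mpr ⟨i, a, hz, (hfac i a).symm⟩
      · intro hx
        obtain ⟨i, a, ha, rfl⟩ := Set.mem_iUnion.mp hx
        exact ⟨c.ι.app i a, ha, hfac i a⟩
    rw [this]
    exact isOpen_iUnion fun i =>
      (hs i).isOpenMap _ (((hopen U).mp hU) i)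
  exact Topology.IsOpenEmbedding.of_continuous_injective_isOpenMap
    (hc.desc s).hom.continuous hinj hmap
end

section
/- Every directed diagram of embeddings in Top has a colimit cocone formed by embeddings: for every diagram (Z_i)_{i∈I} indexed by a directed partially ordered set I whose connecting continuous maps are all embeddings, each colimit injection c_i : Z_i → colim D in Top is an embedding. -/
open CategoryTheory CategoryTheory.Limits Topology

universe u

/-- Every directed diagram of embeddings in `Top` has a colimit cocone
formed by embeddings: if all connecting maps of a diagram indexed by a directed partially
ordered set are (subspace) embeddings, then every colimit injection of a colimit cocone
is an embedding. -/
theorem TopCat.colimit_injections_isEmbedding_of_directed_embeddings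
    (I : Type u) [PartialOrder I] [Nonempty I] [IsDirected I (· ≤ ·)]
    (F : I ⥤ TopCat.{u})
    (hF : ∀ {i j : I} (f : i ⟶ j), Topology.IsEmbedding (F.map f))
    (c : Cocone F) (hc : IsColimit c) :
    ∀ i : I, Topology.IsEmbedding (c.ι.app i) := by
  intro i
  have hct : IsColimit ((forget TopCat).mapCocone c) :=
    isColimitOfPreserves (forget TopCat) hc
  -- equality characterization in the colimit
  have heq : ∀ {j l : I} (x : F.obj j) (y : F.obj l),
      c.ι.app j x = c.ι.app l y →
      ∃ (k : I) (hj : j ≤ k) (hl : l ≤ k),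
        F.map (homOfLE hj) x = F.map (homOfLE hl) y := by
    intro j l x y h
    obtain ⟨k, f, g, hfg⟩ :=
      (Types.FilteredColimit.isColimit_eq_iff (F ⋙ forget TopCat) hct
        (i := j) (j := l) (xi := x) (xj := y)).mp h
    exact ⟨k, leOfHom f, leOfHom g, by
      rwa [Subsingleton.elim (homOfLE (leOfHom f)) f,
        Subsingleton.elim (homOfLE (leOfHom g)) g]⟩
  have hnat : ∀ {j k : I} (h : j ≤ k) (x : F.obj j),
      c.ι.app k (F.map (homOfLE h) x) = c.ι.app j x := by
    intro j k h x
    exact congrFun (congrArg (fun (f : F.obj j ⟶ c.pt) => (f : F.obj j → c.pt))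
      (c.w (homOfLE h))) x
  -- injectivity
  have hinj : Function.Injective (c.ι.app i) := by
    intro x y h
    obtain ⟨k, hj, hl, hfg⟩ := heq x y h
    rw [Subsingleton.elim (homOfLE hj) (homOfLE hl)] at hfg
    exact (hF (homOfLE hl)).injective hfg
  -- key openness fact for the colimit point
  have hopen : ∀ (W : Set c.pt), (∀ j : I, IsOpen ((c.ι.app j) ⁻¹' W)) → IsOpen W := by
    intro W hW
    let c' : Cocone F :=
      { pt := @TopCat.of c.pt
          (⨆ j : I, TopologicalSpace.coinduced (c.ι.app j) (F.obj j).str)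
        ι :=
        { app := fun j => @TopCat.ofHom (F.obj j) c.pt _
            (⨆ j : I, TopologicalSpace.coinduced (c.ι.app j) (F.obj j).str)
            (@ContinuousMap.mk (F.obj j) c.pt _
            (⨆ j : I, TopologicalSpace.coinduced (c.ι.app j) (F.obj j).str) (c.ι.app j)
            (continuous_iSup_rng (i := j) continuous_coinduced_rng))
          naturality := fun j k f => by
            ext x
            exact congrFun (congrArg (fun (f : F.obj j ⟶ c.pt) => (f : F.obj j → c.pt))
              (c.w f)) x } }
    have hd : ∀ (j : I) (x : F.obj j), (hc.desc c') (c.ι.app j x) = c.ι.app j x := by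
      intro j x
      have h1 := congrFun (congrArg (fun (f : F.obj j ⟶ c'.pt) => (f : F.obj j → c.pt))
        (hc.fac c' j)) x
      rw [ConcreteCategory.comp_apply] at h1
      exact h1
    have hdid : ∀ z : c.pt, (hc.desc c') z = z := by
      intro z
      obtain ⟨j, y, rfl⟩ := Types.jointly_surjective _ hct z
      exact hd j y
    have hWT : IsOpen[⨆ j : I, TopologicalSpace.coinduced (c.ι.app j) (F.obj j).str] W :=
      isOpen_iSup_iff.mpr fun j => isOpen_coinduced.mpr (hW j)
    have hpreW : IsOpen ((hc.desc c') ⁻¹' W) :=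
      (hc.desc c').hom.continuous.isOpen_preimage W hWT
    have hid : (hc.desc c') ⁻¹' W = W := by
      ext z
      simp only [Set.mem_preimage, hdid z]
    rwa [hid] at hpreW
  constructor
  · constructor
    refine le_antisymm (continuous_iff_le_induced.mp (c.ι.app i).hom.continuous) ?_
    intro U hU
    rw [isOpen_induced_iff]
    -- canonical compatible open sets
    set O : ∀ j : I, i ≤ j → Set (F.obj j) :=
      fun j h => (closure ((F.map (homOfLE h)) '' Uᶜ))ᶜ with hO
    have hOopen : ∀ (j : I) (h : i ≤ j), IsOpen (O j h) :=
      fun j h => isClosed_closure.isOpen_compl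
    have hOpre : ∀ {j k : I} (hij : i ≤ j) (hjk : j ≤ k),
        (F.map (homOfLE hjk)) ⁻¹' (O k (hij.trans hjk)) = O j hij := by
      intro j k hij hjk
      have : F.map (homOfLE (hij.trans hjk)) =
          F.map (homOfLE hij) ≫ F.map (homOfLE hjk) := by
        rw [← F.map_comp]; rfl
      rw [hO]
      simp only [this]
      rw [Set.preimage_compl]
      congr 1
      have himg : (F.map (homOfLE hij) ≫ F.map (homOfLE hjk)) '' Uᶜ =
          (F.map (homOfLE hjk)) '' ((F.map (homOfLE hij)) '' Uᶜ) := by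
        rw [← Set.image_comp]; rfl
      rw [himg, ← (hF (homOfLE hjk)).closure_eq_preimage_closure_image]
    have hOU : ∀ {j : I} (hij : i ≤ j), (F.map (homOfLE hij)) ⁻¹' (O j hij) = U := by
      intro j hij
      rw [hO]
      simp only [Set.preimage_compl]
      rw [← (hF (homOfLE hij)).closure_eq_preimage_closure_image,
        hU.isClosed_compl.closure_eq, compl_compl]
    set W : Set c.pt := ⋃ (j : I) (h : i ≤ j), (c.ι.app j) '' (O j h) with hWdef
    have hmem : ∀ (l : I) (x : F.obj l), c.ι.app l x ∈ W ↔
        ∃ (k : I) (h1 : i ≤ k) (h2 : l ≤ k), F.map (homOfLE h2) x ∈ O k h1 := by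
      intro l x
      constructor
      · intro hx
        simp only [hWdef, Set.mem_iUnion] at hx
        obtain ⟨j, h, y, hy, hyx⟩ := hx
        obtain ⟨k, hj, hl, hfg⟩ := heq y x hyx
        refine ⟨k, h.trans hj, hl, ?_⟩
        rw [← hfg]
        have := hOpre h hj
        rw [← this] at hy
        exact hy
      · rintro ⟨k, h1, h2, hx⟩
        simp only [hWdef, Set.mem_iUnion]
        exact ⟨k, h1, F.map (homOfLE h2) x, hx, hnat h2 x⟩
    have hWopen : IsOpen W := by
      apply hopen
      intro l
      have : (c.ι.app l) ⁻¹' W =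
          ⋃ (k : I) (h1 : i ≤ k) (h2 : l ≤ k), (F.map (homOfLE h2)) ⁻¹' (O k h1) := by
        ext x
        simp only [Set.mem_preimage, Set.mem_iUnion]
        rw [hmem l x]
      rw [this]
      exact isOpen_iUnion fun k => isOpen_iUnion fun h1 => isOpen_iUnion fun h2 =>
        (hOopen k h1).preimage (F.map (homOfLE h2)).hom.continuous
    refine ⟨W, hWopen, ?_⟩
    ext x
    rw [Set.mem_preimage, hmem i x]
    constructor
    · rintro ⟨k, h1, h2, hx⟩
      have : h1 = h2 := rfl
      subst this
      rw [← hOU h1]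
      exact hx
    · intro hx
      exact ⟨i, le_refl i, le_refl i, by
        rw [← Set.mem_preimage, hOU (le_refl i)]; exact hx⟩
  · exact hinj
end

section
/- For every infinite regular cardinal λ, a topological space X is λ-generated in the category Top if and only if X is a discrete space of cardinality less than λ; moreover, every discrete space of cardinality less than λ is λ-presentable in Top. -/
open CategoryTheory CategoryTheory.Limits

universe u

/-- A partially ordered set is `κ`-directed if every subset of cardinality `< κ`
has an upper bound. -/
def IsCardDirected (κ : Cardinal.{u}) (I : Type u) [Preorder I] : Prop :=
  ∀ s : Set I, Cardinal.mk s < κ → ∃ ub : I, ∀ i ∈ s, i ≤ ub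

/-- A topological space `X` is `κ`-presentable in `Top` if for every diagram indexed by a
`κ`-directed poset with colimit cocone `c`, every continuous map `f : X → c.pt` factors
through some colimit injection `c.ι.app i`, and any two factorizations through the same
stage are merged by some connecting map of the diagram. -/
def TopCat.IsPresentableObj (κ : Cardinal.{u}) (X : TopCat.{u}) : Prop :=
  ∀ (I : Type u) [PartialOrder I], IsCardDirected κ I →
    ∀ (F : I ⥤ TopCat.{u}) (c : Cocone F), IsColimit c →
      ∀ f : X ⟶ c.pt,
        (∃ (i : I) (g : X ⟶ F.obj i), g ≫ c.ι.app i = f) ∧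
        (∀ (i : I) (g g' : X ⟶ F.obj i), g ≫ c.ι.app i = f → g' ≫ c.ι.app i = f →
          ∃ (j : I) (h : i ≤ j), g ≫ F.map (homOfLE h) = g' ≫ F.map (homOfLE h))

/-- A topological space `X` is `κ`-generated in `Top` if the factorization property above
is required only for diagrams whose connecting maps are monomorphisms, i.e. injective
continuous maps. -/
def TopCat.IsGeneratedObj (κ : Cardinal.{u}) (X : TopCat.{u}) : Prop :=
  ∀ (I : Type u) [PartialOrder I], IsCardDirected κ I →
    ∀ (F : I ⥤ TopCat.{u}), (∀ {i j : I} (f : i ⟶ j), Function.Injective (F.map f)) →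
      ∀ (c : Cocone F), IsColimit c →
        ∀ f : X ⟶ c.pt,
          (∃ (i : I) (g : X ⟶ F.obj i), g ≫ c.ι.app i = f) ∧
          (∀ (i : I) (g g' : X ⟶ F.obj i), g ≫ c.ι.app i = f → g' ≫ c.ι.app i = f →
            ∃ (j : I) (h : i ≤ j), g ≫ F.map (homOfLE h) = g' ≫ F.map (homOfLE h))

namespace GUAux

open Cardinal Set Topology

variable (κ : Cardinal.{u})

/-- The canonical `κ`-directed index order: the order type of `κ`. -/
abbrev O : Type u := κ.ord.ToType

lemma isCardDirected_O (hκ : κ.IsRegular) : IsCardDirected κ (O κ) := by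
  intro s hs
  haveI hwo : IsWellOrder (O κ) (· < ·) := isWellOrder_lt
  have hs' : #s < Order.cof (O κ) := by
    rwa [Ordinal.cof_toType, hκ.cof_ord]
  obtain ⟨b, hb⟩ : ∃ b : O κ, ∀ i ∈ s, i < b := by
    by_contra hne
    push_neg at hne
    exact not_lt_of_ge (Order.cof_le (s := s) fun a => by
      obtain ⟨i, hi, hai⟩ := hne a; exact ⟨i, hi, hai⟩) hs'
  exact ⟨b, fun i hi => (hb i hi).le⟩

lemma nonempty_O (hκ : κ.IsRegular) : Nonempty (O κ) :=
  Ordinal.toType_nonempty_iff_ne_zero.2 hκ.ord_pos.ne'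

/-! ### The diagram used to prove that generated objects are small -/

/-- The `α`-th stage: the initial segment `{c ≤ α}` with the indiscrete topology. -/
def segFunctor : O κ ⥤ TopCat.{u} where
  obj α := @TopCat.of {c : O κ // c ≤ α} ⊤
  map {α β} h := @TopCat.ofHom {c : O κ // c ≤ α} {c : O κ // c ≤ β} ⊤ ⊤
    (@ContinuousMap.mk _ _ ⊤ ⊤ (fun p => ⟨p.1, p.2.trans h.le⟩) continuous_top)
  map_id α := rfl
  map_comp _ _ := rfl

/-- The candidate colimit: the whole order `O κ` with the indiscrete topology. -/
noncomputable def segCocone : Cocone (segFunctor κ) where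
  pt := @TopCat.of (O κ) ⊤
  ι :=
    { app := fun α => @TopCat.ofHom {c : O κ // c ≤ α} (O κ) ⊤ ⊤
        (@ContinuousMap.mk _ _ ⊤ ⊤ (fun p => p.1) continuous_top)
      naturality := fun _ _ _ => rfl }

noncomputable instance : LinearOrder ((segCocone κ).pt : Type u) :=
  inferInstanceAs (LinearOrder (O κ))

lemma top_mem {Z : Type u} {t : TopologicalSpace Z} (ht : t = ⊤) {U : Set Z}
    (h : IsOpen[t] U) {p q : Z} (hp : p ∈ U) : q ∈ U := by
  subst ht
  rcases (TopologicalSpace.isOpen_top_iff U).1 h with rfl | rfl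
  · exact absurd hp (notMem_empty p)
  · trivial

lemma seg_key (t : Cocone (segFunctor κ)) {γ δ : O κ} (h : γ ≤ δ) (p : {c : O κ // c ≤ γ}) :
    t.ι.app γ p = t.ι.app δ ⟨p.1, p.2.trans h⟩ := by
  conv_lhs => rw [← t.w (homOfLE h)]
  rfl

/-- The indiscrete order is indeed the colimit of its indiscrete initial segments. -/
noncomputable def segIsColimit : IsColimit (segCocone κ) where
  desc t := @TopCat.ofHom (O κ) t.pt ⊤ _ (@ContinuousMap.mk _ _ ⊤ _ (fun (c : O κ) => t.ι.app c ⟨c, le_refl c⟩) (by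
    rw [continuous_def]
    intro V hV
    rw [TopologicalSpace.isOpen_top_iff]
    rcases Set.eq_empty_or_nonempty
      ((fun (c : O κ) => t.ι.app c ⟨c, le_refl c⟩) ⁻¹' V) with he | ⟨c₀, hc₀⟩
    · exact Or.inl he
    · right
      rw [eq_univ_iff_forall]
      intro d
      have hpre := (t.ι.app (max c₀ d)).hom.continuous.isOpen_preimage V hV
      have h1 : t.ι.app c₀ ⟨c₀, le_refl _⟩ =
          t.ι.app (max c₀ d) ⟨c₀, le_max_left _ _⟩ := seg_key κ t (le_max_left c₀ d) _
      have h2 : t.ι.app d ⟨d, le_refl _⟩ =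
          t.ι.app (max c₀ d) ⟨d, le_max_right _ _⟩ := seg_key κ t (le_max_right c₀ d) _
      have hβc : (⟨c₀, le_max_left c₀ d⟩ : {c : O κ // c ≤ max c₀ d}) ∈
          (t.ι.app (max c₀ d)) ⁻¹' V := by
        show t.ι.app (max c₀ d) ⟨c₀, le_max_left c₀ d⟩ ∈ V
        rw [← h1]; exact hc₀
      have hβd := top_mem rfl hpre hβc (q := ⟨d, le_max_right c₀ d⟩)
      change t.ι.app (max c₀ d) ⟨d, le_max_right c₀ d⟩ ∈ V at hβd
      show t.ι.app d ⟨d, le_refl d⟩ ∈ V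
      rw [h2]; exact hβd))
  fac t α := by
    apply TopCat.ext
    rintro ⟨c, hc⟩
    exact seg_key κ t hc ⟨c, le_refl _⟩
  uniq t m hm := by
    apply TopCat.ext
    intro c
    exact ConcreteCategory.congr_hom (hm ((c : O κ))) ⟨(c : O κ), le_refl _⟩

lemma mk_lt_of_isGeneratedObj (hκ : κ.IsRegular) (X : TopCat.{u})
    (hX : TopCat.IsGeneratedObj κ X) : Cardinal.mk X < κ := by
  by_contra hle
  rw [not_lt] at hle
  haveI := nonempty_O κ hκ
  haveI := Cardinal.noMaxOrder hκ.aleph0_le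
  have hOle : #(O κ) ≤ #X := by rw [Cardinal.mk_ord_toType]; exact hle
  obtain ⟨φ⟩ := (Cardinal.le_def _ _).1 hOle
  let ψ : X → O κ := Function.invFun φ
  have hψ : ∀ c, ψ (φ c) = c := fun c =>
    Function.leftInverse_invFun φ.injective c
  let f : X ⟶ (segCocone κ).pt :=
    @TopCat.ofHom X (O κ) _ ⊤ (@ContinuousMap.mk _ _ _ ⊤ ψ continuous_top)
  obtain ⟨⟨i, g, hg⟩, -⟩ := hX (O κ) (isCardDirected_O κ hκ) (segFunctor κ)
    (fun {α β} h => fun a b hab => by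
      have h1 : (((segFunctor κ).map h) a).1 = (((segFunctor κ).map h) b).1 :=
        congrArg Subtype.val hab
      exact Subtype.ext h1)
    (segCocone κ) (segIsColimit κ) f
  obtain ⟨d, hd⟩ := exists_gt i
  have h1 : (g (φ d) : {c : O κ // c ≤ i}).val = ψ (φ d) := ConcreteCategory.congr_hom hg (φ d)
  rw [hψ d] at h1
  exact absurd (h1 ▸ (g (φ d) : {c : O κ // c ≤ i}).2) (not_le.2 hd)

/-! ### The diagram used to prove that generated objects are discrete -/

/-- The underlying point set of the linking diagram: two special points
`inl true` and `inl false`, and two `κ`-indexed families of auxiliary points. -/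
def Pt : Type u := ULift.{u} Bool ⊕ (O κ × Bool)

/-- The stage topology: opens containing a special point must contain co-`< κ` many of
the corresponding auxiliary family, and auxiliary points with index in `L` ("linked")
drag the opposite special point into any open containing them. -/
def linkTop (hκ : ℵ₀ ≤ κ) (L : Set (O κ)) : TopologicalSpace (Pt κ) where
  IsOpen U := (Sum.inl ⟨true⟩ ∈ U → #{c : O κ | Sum.inr (c, true) ∉ U} < κ) ∧
    (Sum.inl ⟨false⟩ ∈ U → #{c : O κ | Sum.inr (c, false) ∉ U} < κ) ∧
    (∀ c ∈ L, Sum.inr (c, true) ∈ U → Sum.inl ⟨false⟩ ∈ U) ∧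
    (∀ c ∈ L, Sum.inr (c, false) ∈ U → Sum.inl ⟨true⟩ ∈ U)
  isOpen_univ := by
    have h0 : ∀ b : Bool, #{c : O κ | Sum.inr (c, b) ∉ (Set.univ : Set (Pt κ))} < κ := by
      intro b
      have he : {c : O κ | Sum.inr (c, b) ∉ (Set.univ : Set (Pt κ))} = ∅ := by
        ext c; simp; trivial
      rw [he, Cardinal.mk_emptyCollection]
      exact aleph0_pos.trans_le hκ
    exact ⟨fun _ => h0 true, fun _ => h0 false, fun _ _ _ => trivial, fun _ _ _ => trivial⟩
  isOpen_inter := by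
    rintro U V ⟨hU1, hU2, hU3, hU4⟩ ⟨hV1, hV2, hV3, hV4⟩
    have key : ∀ b : Bool,
        #{c : O κ | Sum.inr (c, b) ∉ U} < κ → #{c : O κ | Sum.inr (c, b) ∉ V} < κ →
        #{c : O κ | Sum.inr (c, b) ∉ U ∩ V} < κ := by
      intro b h1 h2
      calc #{c : O κ | Sum.inr (c, b) ∉ U ∩ V}
          ≤ #({c : O κ | Sum.inr (c, b) ∉ U} ∪ {c : O κ | Sum.inr (c, b) ∉ V} : Set (O κ)) := by
            apply mk_le_mk_of_subset
            intro c hc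
            by_cases h : Sum.inr (c, b) ∈ U
            · exact Or.inr fun h' => hc ⟨h, h'⟩
            · exact Or.inl h
        _ ≤ _ + _ := mk_union_le _ _
        _ < κ := add_lt_of_lt hκ h1 h2
    exact ⟨fun h => key true (hU1 h.1) (hV1 h.2), fun h => key false (hU2 h.1) (hV2 h.2),
      fun c hc hm => ⟨hU3 c hc hm.1, hV3 c hc hm.2⟩,
      fun c hc hm => ⟨hU4 c hc hm.1, hV4 c hc hm.2⟩⟩
  isOpen_sUnion := by
    intro S hS
    refine ⟨fun h => ?_, fun h => ?_, fun c hc hm => ?_, fun c hc hm => ?_⟩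
    · obtain ⟨U, hU, hxU⟩ := h
      refine ((mk_le_mk_of_subset ?_).trans_lt ((hS U hU).1 hxU))
      intro c hc hmem
      exact hc ⟨U, hU, hmem⟩
    · obtain ⟨U, hU, hxU⟩ := h
      refine ((mk_le_mk_of_subset ?_).trans_lt ((hS U hU).2.1 hxU))
      intro c hc hmem
      exact hc ⟨U, hU, hmem⟩
    · obtain ⟨U, hU, hm'⟩ := hm
      exact ⟨U, hU, (hS U hU).2.2.1 c hc hm'⟩
    · obtain ⟨U, hU, hm'⟩ := hm
      exact ⟨U, hU, (hS U hU).2.2.2 c hc hm'⟩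

lemma linkTop_mono (hκ : ℵ₀ ≤ κ) {L L' : Set (O κ)} (h : L ⊆ L') (U : Set (Pt κ)) :
    IsOpen[linkTop κ hκ L'] U → IsOpen[linkTop κ hκ L] U :=
  fun ⟨h1, h2, h3, h4⟩ => ⟨h1, h2, fun c hc => h3 c (h hc), fun c hc => h4 c (h hc)⟩

/-- The linking diagram: at stage `α` exactly the auxiliary points of index `< α`
are linked. -/
def linkFunctor (hκ : ℵ₀ ≤ κ) : O κ ⥤ TopCat.{u} where
  obj α := @TopCat.of (Pt κ) (linkTop κ hκ (Iio α))
  map {α β} h := @TopCat.ofHom (Pt κ) (Pt κ) (linkTop κ hκ (Iio α)) (linkTop κ hκ (Iio β)) (@ContinuousMap.mk _ _ (linkTop κ hκ (Iio α)) (linkTop κ hκ (Iio β)) id (by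
    rw [continuous_def]
    exact fun U hU => linkTop_mono κ hκ (Iio_subset_Iio h.le) U hU))
  map_id _ := rfl
  map_comp _ _ := rfl

/-- The candidate colimit of the linking diagram: all auxiliary points linked. -/
noncomputable def linkCocone (hκ : ℵ₀ ≤ κ) : Cocone (linkFunctor κ hκ) where
  pt := @TopCat.of (Pt κ) (linkTop κ hκ Set.univ)
  ι :=
    { app := fun α => @TopCat.ofHom (Pt κ) (Pt κ) (linkTop κ hκ (Iio α)) (linkTop κ hκ Set.univ) (@ContinuousMap.mk _ _ (linkTop κ hκ (Iio α)) (linkTop κ hκ Set.univ) id (by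
        rw [continuous_def]
        exact fun U hU => linkTop_mono κ hκ (Set.subset_univ _) U hU))
      naturality := fun _ _ _ => rfl }

lemma linkTop_univ_of_all (hκ : κ.IsRegular) {U : Set (Pt κ)}
    (h : ∀ β : O κ, IsOpen[linkTop κ hκ.aleph0_le (Iio β)] U) :
    IsOpen[linkTop κ hκ.aleph0_le Set.univ] U := by
  haveI := nonempty_O κ hκ
  haveI := Cardinal.noMaxOrder hκ.aleph0_le
  refine ⟨(h (Classical.arbitrary _)).1, (h (Classical.arbitrary _)).2.1,
    fun c _ hm => ?_, fun c _ hm => ?_⟩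
  · obtain ⟨β, hβ⟩ := exists_gt c
    exact (h β).2.2.1 c hβ hm
  · obtain ⟨β, hβ⟩ := exists_gt c
    exact (h β).2.2.2 c hβ hm

lemma link_app_eq (hκ : ℵ₀ ≤ κ) (t : Cocone (linkFunctor κ hκ)) (α β : O κ) (y : Pt κ) :
    t.ι.app α y = t.ι.app β y := by
  have h1 : ∀ (γ δ : O κ) (hle : γ ≤ δ) (z : Pt κ), t.ι.app γ z = t.ι.app δ z := by
    intro γ δ hle z
    conv_lhs => rw [← t.w (homOfLE hle)]
    rfl
  exact (h1 α (max α β) (le_max_left _ _) y).trans (h1 β (max α β) (le_max_right _ _) y).symm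

/-- The fully-linked space is the colimit of the linking diagram. -/
noncomputable def linkIsColimit (hκ : κ.IsRegular) : IsColimit (linkCocone κ hκ.aleph0_le) where
  desc t := @TopCat.ofHom (Pt κ) t.pt (linkTop κ hκ.aleph0_le Set.univ) _ (@ContinuousMap.mk _ _ (linkTop κ hκ.aleph0_le Set.univ) _
    (fun y => t.ι.app (@Classical.arbitrary _ (nonempty_O κ hκ)) y) (by
      rw [continuous_def]
      intro V hV
      apply linkTop_univ_of_all κ hκ
      intro β
      have h2 := (t.ι.app β).hom.continuous.isOpen_preimage V hV
      have heq : (⇑(t.ι.app β)) ⁻¹' V =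
          (fun y => t.ι.app (@Classical.arbitrary _ (nonempty_O κ hκ)) y) ⁻¹' V := by
        ext y
        show t.ι.app β y ∈ V ↔ t.ι.app (@Classical.arbitrary _ (nonempty_O κ hκ)) y ∈ V
        rw [link_app_eq κ hκ.aleph0_le t (@Classical.arbitrary _ (nonempty_O κ hκ)) β y]
      exact heq ▸ h2))
  fac t α := by
    apply TopCat.ext
    intro y
    exact link_app_eq κ hκ.aleph0_le t _ α y
  uniq t m hm := by
    apply TopCat.ext
    intro y
    exact ConcreteCategory.congr_hom (hm (@Classical.arbitrary _ (nonempty_O κ hκ))) y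

lemma discreteTopology_of_isGeneratedObj (hκ : κ.IsRegular) (X : TopCat.{u})
    (hX : TopCat.IsGeneratedObj κ X) : DiscreteTopology X := by
  rw [discreteTopology_iff_forall_isOpen]
  intro A
  classical
  haveI := nonempty_O κ hκ
  haveI := Cardinal.noMaxOrder hκ.aleph0_le
  let f0 : X → Pt κ := fun x => if x ∈ A then Sum.inl ⟨true⟩ else Sum.inl ⟨false⟩
  have hf0t : ∀ x, x ∈ A → f0 x = Sum.inl ⟨true⟩ := fun x hx => if_pos hx
  have hf0f : ∀ x, x ∉ A → f0 x = Sum.inl ⟨false⟩ := fun x hx => if_neg hx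
  have hmem_iff : ∀ U : Set (Pt κ), IsOpen[linkTop κ hκ.aleph0_le Set.univ] U →
      ((Sum.inl ⟨true⟩ : Pt κ) ∈ U ↔ (Sum.inl ⟨false⟩ : Pt κ) ∈ U) := by
    intro U hU
    have key : ∀ b : Bool, #{c : O κ | Sum.inr (c, b) ∉ U} < κ →
        ∃ c : O κ, Sum.inr (c, b) ∈ U := by
      intro b hb
      by_contra hall
      push_neg at hall
      have he : {c : O κ | Sum.inr (c, b) ∉ U} = Set.univ := Set.eq_univ_iff_forall.2 hall
      rw [he, mk_univ, Cardinal.mk_ord_toType] at hb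
      exact lt_irrefl κ hb
    constructor
    · intro h
      obtain ⟨c, hc⟩ := key true (hU.1 h)
      exact hU.2.2.1 c (Set.mem_univ c) hc
    · intro h
      obtain ⟨c, hc⟩ := key false (hU.2.1 h)
      exact hU.2.2.2 c (Set.mem_univ c) hc
  have hfc : Continuous[X.str, linkTop κ hκ.aleph0_le Set.univ] f0 := by
    rw [continuous_def]
    intro U hU
    by_cases ht : (Sum.inl ⟨true⟩ : Pt κ) ∈ U
    · have he : f0 ⁻¹' U = Set.univ := by
        rw [Set.eq_univ_iff_forall]
        intro x
        show f0 x ∈ U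
        by_cases hx : x ∈ A
        · rw [hf0t x hx]; exact ht
        · rw [hf0f x hx]; exact (hmem_iff U hU).1 ht
      rw [he]; exact isOpen_univ
    · have he : f0 ⁻¹' U = ∅ := by
        rw [Set.eq_empty_iff_forall_notMem]
        intro x
        show f0 x ∉ U
        by_cases hx : x ∈ A
        · rw [hf0t x hx]; exact ht
        · rw [hf0f x hx]; exact fun h => ht ((hmem_iff U hU).2 h)
      rw [he]; exact isOpen_empty
  let f : X ⟶ (linkCocone κ hκ.aleph0_le).pt := @TopCat.ofHom X (Pt κ) _ (linkTop κ hκ.aleph0_le Set.univ) (@ContinuousMap.mk X (Pt κ) _ (linkTop κ hκ.aleph0_le Set.univ) f0 hfc)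
  obtain ⟨⟨i, g, hg⟩, -⟩ := hX (O κ) (isCardDirected_O κ hκ) (linkFunctor κ hκ.aleph0_le)
    (fun {α β} h => fun a b hab => hab) (linkCocone κ hκ.aleph0_le) (linkIsColimit κ hκ) f
  set V : Set (Pt κ) :=
    {y | y = Sum.inl ⟨true⟩ ∨ ∃ c : O κ, i ≤ c ∧ y = Sum.inr (c, true)} with hVdef
  have hV : IsOpen[linkTop κ hκ.aleph0_le (Iio i)] V := by
    refine ⟨fun _ => ?_, fun hfalse => ?_, fun c hc hm => ?_, fun c hc hm => ?_⟩
    · refine (mk_le_mk_of_subset (fun c hc => ?_)).trans_lt (Cardinal.mk_Iio_ord_toType i)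
      by_contra hlt
      exact hc (Or.inr ⟨c, not_lt.1 hlt, rfl⟩)
    · exfalso
      rcases hfalse with h | ⟨c, _, h⟩
      · have : (⟨false⟩ : ULift Bool) = ⟨true⟩ := Sum.inl.inj h
        simpa using congrArg ULift.down this
      · cases h
    · exfalso
      rcases hm with h | ⟨c', hc', h⟩
      · cases h
      · have h1 : (c, true) = (c', true) := Sum.inr.inj h
        have : c = c' := congrArg Prod.fst h1
        subst this
        exact absurd hc' (not_le.2 hc)
    · exfalso
      rcases hm with h | ⟨c', _, h⟩
      · cases h
      · have h1 : (c, false) = (c', true) := Sum.inr.inj h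
        simpa using congrArg Prod.snd h1
  have hgA : A = g ⁻¹' V := by
    ext x
    have hx : (g x : Pt κ) = f0 x := ConcreteCategory.congr_hom hg x
    show x ∈ A ↔ (g x : Pt κ) ∈ V
    rw [hx]
    constructor
    · intro hxA
      rw [hf0t x hxA]
      exact Or.inl rfl
    · intro hxV
      by_contra hxA
      rw [hf0f x hxA] at hxV
      rcases hxV with h | ⟨c, _, h⟩
      · have hup : (⟨false⟩ : ULift Bool) = ⟨true⟩ := Sum.inl.inj h
        simpa using congrArg ULift.down hup
      · cases h
  rw [hgA]
  exact g.hom.continuous.isOpen_preimage V hV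

/-! ### Discrete small spaces are presentable -/

lemma isPresentableObj_of_discrete (hκ : κ.IsRegular) (X : TopCat.{u})
    (hd : DiscreteTopology X) (hc : Cardinal.mk X < κ) : TopCat.IsPresentableObj κ X := by
  intro I instPO hdir F c hcol f
  classical
  haveI hne : Nonempty I := by
    obtain ⟨ub, -⟩ := hdir ∅ (by rw [Cardinal.mk_emptyCollection]; exact hκ.pos)
    exact ⟨ub⟩
  haveI : IsDirected I (· ≤ ·) := ⟨fun a b => by
    obtain ⟨ub, h⟩ := hdir {a, b}
      (((Set.finite_singleton b).insert a).lt_aleph0.trans_le hκ.aleph0_le)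
    exact ⟨ub, h a (Set.mem_insert _ _), h b (Set.mem_insert_of_mem _ rfl)⟩⟩
  haveI : IsFiltered I := inferInstance
  have hc' : IsColimit ((forget TopCat).mapCocone c) := isColimitOfPreserves (forget TopCat) hcol
  constructor
  · -- factorization
    have H : ∀ x : X, ∃ (j : I) (y : F.obj j),
        ((forget TopCat).mapCocone c).ι.app j y = f x :=
      fun x => Types.jointly_surjective_of_isColimit hc' (f x)
    choose j y hy using H
    obtain ⟨i, hi⟩ := hdir (Set.range j) (Cardinal.mk_range_le.trans_lt hc)
    have hij : ∀ x, j x ≤ i := fun x => hi (j x) ⟨x, rfl⟩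
    refine ⟨i, TopCat.ofHom (@ContinuousMap.mk _ _ _ _ (fun x => F.map (homOfLE (hij x)) (y x))
      (continuous_of_discreteTopology)), ?_⟩
    apply TopCat.ext
    intro x
    have h1 := ConcreteCategory.congr_hom (c.w (homOfLE (hij x))) (y x)
    exact h1.trans (hy x)
  · -- merging
    intro i g g' hgf hg'f
    have e : ∀ x : X, ((forget TopCat).mapCocone c).ι.app i (g x) =
        ((forget TopCat).mapCocone c).ι.app i (g' x) := fun x =>
      (ConcreteCategory.congr_hom hgf x).trans (ConcreteCategory.congr_hom hg'f x).symm
    have E : ∀ x : X, ∃ (k : I) (u : i ⟶ k) (v : i ⟶ k),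
        (F ⋙ forget TopCat).map u (g x) = (F ⋙ forget TopCat).map v (g' x) :=
      fun x => (Types.FilteredColimit.isColimit_eq_iff (F ⋙ forget TopCat) hc').1 (e x)
    choose k u v huv using E
    obtain ⟨jub, hjub⟩ := hdir (insert i (Set.range k))
      ((Cardinal.mk_insert_le).trans_lt (add_lt_of_lt hκ.aleph0_le
        (Cardinal.mk_range_le.trans_lt hc) (one_lt_aleph0.trans_le hκ.aleph0_le)))
    have hij : i ≤ jub := hjub i (Set.mem_insert _ _)
    have hkj : ∀ x, k x ≤ jub := fun x => hjub (k x) (Set.mem_insert_of_mem _ ⟨x, rfl⟩)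
    refine ⟨jub, hij, ?_⟩
    apply TopCat.ext
    intro x
    show F.map (homOfLE hij) (g x) = F.map (homOfLE hij) (g' x)
    calc F.map (homOfLE hij) (g x)
        = F.map (u x ≫ homOfLE (hkj x)) (g x) := by
          rw [Subsingleton.elim (homOfLE hij) (u x ≫ homOfLE (hkj x))]
      _ = F.map (homOfLE (hkj x)) (F.map (u x) (g x)) := by
          rw [F.map_comp]; rfl
      _ = F.map (homOfLE (hkj x)) (F.map (v x) (g' x)) := congrArg _ (huv x)
      _ = F.map (v x ≫ homOfLE (hkj x)) (g' x) := by
          rw [F.map_comp]; rfl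
      _ = F.map (homOfLE hij) (g' x) := by
          rw [Subsingleton.elim (v x ≫ homOfLE (hkj x)) (homOfLE hij)]

end GUAux

/-- Gabriel–Ulmer, corrected. For every infinite regular cardinal `κ`,
a topological space is `κ`-generated in `Top` iff it is a discrete space of cardinality
less than `κ`; moreover every discrete space of cardinality `< κ` is `κ`-presentable. -/
theorem TopCat.isGenerated_iff_discrete_of_card_lt (κ : Cardinal.{u})
    (hκ : κ.IsRegular) (X : TopCat.{u}) :
    (TopCat.IsGeneratedObj κ X ↔ (DiscreteTopology X ∧ Cardinal.mk X < κ)) ∧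
    ((DiscreteTopology X ∧ Cardinal.mk X < κ) → TopCat.IsPresentableObj κ X) := by
  constructor
  · constructor
    · intro hX
      exact ⟨GUAux.discreteTopology_of_isGeneratedObj κ hκ X hX,
        GUAux.mk_lt_of_isGeneratedObj κ hκ X hX⟩
    · rintro ⟨hd, hc⟩
      have hp := GUAux.isPresentableObj_of_discrete κ hκ X hd hc
      intro I instPO hdir F _hinj c hcol f
      exact hp I hdir F c hcol f
  · rintro ⟨hd, hc⟩
    exact GUAux.isPresentableObj_of_discrete κ hκ X hd hc
end

section
/- In the category Top of topological spaces, a space X is finitely generated with respect to open embeddings if and only if X is compact (every open cover of X has a finite subcover). -/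
open CategoryTheory CategoryTheory.Limits

universe u

/-- A topological space `X` is finitely generated with respect to open embeddings in `Top`
if for every diagram indexed by a directed poset (every finite subset has an upper bound)
whose connecting maps are open embeddings, with colimit cocone `c`, every continuous map
`f : X → c.pt` factors through some colimit injection, essentially uniquely (any two
factorizations through the same stage are merged by a connecting map). -/
def TopCat.FinGenWrtOpenEmbeddings (X : TopCat.{u}) : Prop :=
  ∀ (I : Type u) [PartialOrder I] [Nonempty I] [IsDirected I (· ≤ ·)]
    (F : I ⥤ TopCat.{u}),
    (∀ {i j : I} (f : i ⟶ j), Topology.IsOpenEmbedding (F.map f)) →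
    ∀ (c : Cocone F), IsColimit c →
      ∀ f : X ⟶ c.pt,
        (∃ (i : I) (g : X ⟶ F.obj i), g ≫ c.ι.app i = f) ∧
        (∀ (i : I) (g g' : X ⟶ F.obj i), g ≫ c.ι.app i = f → g' ≫ c.ι.app i = f →
          ∃ (j : I) (h : i ≤ j), g ≫ F.map (homOfLE h) = g' ≫ F.map (homOfLE h))

open Topology

section Aux

set_option linter.unusedSectionVars false

variable {I : Type u} [PartialOrder I] [Nonempty I] [IsDirected I (· ≤ ·)]
  {F : I ⥤ TopCat.{u}} {c : Cocone F}

lemma auxFG_eq_iff (hc : IsColimit c) {i j : I} {x : F.obj i} {y : F.obj j} :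
    c.ι.app i x = c.ι.app j y ↔ ∃ (k : I) (f : i ⟶ k) (g : j ⟶ k), F.map f x = F.map g y := by
  have hc' : IsColimit ((forget TopCat).mapCocone c) := isColimitOfPreserves _ hc
  exact Types.FilteredColimit.isColimit_eq_iff (F ⋙ forget TopCat) hc'

lemma auxFG_surj (hc : IsColimit c) (x : c.pt) : ∃ i y, c.ι.app i y = x :=
  Types.jointly_surjective (F ⋙ forget TopCat) (isColimitOfPreserves (forget TopCat) hc) x

lemma auxFG_isOpen_iff (hc : IsColimit c) (S : Set c.pt) :
    IsOpen S ↔ ∀ j, IsOpen (c.ι.app j ⁻¹' S) := by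
  have h := TopCat.coinduced_of_isColimit c hc
  constructor
  · intro hS j
    exact (c.ι.app j).hom.continuous.isOpen_preimage S hS
  · intro hS
    have : IsOpen[⨆ j, (F.obj j).str.coinduced (c.ι.app j)] S :=
      isOpen_iSup_iff.mpr fun j => isOpen_coinduced.mpr (hS j)
    rwa [← h] at this

variable (hF : ∀ {i j : I} (f : i ⟶ j), Topology.IsOpenEmbedding (F.map f))

include hF

lemma auxFG_inj (hc : IsColimit c) (i : I) : Function.Injective (c.ι.app i) := by
  intro x y hxy
  obtain ⟨k, f, g, hfg⟩ := (auxFG_eq_iff hc).mp hxy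
  obtain rfl : f = g := Subsingleton.elim _ _
  exact (hF f).injective hfg

lemma auxFG_openMap (hc : IsColimit c) (i : I) : IsOpenMap (c.ι.app i) := by
  intro V hV
  rw [auxFG_isOpen_iff hc]
  intro j
  obtain ⟨k, hik, hjk⟩ := directed_of (· ≤ ·) i j
  have key : c.ι.app j ⁻¹' (c.ι.app i '' V) =
      F.map (homOfLE hjk) ⁻¹' (F.map (homOfLE hik) '' V) := by
    ext x
    simp only [Set.mem_preimage, Set.mem_image]
    constructor
    · rintro ⟨v, hv, hveq⟩
      obtain ⟨l, fil, gjl, hfg⟩ := (auxFG_eq_iff hc).mp hveq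
      obtain ⟨m, hkm, hlm⟩ := directed_of (· ≤ ·) k l
      refine ⟨v, hv, (hF (homOfLE hkm)).injective ?_⟩
      have h1 : F.map (homOfLE hkm) (F.map (homOfLE hik) v) = F.map (homOfLE hlm) (F.map fil v) :=
        calc F.map (homOfLE hkm) (F.map (homOfLE hik) v)
            = F.map (homOfLE hik ≫ homOfLE hkm) v := by rw [F.map_comp]; rfl
          _ = F.map (fil ≫ homOfLE hlm) v := by
              rw [show homOfLE hik ≫ homOfLE hkm = fil ≫ homOfLE hlm from Subsingleton.elim _ _]
          _ = F.map (homOfLE hlm) (F.map fil v) := by rw [F.map_comp]; rfl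
      have h2 : F.map (homOfLE hkm) (F.map (homOfLE hjk) x) = F.map (homOfLE hlm) (F.map gjl x) :=
        calc F.map (homOfLE hkm) (F.map (homOfLE hjk) x)
            = F.map (homOfLE hjk ≫ homOfLE hkm) x := by rw [F.map_comp]; rfl
          _ = F.map (gjl ≫ homOfLE hlm) x := by
              rw [show homOfLE hjk ≫ homOfLE hkm = gjl ≫ homOfLE hlm from Subsingleton.elim _ _]
          _ = F.map (homOfLE hlm) (F.map gjl x) := by rw [F.map_comp]; rfl
      rw [h1, h2, hfg]
    · rintro ⟨v, hv, hveq⟩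
      refine ⟨v, hv, ?_⟩
      rw [auxFG_eq_iff hc]
      exact ⟨k, homOfLE hik, homOfLE hjk, hveq⟩
  rw [key]
  exact ((hF (homOfLE hjk)).continuous.isOpen_preimage _ ((hF (homOfLE hik)).isOpenMap _ hV))

lemma auxFG_ι_isOpenEmbedding (hc : IsColimit c) (i : I) :
    Topology.IsOpenEmbedding (c.ι.app i) :=
  Topology.IsOpenEmbedding.of_continuous_injective_isOpenMap
    (c.ι.app i).hom.continuous (auxFG_inj hF hc i) (auxFG_openMap hF hc i)

end Aux

/-- In `Top`, a space is finitely generated with respect to open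
embeddings if and only if it is compact. -/
theorem TopCat.finGenWrtOpenEmbeddings_iff_compact (X : TopCat.{u}) :
    TopCat.FinGenWrtOpenEmbeddings X ↔ CompactSpace X := by
  constructor
  · -- finitely generated → compact
    intro hFG
    refine ⟨isCompact_of_finite_subcover fun {ι} U hUo hUc => ?_⟩
    classical
    have hex : ∀ x : X, ∃ i : ι, x ∈ U i := fun x => Set.mem_iUnion.mp (hUc (Set.mem_univ x))
    choose ind hind using hex
    set V : Finset ι → Set X := fun s => ⋃ i ∈ s, U i with hVdef
    have hV : ∀ s, IsOpen (V s) := fun s => isOpen_biUnion fun i _ => hUo i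
    have hVmono : ∀ {s t : Finset ι}, s ≤ t → V s ⊆ V t := fun h =>
      Set.biUnion_subset_biUnion_left h
    have hd : ∀ x : X, x ∈ V {ind x} := fun x =>
      Set.mem_biUnion (Finset.mem_singleton_self _) (hind x)
    let F : Finset ι ⥤ TopCat.{u} :=
      { obj := fun s => TopCat.of (V s)
        map := fun {s t} h => TopCat.ofHom ⟨Set.inclusion (hVmono h.le), continuous_inclusion _⟩
        map_id := fun s => rfl
        map_comp := fun f g => rfl }
    have hOE : ∀ {s t : Finset ι} (f : s ⟶ t), Topology.IsOpenEmbedding (F.map f) := by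
      intro s t f
      have h1 : Topology.IsOpenEmbedding ((Subtype.val : V t → X) ∘ F.map f) := by
        have : (Subtype.val : V t → X) ∘ F.map f = (Subtype.val : V s → X) := rfl
        rw [this]
        exact (hV s).isOpenEmbedding_subtypeVal
      exact (Topology.IsOpenEmbedding.of_comp_iff _ (hV t).isOpenEmbedding_subtypeVal).mp h1
    let cc : Cocone F :=
      { pt := X
        ι := { app := fun s => TopCat.ofHom ⟨Subtype.val, continuous_subtype_val⟩
               naturality := fun s t f => rfl } }
    have key : ∀ (s : Cocone F) (t : Finset ι) (x : X) (hx : x ∈ V t),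
        s.ι.app t ⟨x, hx⟩ = s.ι.app {ind x} (⟨x, hd x⟩ : ↥(V {ind x})) := by
      intro s t x hx
      have h1 : t ≤ t ∪ {ind x} := Finset.subset_union_left
      have h2 : ({ind x} : Finset ι) ≤ t ∪ {ind x} := Finset.subset_union_right
      have e1 : s.ι.app t ⟨x, hx⟩
          = s.ι.app (t ∪ {ind x}) (F.map (homOfLE h1) ⟨x, hx⟩) := by
        rw [← s.w (homOfLE h1)]; rfl
      have e2 : s.ι.app {ind x} (⟨x, hd x⟩ : ↥(V {ind x}))
          = s.ι.app (t ∪ {ind x}) (F.map (homOfLE h2) ⟨x, hd x⟩) := by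
        rw [← s.w (homOfLE h2)]; rfl
      rw [e1, e2]
      exact congrArg _ (Subtype.ext rfl)
    have hdesc : ∀ (s : Cocone F) (d : X → ↑s.pt),
        (∀ x, d x = s.ι.app {ind x} (⟨x, hd x⟩ : ↥(V {ind x}))) → Continuous d := by
      intro s d hdx
      rw [continuous_iff_continuousAt]
      intro x
      have hcont : ContinuousOn d (V {ind x}) := by
        rw [continuousOn_iff_continuous_restrict]
        have : (V {ind x}).domRestrict d = fun z : V {ind x} => s.ι.app {ind x} z := by
          funext z
          rw [Set.domRestrict_apply, hdx z.1]
          exact (key s {ind x} z.1 z.2).symm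
        rw [this]
        exact (s.ι.app {ind x}).hom.continuous
      exact hcont.continuousAt ((hV {ind x}).mem_nhds (hd x))
    have hccIsColim : IsColimit cc :=
      { desc := fun s => TopCat.ofHom ⟨fun x => s.ι.app {ind x} (⟨x, hd x⟩ : ↥(V {ind x})),
          hdesc s _ fun x => rfl⟩
        fac := by
          intro s t
          ext x
          let x' : ↥(V t) := x
          show (s.ι.app {ind x'.1}) (⟨x'.1, hd x'.1⟩ : ↥(V {ind x'.1})) = (s.ι.app t) x
          exact (key s t x'.1 x'.2).symm
        uniq := by
          intro s m hm
          ext x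
          exact ConcreteCategory.congr_hom (hm {ind x}) (⟨x, hd x⟩ : ↥(V {ind x})) }
    obtain ⟨t, g, hg⟩ := (hFG (Finset ι) F (fun {s t} f => hOE f) cc hccIsColim (𝟙 X)).1
    refine ⟨t, fun x _ => ?_⟩
    have hx : (cc.ι.app t) (g x) = x := ConcreteCategory.congr_hom hg x
    have h2 : (show ↥(V t) from g x).1 = x := hx
    show x ∈ V t
    exact h2 ▸ (show ↥(V t) from g x).2
  · -- compact → finitely generated
    intro hcomp
    intro I _ _ _ F hF c hc f
    constructor
    · have hopen : ∀ i : I, IsOpen (Set.range (c.ι.app i)) := fun i =>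
        (auxFG_ι_isOpenEmbedding hF hc i).isOpen_range
      have hcover : (Set.univ : Set X) ⊆ ⋃ i, f ⁻¹' Set.range (c.ι.app i) := fun x _ => by
        obtain ⟨i, y, hy⟩ := auxFG_surj hc (f x)
        exact Set.mem_iUnion.mpr ⟨i, ⟨y, hy⟩⟩
      obtain ⟨t, ht⟩ := isCompact_univ.elim_finite_subcover _
        (fun i => (hopen i).preimage f.hom.continuous) hcover
      obtain ⟨M, hM⟩ := t.exists_le
      have hrange : ∀ x : X, f x ∈ Set.range (c.ι.app M) := by
        intro x
        obtain ⟨i, hit, hxi⟩ := Set.mem_iUnion₂.mp (ht (Set.mem_univ x))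
        obtain ⟨y, hy⟩ := hxi
        exact ⟨F.map (homOfLE (hM i hit)) y, by rw [← hy, ← c.w (homOfLE (hM i hit))]; rfl⟩
      choose g hg using hrange
      have hgc : Continuous g := by
        rw [(auxFG_ι_isOpenEmbedding hF hc M).isEmbedding.continuous_iff]
        have : (c.ι.app M) ∘ g = f := funext hg
        rw [this]
        exact f.hom.continuous
      exact ⟨M, TopCat.ofHom ⟨g, hgc⟩, by ext x; exact hg x⟩
    · intro i g g' hgf hg'f
      have hgg : g = g' := by
        ext x
        apply auxFG_inj hF hc i
        have h1 := ConcreteCategory.congr_hom hgf x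
        have h2 := ConcreteCategory.congr_hom hg'f x
        exact h1.trans h2.symm
      exact ⟨i, le_refl i, by rw [hgg]⟩
end

section
/- In the full subcategory Haus of Top consisting of all Hausdorff spaces, a Hausdorff space X is finitely generated with respect to open embeddings if and only if X is compact. The same characterization holds in the full subcategories Top₁ of T₁-spaces and Top₀ of T₀-spaces. -/
open CategoryTheory CategoryTheory.Limits

universe u

/-- For a full subcategory of `Top` given by a property `P` of spaces, an object `X` is
finitely generated with respect to open embeddings if for every diagram in the subcategory
indexed by a directed poset (every finite subset has an upper bound), whose connecting maps
are open embeddings, with colimit cocone `c` in the subcategory, every morphism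
`f : X ⟶ c.pt` factors through some colimit injection, essentially uniquely (any two
factorizations through the same stage are merged by a connecting map). -/
def TopCat.FinGenWrtOpenEmbeddingsIn (P : TopCat.{u} → Prop)
    (X : ObjectProperty.FullSubcategory P) : Prop :=
  ∀ (I : Type u) [PartialOrder I] [Nonempty I] [IsDirected I (· ≤ ·)]
    (F : I ⥤ ObjectProperty.FullSubcategory P),
    (∀ {i j : I} (f : i ⟶ j),
      Topology.IsOpenEmbedding ((ObjectProperty.ι P).map (F.map f))) →
    ∀ (c : Cocone F), IsColimit c →
      ∀ f : X ⟶ c.pt,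
        (∃ (i : I) (g : X ⟶ F.obj i), g ≫ c.ι.app i = f) ∧
        (∀ (i : I) (g g' : X ⟶ F.obj i), g ≫ c.ι.app i = f → g' ≫ c.ι.app i = f →
          ∃ (j : I) (h : i ≤ j), g ≫ F.map (homOfLE h) = g' ≫ F.map (homOfLE h))

section Aux

variable {P : TopCat.{u} → Prop}

/-- Compactness implies finite generation w.r.t. open embeddings, provided `P` is
stable under directed unions along open embeddings. -/
theorem compact_implies_finGen
    (hSep : ∀ (Z : TopCat.{u}),
      (∀ x y : (Z : Type u), ∃ (W : TopCat.{u}) (e : C(W, Z)), P W ∧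
        Topology.IsOpenEmbedding e ∧ x ∈ Set.range e ∧ y ∈ Set.range e) → P Z)
    (X : ObjectProperty.FullSubcategory P) (hX : CompactSpace X.obj) :
    TopCat.FinGenWrtOpenEmbeddingsIn P X := by
  intro I _ _ _ F hoe c hc f
  set G : I ⥤ TopCat.{u} := F ⋙ ObjectProperty.ι P with hG
  set cT : Cocone G := TopCat.coconeOfCoconeForget (Types.TypeMax.colimitCocone.{u,u} (G ⋙ forget TopCat)) with hcT
  have hT : IsColimit cT := TopCat.isColimitCoconeOfForget _ (Types.TypeMax.colimitCoconeIsColimit.{u,u} (G ⋙ forget TopCat))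
  -- injectivity of the legs of the concrete colimit
  have hTty : IsColimit ((forget TopCat).mapCocone cT) :=
    isColimitOfPreserves (forget TopCat) hT
  have hinj : ∀ (i : I) (x y : (G.obj i : Type u)),
      cT.ι.app i x = cT.ι.app i y → x = y := by
    intro i x y h
    have := (Types.FilteredColimit.isColimit_eq_iff (G ⋙ forget TopCat) hTty
      (i := i) (j := i) (xi := x) (xj := y)).1 h
    obtain ⟨k, g1, g2, hk⟩ := this
    rw [Subsingleton.elim g1 g2] at hk
    exact (hoe g2).injective hk
  have hsurj : ∀ z : (cT.pt : Type u), ∃ (i : I) (x : G.obj i), cT.ι.app i x = z := by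
    intro z
    obtain ⟨i, x, hx⟩ := Types.jointly_surjective (G ⋙ forget TopCat) hTty z
    exact ⟨i, x, hx⟩
  -- pointwise naturality
  have hw : ∀ {i k : I} (h : i ≤ k) (x : G.obj i),
      cT.ι.app k (G.map (homOfLE h) x) = cT.ι.app i x := by
    intro i k h x
    exact ConcreteCategory.congr_hom (cT.w (homOfLE h)) x
  -- openness criterion in the concrete colimit
  have hopen : ∀ (S : Set (cT.pt : Type u)),
      (∀ j, IsOpen (cT.ι.app j ⁻¹' S)) → IsOpen S := by
    intro S hS
    exact (TopCat.isOpen_iff_of_isColimit cT hT S).2 hS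
  -- the legs are open maps
  have hOpenMap : ∀ i : I, IsOpenMap (cT.ι.app i) := by
    intro i U hU
    apply hopen
    intro j
    obtain ⟨k, hik, hjk⟩ := exists_ge_ge i j
    have hkey : (cT.ι.app j) ⁻¹' ((cT.ι.app i) '' U) =
        (G.map (homOfLE hjk)) ⁻¹' ((G.map (homOfLE hik)) '' U) := by
      ext x
      simp only [Set.mem_preimage, Set.mem_image]
      constructor
      · rintro ⟨u, hu, hux⟩
        refine ⟨u, hu, ?_⟩
        have := (Types.FilteredColimit.isColimit_eq_iff (G ⋙ forget TopCat) hTty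
          (i := i) (j := j) (xi := u) (xj := x)).1 hux
        obtain ⟨l, g1, g2, hl⟩ := this
        obtain ⟨m, hkm, hlm⟩ := exists_ge_ge k l
        apply (hoe (homOfLE hkm)).injective
        show (G.map (homOfLE hkm)) (G.map (homOfLE hik) u) =
          (G.map (homOfLE hkm)) (G.map (homOfLE hjk) x)
        have e1 : (G.map (homOfLE hkm)) (G.map (homOfLE hik) u)
            = G.map (homOfLE ((leOfHom g1).trans hlm)) u := by
          rw [← CategoryTheory.comp_apply, ← G.map_comp]
          congr 1
        have e2 : (G.map (homOfLE hkm)) (G.map (homOfLE hjk) x)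
            = G.map (homOfLE ((leOfHom g2).trans hlm)) x := by
          rw [← CategoryTheory.comp_apply, ← G.map_comp]
          congr 1
        have e3 : G.map (homOfLE ((leOfHom g1).trans hlm)) u
            = G.map (homOfLE hlm) (G.map g1 u) := by
          rw [← CategoryTheory.comp_apply, ← G.map_comp]
          congr 1
        have e4 : G.map (homOfLE ((leOfHom g2).trans hlm)) x
            = G.map (homOfLE hlm) (G.map g2 x) := by
          rw [← CategoryTheory.comp_apply, ← G.map_comp]
          congr 1
        rw [e1, e2, e3, e4]
        exact congrArg (G.map (homOfLE hlm)) hl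
      · rintro ⟨u, hu, hux⟩
        refine ⟨u, hu, ?_⟩
        rw [← hw hik u, ← hw hjk x, hux]
    rw [hkey]
    exact ((hoe (homOfLE hjk)).continuous.isOpen_preimage _
      ((hoe (homOfLE hik)).isOpenMap _ hU))
  have hleg : ∀ i : I, Topology.IsOpenEmbedding (cT.ι.app i) := fun i =>
    Topology.IsOpenEmbedding.of_continuous_injective_isOpenMap
      (cT.ι.app i).hom.continuous (hinj i) (hOpenMap i)
  -- the colimit point satisfies P
  have hP : P cT.pt := by
    apply hSep
    intro x y
    obtain ⟨i, a, ha⟩ := hsurj x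
    obtain ⟨j, b, hb⟩ := hsurj y
    obtain ⟨k, hik, hjk⟩ := exists_ge_ge i j
    refine ⟨G.obj k, (cT.ι.app k).hom, (F.obj k).property, hleg k, ?_, ?_⟩
    · exact ⟨G.map (homOfLE hik) a, (hw hik a).trans ha⟩
    · exact ⟨G.map (homOfLE hjk) b, (hw hjk b).trans hb⟩
  -- the cocone in the full subcategory
  let cP : Cocone F :=
    { pt := ⟨cT.pt, hP⟩
      ι :=
        { app := fun i => InducedCategory.homMk (cT.ι.app i)
          naturality := fun i j g => InducedCategory.hom_ext (cT.ι.naturality g) } }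
  have hcPmap : IsColimit ((ObjectProperty.ι P).mapCocone cP) := by
    refine hT.ofIsoColimit (Cocones.ext (Iso.refl _) ?_)
    intro i
    simp [cP]
  have hcP : IsColimit cP := isColimitOfReflects (ObjectProperty.ι P) hcPmap
  let e := hcP.coconePointUniqueUpToIso hc
  have he : ∀ i, cP.ι.app i ≫ e.hom = c.ι.app i := fun i =>
    hcP.comp_coconePointUniqueUpToIso_hom hc i
  set f' : X ⟶ cP.pt := f ≫ e.inv with hf'
  set f'' : X.obj ⟶ cT.pt := (ObjectProperty.ι P).map f' with hf''
  have hf''app : ∀ x : (X.obj : Type u), f'' x = f'' x := fun _ => rfl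
  constructor
  · -- existence
    have hK : IsCompact (Set.range f'') := isCompact_range f''.hom.continuous
    have hcov : Set.range f'' ⊆ ⋃ i : I, Set.range (cT.ι.app i) := by
      rintro z ⟨x, rfl⟩
      obtain ⟨i, w, hww⟩ := hsurj (f'' x)
      exact Set.mem_iUnion.2 ⟨i, w, hww⟩
    obtain ⟨s, hs⟩ := hK.elim_finite_subcover (fun i : I => Set.range (cT.ι.app i))
      (fun i => (hOpenMap i).isOpen_range) hcov
    obtain ⟨M, hM⟩ := s.exists_le
    have hKM : ∀ x : X.obj, ∃ w : G.obj M, cT.ι.app M w = f'' x := by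
      intro x
      have := hs ⟨x, rfl⟩
      rw [Set.mem_iUnion₂] at this
      obtain ⟨i, hi, w, hww⟩ := this
      exact ⟨G.map (homOfLE (hM i hi)) w, by rw [hw (hM i hi) w, hww]⟩
    choose g0 hg0 using hKM
    have hg0c : Continuous g0 := by
      rw [(hleg M).toIsInducing.continuous_iff]
      have : (cT.ι.app M) ∘ g0 = f'' := funext hg0
      rw [this]
      exact f''.hom.continuous
    refine ⟨M, (InducedCategory.homMk (TopCat.ofHom ⟨g0, hg0c⟩)), ?_⟩
    have h1 : ((InducedCategory.homMk (TopCat.ofHom ⟨g0, hg0c⟩)) : X ⟶ F.obj M) ≫ cP.ι.app M = f' := by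
      apply (ObjectProperty.ι P).map_injective
      apply TopCat.hom_ext; apply ContinuousMap.ext
      intro x
      exact hg0 x
    calc ((InducedCategory.homMk (TopCat.ofHom ⟨g0, hg0c⟩)) : X ⟶ F.obj M) ≫ c.ι.app M
        = ((InducedCategory.homMk (TopCat.ofHom ⟨g0, hg0c⟩)) : X ⟶ F.obj M) ≫ (cP.ι.app M ≫ e.hom) := by rw [he M]
      _ = (((InducedCategory.homMk (TopCat.ofHom ⟨g0, hg0c⟩)) : X ⟶ F.obj M) ≫ cP.ι.app M) ≫ e.hom := by rw [Category.assoc]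
      _ = f' ≫ e.hom := by rw [h1]
      _ = f := by rw [hf', Category.assoc, e.inv_hom_id, Category.comp_id]
  · -- uniqueness
    intro i g g' hgf hg'f
    have : g ≫ cP.ι.app i = g' ≫ cP.ι.app i := by
      have h1 : g ≫ cP.ι.app i ≫ e.hom = g' ≫ cP.ι.app i ≫ e.hom := by
        rw [he i, hgf, hg'f]
      have h2 := congrArg (fun t => t ≫ e.inv) h1
      simpa using h2
    have hgg' : g = g' := by
      apply (ObjectProperty.ι P).map_injective
      apply TopCat.hom_ext; apply ContinuousMap.ext
      intro x
      apply hinj i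
      exact congrArg (fun (h : X ⟶ cP.pt) =>
        ((ObjectProperty.ι P).map h) x) this
    exact ⟨i, le_refl i, by rw [hgg']⟩

theorem finGen_implies_compact
    (hSub : ∀ (Y : TopCat.{u}), P Y → ∀ s : Set Y, IsOpen s → P (TopCat.of s))
    (X : ObjectProperty.FullSubcategory P) (hfg : TopCat.FinGenWrtOpenEmbeddingsIn P X) :
    CompactSpace X.obj := by
  constructor
  rw [isCompact_iff_finite_subcover]
  intro ι U hUo hUc
  by_contra hns
  push_neg at hns
  set V : Finset ι → Set (X.obj : Type u) := fun s => ⋃ i ∈ s, U i with hV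
  have hVo : ∀ s, IsOpen (V s) := fun s => isOpen_biUnion fun i _ => hUo i
  have hmono : ∀ {s t : Finset ι}, s ≤ t → V s ⊆ V t := fun h =>
    Set.biUnion_subset_biUnion_left h
  let F : Finset ι ⥤ ObjectProperty.FullSubcategory P :=
    { obj := fun s => ⟨TopCat.of (V s), hSub X.obj X.property _ (hVo s)⟩
      map := fun {s t} f =>
        InducedCategory.homMk (TopCat.ofHom (⟨Set.inclusion (hmono (leOfHom f)), continuous_inclusion _⟩ :
          C((V s : Type u), (V t : Type u))))
      map_id := fun s => rfl
      map_comp := fun f g => rfl }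
  have hoe : ∀ {s t : Finset ι} (f : s ⟶ t),
      Topology.IsOpenEmbedding ((ObjectProperty.ι P).map (F.map f)) := by
    intro s t f
    have h1 := (hVo t).isOpenEmbedding_subtypeVal
    have h2 := (hVo s).isOpenEmbedding_subtypeVal
    refine Topology.IsOpenEmbedding.of_comp _ h1 ?_
    exact h2
  -- cocone with point X
  let c0 : Cocone F :=
    { pt := X
      ι :=
        { app := fun s => InducedCategory.homMk (TopCat.ofHom (⟨Subtype.val, continuous_subtype_val⟩ :
            C((V s : Type u), (X.obj : Type u))))
          naturality := fun s t f => by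
            ext x
            rfl } }
  have hex : ∀ x : (X.obj : Type u), ∃ i, x ∈ U i := fun x =>
    Set.mem_iUnion.1 (hUc (Set.mem_univ x))
  choose ix hix using hex
  have hmemV : ∀ x : (X.obj : Type u), x ∈ V {ix x} := fun x =>
    Set.mem_biUnion (Finset.mem_singleton_self _) (hix x)
  -- agreement lemma for an arbitrary cocone over the underlying diagram
  have agree : ∀ (s : Cocone (F ⋙ ObjectProperty.ι P)) (a b : Finset ι)
      (x : (X.obj : Type u)) (ha : x ∈ V a) (hb : x ∈ V b),
      s.ι.app a ⟨x, ha⟩ = s.ι.app b ⟨x, hb⟩ := by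
    intro s a b x ha hb
    classical
    have h1 := ConcreteCategory.congr_hom (s.w (homOfLE (Finset.subset_union_left : a ≤ a ∪ b)))
      (⟨x, ha⟩ : V a)
    have h2 := ConcreteCategory.congr_hom (s.w (homOfLE (Finset.subset_union_right : b ≤ a ∪ b)))
      (⟨x, hb⟩ : V b)
    have e1 : ((F ⋙ ObjectProperty.ι P).map
        (homOfLE (Finset.subset_union_left : a ≤ a ∪ b))) (⟨x, ha⟩ : V a)
        = (⟨x, hmono Finset.subset_union_left ha⟩ : V (a ∪ b)) := rfl
    have e2 : ((F ⋙ ObjectProperty.ι P).map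
        (homOfLE (Finset.subset_union_right : b ≤ a ∪ b))) (⟨x, hb⟩ : V b)
        = (⟨x, hmono Finset.subset_union_left ha⟩ : V (a ∪ b)) := rfl
    have h1' : s.ι.app (a ∪ b) ⟨x, hmono Finset.subset_union_left ha⟩
        = s.ι.app a ⟨x, ha⟩ := h1
    have h2' : s.ι.app (a ∪ b) ⟨x, hmono Finset.subset_union_left ha⟩
        = s.ι.app b ⟨x, hb⟩ := h2
    exact h1'.symm.trans h2'
  have hc0T : IsColimit ((ObjectProperty.ι P).mapCocone c0) := by
    refine
      { desc := fun s => TopCat.ofHom ⟨fun x => s.ι.app {ix x} ⟨x, hmemV x⟩, ?_⟩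
        fac := ?_
        uniq := ?_ }
    · -- continuity of the glued map
      rw [continuous_iff_continuousAt]
      intro x
      apply ContinuousOn.continuousAt _ ((hUo (ix x)).mem_nhds (hix x))
      rw [continuousOn_iff_continuous_restrict]
      have hcont : Continuous (fun y : U (ix x) =>
          s.ι.app {ix x} (⟨y.1, Set.mem_biUnion (Finset.mem_singleton_self _) y.2⟩ :
            V {ix x})) :=
        (s.ι.app {ix x}).hom.continuous.comp (Continuous.subtype_mk continuous_subtype_val _)
      exact hcont.congr (fun y => agree s _ _ y.1 _ (hmemV y.1))
    · intro s j
      apply TopCat.hom_ext; apply ContinuousMap.ext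
      rintro ⟨x, hx⟩
      exact agree s _ _ x (hmemV x) hx
    · intro s m hm
      apply TopCat.hom_ext; apply ContinuousMap.ext
      intro x
      have := ConcreteCategory.congr_hom (hm ({ix x} : Finset ι)) (⟨x, hmemV x⟩ : V {ix x})
      exact this
  have hc0 : IsColimit c0 := isColimitOfReflects (ObjectProperty.ι P) hc0T
  obtain ⟨⟨s, g, hg⟩, -⟩ := hfg (Finset ι) F hoe c0 hc0 (𝟙 X)
  apply hns s
  intro x _
  have hxV : (((ObjectProperty.ι P).map (g ≫ c0.ι.app s)) x) ∈ V s :=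
    (((ObjectProperty.ι P).map g) x).2
  rw [hg] at hxV
  exact hxV


end Aux

/-- In each of the full subcategories `Haus` (Hausdorff spaces), `Top₁`
(T₁-spaces) and `Top₀` (T₀-spaces) of `Top`, a space is finitely generated with respect to
open embeddings if and only if it is compact. -/
theorem finGenWrtOpenEmbeddings_iff_compact_in_Haus_T1_T0 :
    (∀ X : ObjectProperty.FullSubcategory (fun Y : TopCat.{u} => T2Space Y),
      TopCat.FinGenWrtOpenEmbeddingsIn _ X ↔ CompactSpace X.obj) ∧
    (∀ X : ObjectProperty.FullSubcategory (fun Y : TopCat.{u} => T1Space Y),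
      TopCat.FinGenWrtOpenEmbeddingsIn _ X ↔ CompactSpace X.obj) ∧
    (∀ X : ObjectProperty.FullSubcategory (fun Y : TopCat.{u} => T0Space Y),
      TopCat.FinGenWrtOpenEmbeddingsIn _ X ↔ CompactSpace X.obj) := by
  have main : ∀ (P : TopCat.{u} → Prop)
      (_ : ∀ (Y : TopCat.{u}), P Y → ∀ s : Set Y, IsOpen s → P (TopCat.of s))
      (_ : ∀ (Z : TopCat.{u}),
        (∀ x y : (Z : Type u), ∃ (W : TopCat.{u}) (e : C(W, Z)), P W ∧
          Topology.IsOpenEmbedding e ∧ x ∈ Set.range e ∧ y ∈ Set.range e) → P Z)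
      (X : ObjectProperty.FullSubcategory P),
      TopCat.FinGenWrtOpenEmbeddingsIn P X ↔ CompactSpace X.obj :=
    fun P hSub hSep X =>
      ⟨finGen_implies_compact hSub X, fun h => compact_implies_finGen hSep X h⟩
  refine ⟨main _ ?_ ?_, main _ ?_ ?_, main _ ?_ ?_⟩
  · intro Y hY s _
    haveI : T2Space (Y : Type u) := hY
    exact inferInstanceAs (T2Space s)
  · intro Z h
    refine ⟨fun x y hxy => ?_⟩
    obtain ⟨W, e, hW, he, ⟨a, rfl⟩, ⟨b, rfl⟩⟩ := h x y
    haveI : T2Space (W : Type u) := hW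
    obtain ⟨u, v, hu, hv, hau, hbv, huv⟩ :=
      t2_separation (fun h' : a = b => hxy (congrArg e h'))
    exact ⟨e '' u, e '' v, he.isOpenMap u hu, he.isOpenMap v hv,
      Set.mem_image_of_mem e hau, Set.mem_image_of_mem e hbv,
      (Set.disjoint_image_iff he.injective).2 huv⟩
  · intro Y hY s _
    haveI : T1Space (Y : Type u) := hY
    exact inferInstanceAs (T1Space s)
  · intro Z h
    rw [t1Space_iff_exists_open]
    intro x y hxy
    obtain ⟨W, e, hW, he, ⟨a, rfl⟩, ⟨b, rfl⟩⟩ := h x y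
    haveI : T1Space (W : Type u) := hW
    have hab : a ≠ b := fun h' => hxy (congrArg e h')
    obtain ⟨U, hU, haU, hbU⟩ := t1Space_iff_exists_open.1 inferInstance hab
    refine ⟨e '' U, he.isOpenMap U hU, Set.mem_image_of_mem e haU, ?_⟩
    rintro ⟨b', hb', hb'b⟩
    exact hbU (he.injective hb'b ▸ hb')
  · intro Y hY s _
    haveI : T0Space (Y : Type u) := hY
    exact inferInstanceAs (T0Space s)
  · intro Z h
    rw [t0Space_iff_exists_isOpen_xor'_mem]
    intro x y hxy
    obtain ⟨W, e, hW, he, ⟨a, rfl⟩, ⟨b, rfl⟩⟩ := h x y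
    haveI : T0Space (W : Type u) := hW
    have hab : a ≠ b := fun h' => hxy (congrArg e h')
    obtain ⟨U, hU, hxor⟩ := exists_isOpen_xor'_mem hab
    refine ⟨e '' U, he.isOpenMap U hU, ?_⟩
    have h1 : e a ∈ e '' U ↔ a ∈ U :=
      ⟨fun ⟨a', ha', haa⟩ => he.injective haa ▸ ha', fun h => Set.mem_image_of_mem e h⟩
    have h2 : e b ∈ e '' U ↔ b ∈ U :=
      ⟨fun ⟨b', hb', hbb⟩ => he.injective hbb ▸ hb', fun h => Set.mem_image_of_mem e h⟩
    rcases hxor with ⟨haU, hbU⟩ | ⟨hbU, haU⟩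
    · exact Or.inl ⟨h1.2 haU, fun hc => hbU (h2.1 hc)⟩
    · exact Or.inr ⟨h2.2 hbU, fun hc => haU (h1.1 hc)⟩
end

section
/- Let C be a full reflective subcategory of Top that contains a non-empty space X which is finitely generated in C. Then for every directed diagram of monomorphisms in C with colimit Z computed in Top, the reflection map (unit of the reflection) r_Z : Z → RZ is bijective on underlying sets. -/
open CategoryTheory CategoryTheory.Limits

universe u

/-- An object `X` of the full subcategory of `Top` given by a property `P` is finitely
generated there if for every diagram in the subcategory indexed by a directed poset
(every finite subset has an upper bound) whose connecting maps are monomorphisms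
(injective continuous maps), with colimit cocone `c` in the subcategory, every morphism
`f : X ⟶ c.pt` factors through some colimit injection, essentially uniquely (any two
factorizations through the same stage are merged by a connecting map). -/
def TopCat.FinGenIn (P : TopCat.{u} → Prop) (X : ObjectProperty.FullSubcategory P) : Prop :=
  ∀ (I : Type u) [PartialOrder I] [Nonempty I] [IsDirected I (· ≤ ·)]
    (F : I ⥤ ObjectProperty.FullSubcategory P),
    (∀ {i j : I} (f : i ⟶ j),
      Function.Injective ((ObjectProperty.ι P).map (F.map f))) →
    ∀ (c : Cocone F), IsColimit c →
      ∀ f : X ⟶ c.pt,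
        (∃ (i : I) (g : X ⟶ F.obj i), g ≫ c.ι.app i = f) ∧
        (∀ (i : I) (g g' : X ⟶ F.obj i), g ≫ c.ι.app i = f → g' ≫ c.ι.app i = f →
          ∃ (j : I) (h : i ≤ j), g ≫ F.map (homOfLE h) = g' ≫ F.map (homOfLE h))

/-- Let `C` be a full reflective subcategory of `Top` (given by a property
`P` of spaces, with reflector `R` left adjoint to the inclusion) containing a non-empty
finitely generated object `X`. Then for every directed diagram of monomorphisms in `C`
with colimit `Z` computed in `Top`, the reflection map (the unit) `Z ⟶ RZ` is bijective. -/
theorem reflection_bijective_of_nonempty_finGen (P : TopCat.{u} → Prop)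
    (R : TopCat.{u} ⥤ ObjectProperty.FullSubcategory P) (adj : R ⊣ ObjectProperty.ι P)
    (X : ObjectProperty.FullSubcategory P) (hne : Nonempty X.obj) (hfg : TopCat.FinGenIn P X)
    (I : Type u) [PartialOrder I] [Nonempty I] [IsDirected I (· ≤ ·)]
    (F : I ⥤ ObjectProperty.FullSubcategory P)
    (hmono : ∀ {i j : I} (f : i ⟶ j),
      Function.Injective ((ObjectProperty.ι P).map (F.map f)))
    (c : Cocone (F ⋙ ObjectProperty.ι P)) (hc : IsColimit c) :
    Function.Bijective (adj.unit.app c.pt) := by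
  obtain ⟨x₀⟩ := hne
  -- the cocone over `F` in the subcategory, with point `R.obj c.pt`
  let c' : Cocone F :=
    { pt := R.obj c.pt
      ι := { app := fun i => ObjectProperty.homMk (c.ι.app i ≫ adj.unit.app c.pt : _)
             naturality := fun i j f => by
               apply ObjectProperty.hom_ext
               show ((F ⋙ ObjectProperty.ι P).map f ≫ c.ι.app j) ≫
                   adj.unit.app c.pt = (c.ι.app i ≫ adj.unit.app c.pt) ≫ 𝟙 _
               rw [c.w f, Category.comp_id] } }
  have key : ∀ (Y : ObjectProperty.FullSubcategory P) (d : c.pt ⟶ Y.obj),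
      adj.unit.app c.pt ≫
        (ObjectProperty.ι P).map ((adj.homEquiv c.pt Y).symm d) = d := by
    intro Y d
    have := (adj.homEquiv c.pt Y).apply_symm_apply d
    rwa [adj.homEquiv_unit] at this
  -- `c'` is a colimit of `F` in the subcategory
  have hc' : IsColimit c' :=
    { desc := fun s => (adj.homEquiv c.pt s.pt).symm
        (hc.desc ((ObjectProperty.ι P).mapCocone s))
      fac := fun s i => by
        apply ObjectProperty.hom_ext
        show (c.ι.app i ≫ adj.unit.app c.pt) ≫ _ = _
        rw [Category.assoc]
        show c.ι.app i ≫ (adj.unit.app c.pt ≫ (ObjectProperty.ι P).map ((adj.homEquiv c.pt s.pt).symm (hc.desc ((ObjectProperty.ι P).mapCocone s)))) = _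
        rw [key, hc.fac]
        rfl
      uniq := fun s m hm => by
        rw [Equiv.eq_symm_apply, adj.homEquiv_unit]
        apply hc.hom_ext
        intro j
        rw [hc.fac]
        show c.ι.app j ≫ adj.unit.app c.pt ≫ (ObjectProperty.ι P).map m = _
        rw [← Category.assoc]
        exact congrArg (ObjectProperty.ι P).map (hm j) }
  constructor
  · -- injectivity
    intro z z' hzz'
    have hcT := isColimitOfPreserves (forget TopCat) hc
    obtain ⟨i, y, hy⟩ := Types.jointly_surjective _ hcT z
    obtain ⟨j, y', hy'⟩ := Types.jointly_surjective _ hcT z'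
    obtain ⟨k, hik, hjk⟩ := directed_of (· ≤ ·) i j
    set y₁ := ((ObjectProperty.ι P).map (F.map (homOfLE hik))) y with hy₁
    set y₂ := ((ObjectProperty.ι P).map (F.map (homOfLE hjk))) y' with hy₂
    have hz : c.ι.app k y₁ = z := by
      have h1 := ConcreteCategory.congr_hom (c.w (homOfLE hik)) y
      simp only [TopCat.comp_app] at h1
      exact h1.trans hy
    have hz' : c.ι.app k y₂ = z' := by
      have h1 := ConcreteCategory.congr_hom (c.w (homOfLE hjk)) y'
      simp only [TopCat.comp_app] at h1
      exact h1.trans hy'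
    let f : X ⟶ c'.pt := ObjectProperty.homMk (TopCat.ofHom (ContinuousMap.const X.obj (adj.unit.app c.pt z)))
    let g : X ⟶ F.obj k := ObjectProperty.homMk (TopCat.ofHom (ContinuousMap.const X.obj y₁))
    let g' : X ⟶ F.obj k := ObjectProperty.homMk (TopCat.ofHom (ContinuousMap.const X.obj y₂))
    have hgf : g ≫ c'.ι.app k = f := by
      apply (ObjectProperty.ι P).map_injective
      ext x
      show (adj.unit.app c.pt) (c.ι.app k y₁) = (adj.unit.app c.pt) z
      rw [hz]
    have hg'f : g' ≫ c'.ι.app k = f := by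
      apply (ObjectProperty.ι P).map_injective
      ext x
      show (adj.unit.app c.pt) (c.ι.app k y₂) = (adj.unit.app c.pt) z
      rw [hz', ← hzz']
    obtain ⟨l, hkl, hgg⟩ := (hfg I F hmono c' hc' f).2 k g g' hgf hg'f
    have hpt := ConcreteCategory.congr_hom
      (congrArg (ObjectProperty.ι P).map hgg) x₀
    have hpt' : ((ObjectProperty.ι P).map (F.map (homOfLE hkl))) y₁ =
        ((ObjectProperty.ι P).map (F.map (homOfLE hkl))) y₂ := hpt
    have e1 := ConcreteCategory.congr_hom (c.w (homOfLE hkl)) y₁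
    have e2 := ConcreteCategory.congr_hom (c.w (homOfLE hkl)) y₂
    simp only [TopCat.comp_app] at e1 e2
    calc z = c.ι.app k y₁ := hz.symm
      _ = c.ι.app l (((ObjectProperty.ι P).map (F.map (homOfLE hkl))) y₁) := e1.symm
      _ = c.ι.app l (((ObjectProperty.ι P).map (F.map (homOfLE hkl))) y₂) :=
          congrArg _ hpt'
      _ = c.ι.app k y₂ := e2
      _ = z' := hz'
  · -- surjectivity
    intro w
    let f : X ⟶ c'.pt := ObjectProperty.homMk (TopCat.ofHom (ContinuousMap.const X.obj w))
    obtain ⟨i, g, hg⟩ := (hfg I F hmono c' hc' f).1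
    refine ⟨c.ι.app i (((ObjectProperty.ι P).map g) x₀), ?_⟩
    have := ConcreteCategory.congr_hom (congrArg (ObjectProperty.ι P).map hg) x₀
    exact this
end

section
/- Let C be a full reflective subcategory of Top such that every object of C is a T₀-space and every compact metrizable space belongs to C. Then the empty space is the only finitely presentable object of C: every object X of C that is finitely presentable in C is empty. -/
open CategoryTheory CategoryTheory.Limits

universe u

/-- An object `X` of the full subcategory of `Top` given by a property `P` is finitely
presentable there if for every diagram in the subcategory indexed by a directed poset
(every finite subset has an upper bound), with colimit cocone `c` in the subcategory,
every morphism `f : X ⟶ c.pt` factors through some colimit injection, essentially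
uniquely (any two factorizations through the same stage are merged by a connecting map). -/
def TopCat.FinPresIn (P : TopCat.{u} → Prop) (X : ObjectProperty.FullSubcategory P) : Prop :=
  ∀ (I : Type u) [PartialOrder I] [Nonempty I] [IsDirected I (· ≤ ·)]
    (F : I ⥤ ObjectProperty.FullSubcategory P) (c : Cocone F), IsColimit c →
      ∀ f : X ⟶ c.pt,
        (∃ (i : I) (g : X ⟶ F.obj i), g ≫ c.ι.app i = f) ∧
        (∀ (i : I) (g g' : X ⟶ F.obj i), g ≫ c.ι.app i = f → g' ≫ c.ι.app i = f →
          ∃ (j : I) (h : i ≤ j), g ≫ F.map (homOfLE h) = g' ≫ F.map (homOfLE h))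

namespace FinPresProof

open Filter Topology Set

noncomputable section

def aseq (k : ℕ) : ℝ := (1/2 : ℝ) ^ (k + 1)

def bseq (k : ℕ) : ℝ := 2 + aseq k

lemma aseq_pos (k : ℕ) : 0 < aseq k := by
  have : (0:ℝ) < 1/2 := by norm_num
  exact pow_pos this _

lemma aseq_succ_le (k : ℕ) : aseq (k+1) ≤ 1/4 := by
  have h := pow_le_pow_of_le_one (by norm_num : (0:ℝ) ≤ 1/2) (by norm_num : (1/2:ℝ) ≤ 1)
    (by omega : 2 ≤ k + 1 + 1)
  calc aseq (k+1) = (1/2:ℝ)^(k+1+1) := rfl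
    _ ≤ (1/2:ℝ)^2 := h
    _ = 1/4 := by norm_num

lemma two_mul_aseq (k : ℕ) : 2 * aseq (k+1) = aseq k := by
  simp only [aseq, pow_succ]
  ring

def qr (x : ℝ) : ℝ :=
  if x ≤ 1/4 then 2*x
  else if x ≤ 1/2 then 6*x - 1
  else if x ≤ 2 then 2
  else if x ≤ 9/4 then 2*x - 2
  else if x ≤ 5/2 then 5/2 - 10*(x - 9/4)
  else 0

lemma qr_zero : qr 0 = 0 := by norm_num [qr]

lemma qr_two : qr 2 = 2 := by norm_num [qr]

lemma qr_aseq_zero : qr (aseq 0) = 2 := by norm_num [qr, aseq]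

lemma qr_aseq_succ (k : ℕ) : qr (aseq (k+1)) = aseq k := by
  rw [qr, if_pos (aseq_succ_le k), two_mul_aseq]

lemma qr_bseq_zero : qr (bseq 0) = 0 := by norm_num [qr, bseq, aseq]

lemma qr_bseq_succ (k : ℕ) : qr (bseq (k+1)) = bseq k := by
  have h1 : aseq (k+1) ≤ 1/4 := aseq_succ_le k
  have h2 : 0 < aseq (k+1) := aseq_pos _
  have e1 : ¬ (bseq (k+1) ≤ 1/4) := by rw [bseq]; linarith
  have e2 : ¬ (bseq (k+1) ≤ 1/2) := by rw [bseq]; linarith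
  have e3 : ¬ (bseq (k+1) ≤ 2) := by rw [bseq]; linarith
  have e4 : bseq (k+1) ≤ 9/4 := by rw [bseq]; linarith
  rw [qr, if_neg e1, if_neg e2, if_neg e3, if_pos e4]
  have := two_mul_aseq k
  rw [bseq, bseq]
  linarith

lemma qr_cont : Continuous qr := by
  have c5 : Continuous (fun x : ℝ => if x ≤ 5/2 then 5/2 - 10*(x - 9/4) else 0) :=
    Continuous.if_le (by fun_prop) continuous_const continuous_id continuous_const
      (fun x hx => by norm_num [hx])
  have c4 : Continuous (fun x : ℝ => if x ≤ 9/4 then 2*x - 2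
      else if x ≤ 5/2 then 5/2 - 10*(x - 9/4) else 0) :=
    Continuous.if_le (by fun_prop) c5 continuous_id continuous_const
      (fun x hx => by norm_num [hx])
  have c3 : Continuous (fun x : ℝ => if x ≤ 2 then (2:ℝ) else if x ≤ 9/4 then 2*x - 2
      else if x ≤ 5/2 then 5/2 - 10*(x - 9/4) else 0) :=
    Continuous.if_le continuous_const c4 continuous_id continuous_const
      (fun x hx => by norm_num [hx])
  have c2 : Continuous (fun x : ℝ => if x ≤ 1/2 then 6*x - 1 else if x ≤ 2 then (2:ℝ)
      else if x ≤ 9/4 then 2*x - 2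
      else if x ≤ 5/2 then 5/2 - 10*(x - 9/4) else 0) :=
    Continuous.if_le (by fun_prop) c3 continuous_id continuous_const
      (fun x hx => by norm_num [hx])
  exact Continuous.if_le (by fun_prop) c2 continuous_id continuous_const
    (fun x hx => by norm_num [hx])

def S : Set ℝ := insert 0 (range aseq) ∪ insert 2 (range bseq)

lemma zero_mem : (0:ℝ) ∈ S := Or.inl (mem_insert _ _)
lemma two_mem : (2:ℝ) ∈ S := Or.inr (mem_insert _ _)
lemma aseq_mem (k : ℕ) : aseq k ∈ S := Or.inl (mem_insert_of_mem _ ⟨k, rfl⟩)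
lemma bseq_mem (k : ℕ) : bseq k ∈ S := Or.inr (mem_insert_of_mem _ ⟨k, rfl⟩)

lemma qr_mapsTo : MapsTo qr S S := by
  rintro x (h | h) <;> rcases h with rfl | ⟨k, rfl⟩
  · rw [qr_zero]; exact zero_mem
  · cases k with
    | zero => rw [qr_aseq_zero]; exact two_mem
    | succ k => rw [qr_aseq_succ]; exact aseq_mem k
  · rw [qr_two]; exact two_mem
  · cases k with
    | zero => rw [qr_bseq_zero]; exact zero_mem
    | succ k => rw [qr_bseq_succ]; exact bseq_mem k

lemma tendsto_aseq : Tendsto aseq atTop (𝓝 0) :=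
  (tendsto_pow_atTop_nhds_zero_of_lt_one (by norm_num : (0:ℝ) ≤ 1/2)
    (by norm_num : (1/2:ℝ) < 1)).comp (tendsto_add_atTop_nat 1)

lemma tendsto_bseq : Tendsto bseq atTop (𝓝 2) := by
  have h := tendsto_aseq.const_add (2:ℝ)
  norm_num at h
  exact h

lemma isCompact_S : IsCompact S :=
  (tendsto_aseq.isCompact_insert_range).union (tendsto_bseq.isCompact_insert_range)

instance : CompactSpace ↥S := isCompact_iff_compactSpace.mp isCompact_S

abbrev Z : Type u := ULift.{u} ↥S

def qZ : Z.{u} → Z.{u} := fun z => ⟨MapsTo.restrict qr S S qr_mapsTo z.down⟩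

lemma qZ_cont : Continuous qZ.{u} :=
  continuous_uliftUp.comp ((qr_cont.restrict qr_mapsTo).comp continuous_uliftDown)

def p0 : Z.{u} := ⟨⟨0, zero_mem⟩⟩
def p2 : Z.{u} := ⟨⟨2, two_mem⟩⟩
def pa (k : ℕ) : Z.{u} := ⟨⟨aseq k, aseq_mem k⟩⟩
def pb (k : ℕ) : Z.{u} := ⟨⟨bseq k, bseq_mem k⟩⟩

lemma qZ_down_val (z : Z.{u}) : ((qZ z).down : ℝ) = qr z.down := rfl

lemma Z_ext {z w : Z.{u}} (h : (z.down : ℝ) = (w.down : ℝ)) : z = w := by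
  cases z; cases w
  exact congrArg ULift.up (Subtype.ext h)

lemma qZ_p0 : qZ p0.{u} = p0.{u} := Z_ext (by rw [qZ_down_val]; exact qr_zero)
lemma qZ_p2 : qZ p2.{u} = p2.{u} := Z_ext (by rw [qZ_down_val]; exact qr_two)
lemma qZ_pa_zero : qZ (pa.{u} 0) = p2.{u} := Z_ext (by rw [qZ_down_val]; exact qr_aseq_zero)
lemma qZ_pa_succ (k : ℕ) : qZ (pa.{u} (k+1)) = pa.{u} k :=
  Z_ext (by rw [qZ_down_val]; exact qr_aseq_succ k)
lemma qZ_pb_zero : qZ (pb.{u} 0) = p0.{u} := Z_ext (by rw [qZ_down_val]; exact qr_bseq_zero)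
lemma qZ_pb_succ (k : ℕ) : qZ (pb.{u} (k+1)) = pb.{u} k :=
  Z_ext (by rw [qZ_down_val]; exact qr_bseq_succ k)

lemma iter_p0 (n : ℕ) : qZ^[n] p0.{u} = p0.{u} := by
  induction n with
  | zero => rfl
  | succ n ih => rw [Function.iterate_succ_apply, qZ_p0, ih]

lemma iter_p2 (n : ℕ) : qZ^[n] p2.{u} = p2.{u} := by
  induction n with
  | zero => rfl
  | succ n ih => rw [Function.iterate_succ_apply, qZ_p2, ih]

lemma iter_pa (k : ℕ) : qZ^[k+1] (pa.{u} k) = p2.{u} := by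
  induction k with
  | zero => show qZ^[1] (pa 0) = p2; rw [Function.iterate_one]; exact qZ_pa_zero
  | succ k ih => rw [Function.iterate_succ_apply, qZ_pa_succ, ih]

lemma iter_pb (k : ℕ) : qZ^[k+1] (pb.{u} k) = p0.{u} := by
  induction k with
  | zero => show qZ^[1] (pb 0) = p0; rw [Function.iterate_one]; exact qZ_pb_zero
  | succ k ih => rw [Function.iterate_succ_apply, qZ_pb_succ, ih]

lemma tendsto_pa : Tendsto pa.{u} atTop (𝓝 p0.{u}) := by
  have h1 : Tendsto (fun k => (⟨aseq k, aseq_mem k⟩ : ↥S)) atTop (𝓝 ⟨0, zero_mem⟩) :=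
    tendsto_subtype_rng.mpr tendsto_aseq
  exact (continuous_uliftUp.tendsto _).comp h1

lemma tendsto_pb : Tendsto pb.{u} atTop (𝓝 p2.{u}) := by
  have h1 : Tendsto (fun k => (⟨bseq k, bseq_mem k⟩ : ↥S)) atTop (𝓝 ⟨2, two_mem⟩) :=
    tendsto_subtype_rng.mpr tendsto_bseq
  exact (continuous_uliftUp.tendsto _).comp h1

def Zt : TopCat.{u} := TopCat.of Z

def pown (n : ℕ) : Zt.{u} ⟶ Zt.{u} := TopCat.ofHom (ContinuousMap.mk (qZ^[n]) (qZ_cont.iterate n))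

lemma pown_comp (m n : ℕ) : pown.{u} (m + n) = pown n ≫ pown m :=
  TopCat.ext fun z => Function.iterate_add_apply qZ m n z

instance uliftNatSmallCategory : CategoryTheory.SmallCategory (ULift.{u} ℕ) :=
  Preorder.smallCategory _

def Fd (P : TopCat.{u} → Prop) (hP : P Zt.{u}) : ULift.{u} ℕ ⥤ ObjectProperty.FullSubcategory P where
  obj _ := ⟨Zt, hP⟩
  map {i j} _ := ObjectProperty.homMk (pown (j.down - i.down))
  map_id i := by
    show (ObjectProperty.homMk (X := (⟨Zt, hP⟩ : ObjectProperty.FullSubcategory P)) (Y := ⟨Zt, hP⟩) (pown (i.down - i.down))) = 𝟙 _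
    rw [Nat.sub_self]
    rfl
  map_comp {i j k} hij hjk := by
    have h1 : i.down ≤ j.down := (leOfHom hij : i ≤ j)
    have h2 : j.down ≤ k.down := (leOfHom hjk : j ≤ k)
    have h3 : (k.down - j.down) + (j.down - i.down) = k.down - i.down := by omega
    show (ObjectProperty.homMk (X := (⟨Zt, hP⟩ : ObjectProperty.FullSubcategory P)) (Y := ⟨Zt, hP⟩) (pown (k.down - i.down))) = ObjectProperty.homMk (X := (⟨Zt, hP⟩ : ObjectProperty.FullSubcategory P)) (Y := ⟨Zt, hP⟩) (pown (j.down - i.down) ≫ pown (k.down - j.down))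
    rw [← h3]
    exact congrArg _ (pown_comp _ _)

end

end FinPresProof


open FinPresProof Filter Topology

/-- Let `C` be a full reflective subcategory of `Top` (given by a property
`P`, with reflector `R` left adjoint to the inclusion) all of whose objects are T₀-spaces
and which contains every compact metrizable space. Then the empty space is the only
finitely presentable object of `C`. -/
theorem finPres_empty_of_T0_refl_subcat (P : TopCat.{u} → Prop)
    (R : TopCat.{u} ⥤ ObjectProperty.FullSubcategory P) (adj : R ⊣ ObjectProperty.ι P)
    (hT0 : ∀ Y : TopCat.{u}, P Y → T0Space Y)
    (hcm : ∀ Y : TopCat.{u}, CompactSpace Y → TopologicalSpace.MetrizableSpace Y → P Y)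
    (X : ObjectProperty.FullSubcategory P) (hX : TopCat.FinPresIn P X) :
    IsEmpty X.obj := by
  rw [← not_nonempty_iff]
  intro hne
  obtain ⟨x0⟩ := hne
  haveI : Reflective (ObjectProperty.ι P) :=
    { toFull := inferInstance, toFaithful := inferInstance, L := R, adj := adj }
  haveI : HasColimitsOfShape (ULift.{u} ℕ) (ObjectProperty.FullSubcategory P) :=
    hasColimitsOfShape_of_reflective (ObjectProperty.ι P)
  haveI : IsDirected (ULift.{u} ℕ) (· ≤ ·) :=
    ⟨fun a b => ⟨⟨max a.down b.down⟩, le_max_left _ _, le_max_right _ _⟩⟩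
  have cS : CompactSpace ↥(Zt.{u}) := inferInstanceAs (CompactSpace Z)
  have mS : TopologicalSpace.MetrizableSpace ↥(Zt.{u}) :=
    inferInstanceAs (TopologicalSpace.MetrizableSpace Z)
  have hP : P Zt.{u} := hcm _ cS mS
  let F : ULift.{u} ℕ ⥤ ObjectProperty.FullSubcategory P := Fd P hP
  let c : Cocone F := colimit.cocone F
  have hc : IsColimit c := colimit.isColimit F
  haveI hT : T0Space ↥(c.pt.obj) := hT0 _ c.pt.property
  let e : ℕ → C(Z.{u}, ↥(c.pt.obj)) := fun n => (c.ι.app ⟨n⟩).hom.hom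
  have hstep : ∀ n (z : Z.{u}), e n z = e (n+1) (qZ z) := by
    intro n z
    have hle : (⟨n⟩ : ULift.{u} ℕ) ≤ ⟨n+1⟩ := Nat.le_succ n
    have w := c.w (homOfLE hle)
    have w2 : (pown (n+1-n) ≫ (c.ι.app ⟨n+1⟩).hom : Zt.{u} ⟶ c.pt.obj)
        = (c.ι.app ⟨n⟩).hom := congrArg (fun f => f.hom) w
    have h1 : n + 1 - n = 1 := by omega
    calc e n z = (pown (n+1-n) ≫ (c.ι.app ⟨n+1⟩).hom) z :=
          (ConcreteCategory.congr_hom w2 z).symm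
      _ = e (n+1) (qZ^[n+1-n] z) := rfl
      _ = e (n+1) (qZ z) := by rw [h1, Function.iterate_one]
  have h0n : ∀ n (z : Z.{u}), e 0 z = e n (qZ^[n] z) := by
    intro n
    induction n with
    | zero => intro z; rfl
    | succ n ih =>
      intro z
      rw [ih z, hstep n (qZ^[n] z), Function.iterate_succ_apply']
  have e0pa : ∀ k, e 0 (pa k) = e 0 p2 := by
    intro k
    calc e 0 (pa k) = e (k+1) (qZ^[k+1] (pa k)) := h0n _ _
      _ = e (k+1) p2 := by rw [iter_pa]
      _ = e 0 p2 := by rw [h0n (k+1) p2, iter_p2]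
  have e0pb : ∀ k, e 0 (pb k) = e 0 p0 := by
    intro k
    calc e 0 (pb k) = e (k+1) (qZ^[k+1] (pb k)) := h0n _ _
      _ = e (k+1) p0 := by rw [iter_pb]
      _ = e 0 p0 := by rw [h0n (k+1) p0, iter_p0]
  have spec1 : (e 0 p2 : ↥(c.pt.obj)) ⤳ e 0 p0 := by
    have ht : Tendsto (fun k => e 0 (pa k)) atTop (𝓝 (e 0 p0)) :=
      ((e 0).continuous.tendsto p0).comp tendsto_pa
    refine specializes_iff_pure.mpr (Filter.le_def.mpr fun s hs => ?_)
    have hev : ∀ᶠ k in atTop, e 0 (pa k) ∈ s := Filter.mem_map.mp (ht hs)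
    obtain ⟨k, hk⟩ := hev.exists
    rw [e0pa k] at hk
    exact hk
  have spec2 : (e 0 p0 : ↥(c.pt.obj)) ⤳ e 0 p2 := by
    have ht : Tendsto (fun k => e 0 (pb k)) atTop (𝓝 (e 0 p2)) :=
      ((e 0).continuous.tendsto p2).comp tendsto_pb
    refine specializes_iff_pure.mpr (Filter.le_def.mpr fun s hs => ?_)
    have hev : ∀ᶠ k in atTop, e 0 (pb k) ∈ s := Filter.mem_map.mp (ht hs)
    obtain ⟨k, hk⟩ := hev.exists
    rw [e0pb k] at hk
    exact hk
  have key : e 0 p2 = e 0 p0 := (spec1.antisymm spec2).eq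
  obtain ⟨-, huniq⟩ := hX (ULift.{u} ℕ) F c hc
    ((ObjectProperty.homMk (TopCat.ofHom (ContinuousMap.const ↥X.obj p0)) : X ⟶ F.obj ⟨0⟩) ≫ c.ι.app ⟨0⟩)
  have paeq : ((ObjectProperty.homMk (TopCat.ofHom (ContinuousMap.const ↥X.obj p2)) : X ⟶ F.obj ⟨0⟩) ≫ c.ι.app ⟨0⟩)
      = (ObjectProperty.homMk (TopCat.ofHom (ContinuousMap.const ↥X.obj p0)) : X ⟶ F.obj ⟨0⟩) ≫ c.ι.app ⟨0⟩ := by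
    show ObjectProperty.homMk ((TopCat.ofHom (ContinuousMap.const ↥X.obj p2) : X.obj ⟶ Zt.{u}) ≫ (c.ι.app ⟨0⟩).hom)
        = ObjectProperty.homMk ((TopCat.ofHom (ContinuousMap.const ↥X.obj p0) : X.obj ⟶ Zt.{u}) ≫ (c.ι.app ⟨0⟩).hom)
    exact congrArg _ (TopCat.ext fun x => key)
  obtain ⟨j, hj, heq⟩ := huniq ⟨0⟩ (ObjectProperty.homMk (TopCat.ofHom (ContinuousMap.const ↥X.obj p0)))
    (ObjectProperty.homMk (TopCat.ofHom (ContinuousMap.const ↥X.obj p2))) rfl paeq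
  have heq' : ((TopCat.ofHom (ContinuousMap.const ↥X.obj p0) : X.obj ⟶ Zt.{u}) ≫ pown (j.down - 0))
      = (TopCat.ofHom (ContinuousMap.const ↥X.obj p2) : X.obj ⟶ Zt.{u}) ≫ pown (j.down - 0) :=
    congrArg (fun f => f.hom) heq
  have hval : qZ^[j.down - 0] p0.{u} = qZ^[j.down - 0] p2.{u} := ConcreteCategory.congr_hom heq' x0
  rw [iter_p0, iter_p2] at hval
  have hd := congrArg (fun z : Z.{u} => (z.down : ℝ)) hval
  have : (0:ℝ) = 2 := hd
  norm_num at this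
end

section
/- In the category Top₀ of T₀-spaces, a space X is finitely generated with respect to embeddings if and only if its underlying set is finite. -/
open CategoryTheory CategoryTheory.Limits

universe u

/-- An object `X` of the full subcategory of `Top` given by a property `P` is finitely
generated with respect to embeddings there if for every diagram in the subcategory indexed
by a directed poset (every finite subset has an upper bound), whose connecting maps are
(subspace) embeddings, with colimit cocone `c` in the subcategory, every morphism
`f : X ⟶ c.pt` factors through some colimit injection, essentially uniquely (any two
factorizations through the same stage are merged by a connecting map). -/
def TopCat.FinGenWrtEmbeddingsIn (P : TopCat.{u} → Prop) (X : ObjectProperty.FullSubcategory P) : Prop :=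
  ∀ (I : Type u) [PartialOrder I] [Nonempty I] [IsDirected I (· ≤ ·)]
    (F : I ⥤ ObjectProperty.FullSubcategory P),
    (∀ {i j : I} (f : i ⟶ j),
      Topology.IsEmbedding ((ObjectProperty.ι P).map (F.map f))) →
    ∀ (c : Cocone F), IsColimit c →
      ∀ f : X ⟶ c.pt,
        (∃ (i : I) (g : X ⟶ F.obj i), g ≫ c.ι.app i = f) ∧
        (∀ (i : I) (g g' : X ⟶ F.obj i), g ≫ c.ι.app i = f → g' ≫ c.ι.app i = f →
          ∃ (j : I) (h : i ≤ j), g ≫ F.map (homOfLE h) = g' ≫ F.map (homOfLE h))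


open Topology

set_option linter.unusedSectionVars false

namespace T0FG

abbrev P0 : TopCat.{u} → Prop := fun Y => T0Space Y

instance : T0Space Prop := by
  constructor
  intro p q h
  have := h.mem_open_iff (s := {r : Prop | r}) (continuous_Prop.1 continuous_id)
  exact propext (by simpa using this)

section Reflect

variable {I : Type u} [PartialOrder I] [Nonempty I] [IsDirected I (· ≤ ·)]
  (F : I ⥤ ObjectProperty.FullSubcategory P0.{u})

/-- The connecting map of the diagram, as a morphism in `TopCat`. -/
abbrev fmap {i j : I} (h : i ≤ j) : (F.obj i).obj ⟶ (F.obj j).obj :=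
  (ObjectProperty.ι P0).map (F.map (homOfLE h))

lemma fmap_self {i : I} (x : (F.obj i).obj) : fmap F (le_refl i) x = x := by
  have : homOfLE (le_refl i) = 𝟙 i := rfl
  rw [fmap, this, F.map_id, (ObjectProperty.ι P0).map_id]
  rfl

lemma fmap_trans {i j k : I} (h : i ≤ j) (h' : j ≤ k) (x : (F.obj i).obj) :
    fmap F (h.trans h') x = fmap F h' (fmap F h x) := by
  have : homOfLE (h.trans h') = homOfLE h ≫ homOfLE h' := rfl
  rw [fmap, this, F.map_comp, (ObjectProperty.ι P0).map_comp]
  rfl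

/-- The hypothesis that all connecting maps are embeddings. -/
def EmbHyp : Prop := ∀ {i j : I} (f : i ⟶ j),
    Topology.IsEmbedding ((ObjectProperty.ι P0).map (F.map f))

/-- Saturation of an open set `U ⊆ F i` at a stage `j ≥ i`: the largest open set of `F j`
whose preimage in `F i` is contained in `U`. -/
def Umax {i : I} (U : Set (F.obj i).obj) {j : I} (h : i ≤ j) : Set (F.obj j).obj :=
  ⋃₀ {W | IsOpen W ∧ fmap F h ⁻¹' W ⊆ U}

lemma isOpen_Umax {i : I} (U : Set (F.obj i).obj) {j : I} (h : i ≤ j) :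
    IsOpen (Umax F U h) :=
  isOpen_sUnion fun _ hW => hW.1

lemma Umax_self {i : I} {U : Set (F.obj i).obj} (hU : IsOpen U) :
    Umax F U (le_refl i) = U := by
  apply subset_antisymm
  · rintro x ⟨W, ⟨hWo, hWsub⟩, hxW⟩
    exact hWsub (by simpa [fmap_self F] using hxW)
  · intro x hx
    exact ⟨U, ⟨hU, by intro y hy; simpa [fmap_self F] using hy⟩, hx⟩

lemma Umax_compat (hemb : EmbHyp F) {i : I} (U : Set (F.obj i).obj) {j k : I} (h : i ≤ j) (h' : j ≤ k) :
    fmap F h' ⁻¹' (Umax F U (h.trans h')) = Umax F U h := by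
  apply subset_antisymm
  · rintro x ⟨W, ⟨hWo, hWsub⟩, hxW⟩
    refine ⟨fmap F h' ⁻¹' W, ⟨hWo.preimage (fmap F h').hom.continuous, ?_⟩, hxW⟩
    intro y hy
    apply hWsub
    show fmap F (h.trans h') y ∈ W
    rw [fmap_trans F h h']
    exact hy
  · rintro x ⟨W, ⟨hWo, hWsub⟩, hxW⟩
    obtain ⟨W', hW'o, hW'pre⟩ := ((hemb (homOfLE h')).isOpen_iff).1 hWo
    refine ⟨W', ⟨hW'o, ?_⟩, ?_⟩
    · intro y hy
      have hy' : fmap F h' (fmap F h y) ∈ W' := by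
        rw [← fmap_trans F h h']; exact hy
      have hmem : fmap F h y ∈ W := by rw [← hW'pre]; exact hy'
      exact hWsub hmem
    · have hxW' : x ∈ ⇑((ObjectProperty.ι P0).map (F.map (homOfLE h'))) ⁻¹' W' := by
        rw [hW'pre]; exact hxW
      exact hxW'

/-- The saturation of `U` as seen at an arbitrary stage `j`. -/
def VSet (hemb : EmbHyp F) {i : I} (U : Set (F.obj i).obj) (j : I) : Set (F.obj j).obj :=
  {z | ∃ (k : I) (h1 : i ≤ k) (h2 : j ≤ k), fmap F h2 z ∈ Umax F U h1}

lemma VSet_eq (hemb : EmbHyp F) {i : I} (U : Set (F.obj i).obj) {j k : I} (h1 : i ≤ k) (h2 : j ≤ k) :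
    VSet F hemb U j = fmap F h2 ⁻¹' Umax F U h1 := by
  apply subset_antisymm
  · rintro z ⟨k', h1', h2', hz⟩
    obtain ⟨m, hm1, hm2⟩ := directed_of (· ≤ ·) k k'
    have e1 : fmap F (h2.trans hm1) z ∈ Umax F U (h1.trans hm1) := by
      have hz' : fmap F hm2 (fmap F h2' z) ∈ Umax F U (h1'.trans hm2) := by
        rw [← Umax_compat F hemb U h1' hm2] at hz; exact hz
      have path : fmap F (h2.trans hm1) z = fmap F hm2 (fmap F h2' z) := by
        rw [← fmap_trans F h2' hm2]
      have heq : Umax F U (h1'.trans hm2) = Umax F U (h1.trans hm1) := rfl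
      rw [path]; rw [heq] at hz'; exact hz'
    have e2 : fmap F h2 z ∈ Umax F U h1 := by
      rw [← Umax_compat F hemb U h1 hm1]
      show fmap F hm1 (fmap F h2 z) ∈ Umax F U (h1.trans hm1)
      rw [← fmap_trans F h2 hm1]
      exact e1
    exact e2
  · intro z hz
    exact ⟨k, h1, h2, hz⟩

lemma isOpen_VSet (hemb : EmbHyp F) {i : I} {U : Set (F.obj i).obj} (hU : IsOpen U) (j : I) :
    IsOpen (VSet F hemb U j) := by
  obtain ⟨k, h1, h2⟩ := directed_of (· ≤ ·) i j
  rw [VSet_eq F hemb U h1 h2]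
  exact (isOpen_Umax F U h1).preimage (fmap F h2).hom.continuous

lemma VSet_self (hemb : EmbHyp F) {i : I} {U : Set (F.obj i).obj} (hU : IsOpen U) :
    VSet F hemb U i = U := by
  rw [VSet_eq F hemb U (le_refl i) (le_refl i), Umax_self F hU]
  ext x
  constructor
  · intro hx
    have : fmap F (le_refl i) x ∈ U := hx
    rwa [fmap_self F] at this
  · intro hx
    show fmap F (le_refl i) x ∈ U
    rwa [fmap_self F]

lemma VSet_compat (hemb : EmbHyp F) {i : I} (U : Set (F.obj i).obj) {j l : I} (g : j ≤ l) :
    fmap F g ⁻¹' VSet F hemb U l = VSet F hemb U j := by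
  obtain ⟨k, h1, h2⟩ := directed_of (· ≤ ·) i l
  rw [VSet_eq F hemb U h1 h2, VSet_eq F hemb U h1 (g.trans h2)]
  ext z
  simp only [Set.mem_preimage]
  rw [fmap_trans F g h2]


/-- Convert a continuous map into a morphism of the full subcategory. -/
def toHom {A B : ObjectProperty.FullSubcategory P0.{u}} (f : C(A.obj, B.obj)) : A ⟶ B :=
  ObjectProperty.homMk (TopCat.ofHom f)

/-- Convert a morphism of the full subcategory into a continuous map. -/
def ofHom {A B : ObjectProperty.FullSubcategory P0.{u}} (f : A ⟶ B) : C(A.obj, B.obj) := f.hom.hom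

lemma hom_ext' {A B : ObjectProperty.FullSubcategory P0.{u}} {f g : A ⟶ B}
    (h : ∀ x, ofHom f x = ofHom g x) : f = g := by
  apply InducedCategory.hom_ext
  apply TopCat.hom_ext
  exact ContinuousMap.ext h

lemma ofHom_comp {A B C' : ObjectProperty.FullSubcategory P0.{u}} (f : A ⟶ B) (g : B ⟶ C') (x : A.obj) :
    ofHom (f ≫ g) x = ofHom g (ofHom f x) := rfl

/-- The Sierpinski space as an object of `Top₀`. -/
def sierp : ObjectProperty.FullSubcategory P0.{u} :=
  ⟨TopCat.of (ULift.{u} Prop), inferInstanceAs (T0Space (ULift Prop))⟩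

/-- The cocone on the Sierpinski space induced by the saturation of an open set. -/
def chiCocone (hemb : EmbHyp F) {i : I} (U : Set (F.obj i).obj) (hU : IsOpen U) : Cocone F where
  pt := sierp
  ι :=
    { app := fun j =>
        toHom ⟨fun z => ULift.up (z ∈ VSet F hemb U j),
          continuous_uliftUp.comp (continuous_Prop.2 (isOpen_VSet F hemb hU j))⟩
      naturality := by
        intro j l g
        apply hom_ext'
        intro z
        apply congrArg ULift.up
        show (fmap F (leOfHom g) z ∈ VSet F hemb U l) = ((z ∈ VSet F hemb U j) : Prop)
        have : fmap F (leOfHom g) z ∈ VSet F hemb U l ↔ z ∈ VSet F hemb U j := by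
          rw [← VSet_compat F hemb U (leOfHom g)]
          exact Iff.rfl
        exact propext this }

/-- Openness is reflected along the colimit injections. -/
lemma reflect_open (hemb : EmbHyp F) (c : Cocone F) (hc : IsColimit c) {i : I}
    (U : Set (F.obj i).obj) (hU : IsOpen U) :
    ∃ V : Set (c.pt.obj), IsOpen V ∧ (ofHom (c.ι.app i)) ⁻¹' V = U := by
  refine ⟨{w | (ofHom (hc.desc (chiCocone F hemb U hU)) w).down}, ?_, ?_⟩
  · exact continuous_Prop.1
      (continuous_uliftDown.comp (ofHom (hc.desc (chiCocone F hemb U hU))).continuous)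
  · ext z
    have happ : ofHom (hc.desc (chiCocone F hemb U hU)) (ofHom (c.ι.app i) z)
        = ofHom ((chiCocone F hemb U hU).ι.app i) z := by
      have h2 : ofHom (c.ι.app i ≫ hc.desc (chiCocone F hemb U hU)) z
          = ofHom ((chiCocone F hemb U hU).ι.app i) z := by
        have h3 := hc.fac (chiCocone F hemb U hU) i
        exact congrArg (fun q => ofHom q z) h3
      exact h2
    show (ofHom (hc.desc (chiCocone F hemb U hU)) (ofHom (c.ι.app i) z)).down ↔ z ∈ U
    rw [happ]
    show z ∈ VSet F hemb U i ↔ z ∈ U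
    rw [VSet_self F hemb hU]

lemma injective_app (hemb : EmbHyp F) (c : Cocone F) (hc : IsColimit c) (i : I) :
    Function.Injective (ofHom (c.ι.app i)) := by
  intro z z' h
  haveI : T0Space ((F.obj i).obj : TopCat) := (F.obj i).property
  by_contra hne
  obtain ⟨U, hUo, hxor⟩ := exists_isOpen_xor'_mem hne
  obtain ⟨V, hVo, hVpre⟩ := reflect_open F hemb c hc U hUo
  have hiff : z ∈ U ↔ z' ∈ U := by
    rw [← hVpre]
    show ofHom (c.ι.app i) z ∈ V ↔ ofHom (c.ι.app i) z' ∈ V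
    rw [h]
  rcases hxor with ⟨h1, h2⟩ | ⟨h1, h2⟩
  · exact h2 (hiff.1 h1)
  · exact h2 (hiff.2 h1)

lemma jointly_surjective (c : Cocone F) (hc : IsColimit c) (w : c.pt.obj) :
    ∃ (i : I) (z : (F.obj i).obj), ofHom (c.ι.app i) z = w := by
  classical
  let W : Set (c.pt.obj) := ⋃ i : I, Set.range (ofHom (c.ι.app i))
  haveI : T0Space (c.pt.obj : TopCat) := c.pt.property
  let Wtop : ObjectProperty.FullSubcategory P0.{u} := ⟨TopCat.of W, inferInstanceAs (T0Space W)⟩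
  let s : Cocone F :=
    { pt := Wtop
      ι :=
        { app := fun i =>
            toHom ⟨fun z => ⟨ofHom (c.ι.app i) z, Set.mem_iUnion.2 ⟨i, Set.mem_range_self z⟩⟩,
              (ofHom (c.ι.app i)).continuous.subtype_mk _⟩
          naturality := by
            intro j l g
            apply hom_ext'
            intro z
            apply Subtype.ext
            show ofHom (c.ι.app l) (ofHom (F.map g) z) = ofHom (c.ι.app j) z
            rw [← c.w g]
            rfl } }
  have hcomp : hc.desc s ≫ (toHom ⟨Subtype.val, continuous_subtype_val⟩ : Wtop ⟶ c.pt)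
      = 𝟙 c.pt := by
    apply hc.hom_ext
    intro j
    rw [← Category.assoc, hc.fac s j]
    apply hom_ext'
    intro z
    rfl
  have hw2 : (ofHom (hc.desc s) w).1 = w := by
    have h1 : ofHom (hc.desc s ≫ (toHom ⟨Subtype.val, continuous_subtype_val⟩ : Wtop ⟶ c.pt)) w
        = ofHom (𝟙 c.pt) w := by rw [hcomp]
    exact h1
  have hmem : w ∈ W := by
    rw [← hw2]
    exact (ofHom (hc.desc s) w).2
  obtain ⟨_, ⟨i, rfl⟩, z, hz⟩ := hmem
  exact ⟨i, z, hz⟩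

lemma capp_fmap (c : Cocone F) {i j : I} (h : i ≤ j) (z : (F.obj i).obj) :
    ofHom (c.ι.app j) (fmap F h z) = ofHom (c.ι.app i) z := by
  have hw := c.w (homOfLE h)
  exact congrArg (fun q => ofHom q z) hw

end Reflect

lemma finGen_of_finite (X : ObjectProperty.FullSubcategory P0.{u}) (hfin : Finite X.obj) :
    TopCat.FinGenWrtEmbeddingsIn P0 X := by
  intro I _ _ _ F hemb c hc f
  have hembH : EmbHyp F := fun {i j} g => hemb g
  constructor
  · classical
    have hsel : ∀ x : X.obj, ∃ (i : I) (z : (F.obj i).obj), ofHom (c.ι.app i) z = ofHom f x :=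
      fun x => jointly_surjective F c hc (ofHom f x)
    choose ix zx hx using hsel
    obtain ⟨M, hM⟩ := Finset.exists_le ((Set.finite_range ix).toFinset)
    have hle : ∀ x : X.obj, ix x ≤ M := fun x => hM (ix x) (by
      simp [Set.Finite.mem_toFinset])
    have hgpt : ∀ x : X.obj, ofHom (c.ι.app M) (fmap F (hle x) (zx x)) = ofHom f x := by
      intro x
      rw [capp_fmap F c (hle x) (zx x)]
      exact hx x
    have hcont : Continuous (fun x : X.obj => fmap F (hle x) (zx x)) := by
      rw [continuous_def]
      intro U hU
      obtain ⟨V, hVo, hVpre⟩ := reflect_open F hembH c hc U hU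
      have heq : (fun x : X.obj => fmap F (hle x) (zx x)) ⁻¹' U = (ofHom f) ⁻¹' V := by
        ext x
        constructor
        · intro hxU
          have : fmap F (hle x) (zx x) ∈ (ofHom (c.ι.app M)) ⁻¹' V := by
            rw [hVpre]; exact hxU
          show ofHom f x ∈ V
          rw [← hgpt x]
          exact this
        · intro hxV
          have h1 : ofHom (c.ι.app M) (fmap F (hle x) (zx x)) ∈ V := by
            rw [hgpt x]; exact hxV
          have : fmap F (hle x) (zx x) ∈ (ofHom (c.ι.app M)) ⁻¹' V := h1
          rw [hVpre] at this
          exact this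
      rw [heq]
      exact hVo.preimage (ofHom f).continuous
    refine ⟨M, toHom ⟨fun x => fmap F (hle x) (zx x), hcont⟩, ?_⟩
    apply hom_ext'
    intro x
    exact hgpt x
  · intro i g g' hg hg'
    refine ⟨i, le_refl i, ?_⟩
    have hgg : g = g' := by
      apply hom_ext'
      intro x
      apply injective_app F hembH c hc i
      have h1 := congrArg (fun q => ofHom q x) hg
      have h2 := congrArg (fun q => ofHom q x) hg'
      exact h1.trans h2.symm
    rw [hgg]


section Pospisil

variable {β : Type u} [Infinite β]

open Classical in
/-- The basic independent family of sets indexed by subsets of `β`. -/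
noncomputable def Eset (A : Set β) : Set (Finset β × Finset (Finset β)) :=
  {j | j.1.filter (fun a => a ∈ A) ∈ j.2}

lemma exists_mem_symmdiff {A B : Set β} (h : A ≠ B) :
    ∃ x, (x ∈ A ∧ x ∉ B) ∨ (x ∈ B ∧ x ∉ A) := by
  by_contra hc
  push_neg at hc
  apply h
  ext x
  have := hc x
  tauto

open Classical in
lemma Eset_injective : Function.Injective (Eset (β := β)) := by
  intro A B h
  by_contra hne
  obtain ⟨x, hx⟩ := exists_mem_symmdiff hne
  have hkey : ∀ (C D : Set β), x ∈ C → x ∉ D →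
      (({x} : Finset β).filter (fun a => a ∈ C)) ≠ (({x} : Finset β).filter (fun a => a ∈ D)) := by
    intro C D hC hD heq
    have h1 : x ∈ ({x} : Finset β).filter (fun a => a ∈ C) := by
      rw [Finset.mem_filter]; exact ⟨Finset.mem_singleton_self x, hC⟩
    rw [heq, Finset.mem_filter] at h1
    exact hD h1.2
  rcases hx with ⟨hA, hB⟩ | ⟨hB, hA⟩
  · have hj : (({x}, {({x} : Finset β).filter (fun a => a ∈ A)}) :
        Finset β × Finset (Finset β)) ∈ Eset A := by
      show _ ∈ ({_} : Finset (Finset β))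
      exact Finset.mem_singleton_self _
    rw [h] at hj
    have : (({x} : Finset β).filter (fun a => a ∈ B))
        ∈ ({({x} : Finset β).filter (fun a => a ∈ A)} : Finset (Finset β)) := hj
    rw [Finset.mem_singleton] at this
    exact hkey A B hA hB this.symm
  · have hj : (({x}, {({x} : Finset β).filter (fun a => a ∈ B)}) :
        Finset β × Finset (Finset β)) ∈ Eset B := by
      show _ ∈ ({_} : Finset (Finset β))
      exact Finset.mem_singleton_self _
    rw [← h] at hj
    have : (({x} : Finset β).filter (fun a => a ∈ A))
        ∈ ({({x} : Finset β).filter (fun a => a ∈ B)} : Finset (Finset β)) := hj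
    rw [Finset.mem_singleton] at this
    exact hkey B A hB hA this.symm

/-- The family of generators attached to a set `𝔖` of subsets of `β`. -/
def famSets (𝔖 : Set (Set β)) : Set (Set (Finset β × Finset (Finset β))) :=
  {T | (∃ A ∈ 𝔖, T = Eset A) ∨ (∃ A, A ∉ 𝔖 ∧ T = (Eset A)ᶜ)}

open Classical in
lemma famSets_fip (𝔖 : Set (Set β)) (t : Set (Set (Finset β × Finset (Finset β))))
    (hsub : t ⊆ famSets 𝔖) (hfin : t.Finite) : (⋂₀ t).Nonempty := by
  -- positive and negative index sets
  set P : Set (Set β) := {A | A ∈ 𝔖 ∧ Eset A ∈ t} with hP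
  set N : Set (Set β) := {A | A ∉ 𝔖 ∧ (Eset A)ᶜ ∈ t} with hN
  have hPfin : P.Finite := by
    have h1 : P ⊆ Eset ⁻¹' t := fun A hA => hA.2
    exact (hfin.preimage (Set.injOn_of_injective Eset_injective)).subset h1
  have hNfin : N.Finite := by
    have hinj : Function.Injective (fun A : Set β => (Eset A)ᶜ) :=
      fun A B h => Eset_injective (compl_injective h)
    have h1 : N ⊆ (fun A : Set β => (Eset A)ᶜ) ⁻¹' t := fun A hA => hA.2
    exact (hfin.preimage (Set.injOn_of_injective hinj)).subset h1
  -- a separating function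
  have hβ : Nonempty β := inferInstance
  let sep : Set β → Set β → β := fun A B =>
    if h : A ≠ B then Classical.choose (exists_mem_symmdiff h) else Classical.arbitrary β
  have hsep : ∀ (A B : Set β), A ≠ B →
      (sep A B ∈ A ∧ sep A B ∉ B) ∨ (sep A B ∈ B ∧ sep A B ∉ A) := by
    intro A B h
    have : sep A B = Classical.choose (exists_mem_symmdiff h) := by
      simp only [sep, dif_pos h]
    rw [this]
    exact Classical.choose_spec (exists_mem_symmdiff h)
  -- the finite separating set
  have hFset : ((fun p : Set β × Set β => sep p.1 p.2) '' (P ×ˢ N)).Finite :=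
    (hPfin.prod hNfin).image _
  let Fc : Finset β := hFset.toFinset
  let 𝔽 : Finset (Finset β) := (hPfin.image (fun A => Fc.filter (fun a => a ∈ A))).toFinset
  refine ⟨(Fc, 𝔽), ?_⟩
  intro T hT
  rcases hsub hT with ⟨A, hA𝔖, rfl⟩ | ⟨A, hA𝔖, rfl⟩
  · -- positive generator
    show Fc.filter (fun a => a ∈ A) ∈ 𝔽
    rw [Set.Finite.mem_toFinset]
    exact ⟨A, ⟨hA𝔖, hT⟩, rfl⟩
  · -- negative generator
    show ¬ (Fc.filter (fun a => a ∈ A) ∈ 𝔽)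
    intro hmem
    rw [Set.Finite.mem_toFinset] at hmem
    obtain ⟨A', hA'P, heq0⟩ := hmem
    have heq : Finset.filter (fun a => a ∈ A') Fc = Finset.filter (fun a => a ∈ A) Fc := heq0
    have hne : A' ≠ A := fun h => hA𝔖 (h ▸ hA'P.1)
    have hxF : sep A' A ∈ Fc := by
      rw [Set.Finite.mem_toFinset]
      exact ⟨(A', A), ⟨hA'P, ⟨hA𝔖, hT⟩⟩, rfl⟩
    rcases hsep A' A hne with ⟨h1, h2⟩ | ⟨h1, h2⟩
    · have : sep A' A ∈ Fc.filter (fun a => a ∈ A') := by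
        rw [Finset.mem_filter]; exact ⟨hxF, h1⟩
      rw [heq, Finset.mem_filter] at this
      exact h2 this.2
    · have : sep A' A ∈ Fc.filter (fun a => a ∈ A) := by
        rw [Finset.mem_filter]; exact ⟨hxF, h1⟩
      rw [← heq, Finset.mem_filter] at this
      exact h2 this.2

/-- The ultrafilter attached to a family `𝔖`. -/
noncomputable def bigUF (𝔖 : Set (Set β)) : Ultrafilter (Finset β × Finset (Finset β)) :=
  haveI : (Filter.generate (famSets 𝔖)).NeBot :=
    Filter.generate_neBot_iff.2 fun t hts htf => famSets_fip 𝔖 t hts htf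
  Ultrafilter.of (Filter.generate (famSets 𝔖))

lemma mem_bigUF {𝔖 : Set (Set β)} {T : Set (Finset β × Finset (Finset β))}
    (hT : T ∈ famSets 𝔖) : T ∈ bigUF 𝔖 := by
  haveI : (Filter.generate (famSets 𝔖)).NeBot :=
    Filter.generate_neBot_iff.2 fun t hts htf => famSets_fip 𝔖 t hts htf
  have hle := Ultrafilter.of_le (Filter.generate (famSets 𝔖))
  exact hle (Filter.mem_generate_of_mem hT)

lemma bigUF_injective : Function.Injective (bigUF (β := β)) := by
  intro 𝔖 𝔖' h
  by_contra hne
  obtain ⟨A, hx⟩ := exists_mem_symmdiff hne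
  have key : ∀ (𝔄 𝔅 : Set (Set β)), A ∈ 𝔄 → A ∉ 𝔅 → bigUF 𝔄 = bigUF 𝔅 → False := by
    intro 𝔄 𝔅 h1 h2 heq
    have hE : Eset A ∈ bigUF 𝔄 := mem_bigUF (Or.inl ⟨A, h1, rfl⟩)
    have hEc : (Eset A)ᶜ ∈ bigUF 𝔄 := by
      rw [heq]
      exact mem_bigUF (Or.inr ⟨A, h2, rfl⟩)
    have : (Eset A ∩ (Eset A)ᶜ : Set _) ∈ bigUF 𝔄 := Filter.inter_mem hE hEc
    rw [Set.inter_compl_self] at this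
    exact (bigUF 𝔄).empty_notMem this
  rcases hx with ⟨h1, h2⟩ | ⟨h1, h2⟩
  · exact key 𝔖 𝔖' h1 h2 h
  · exact key 𝔖' 𝔖 h1 h2 h.symm

lemma card_ultrafilter_ge :
    (2 : Cardinal.{u}) ^ ((2 : Cardinal.{u}) ^ Cardinal.mk β) ≤ Cardinal.mk (Ultrafilter β) := by
  classical
  have h1 : Cardinal.mk (Set (Set β)) ≤ Cardinal.mk (Ultrafilter (Finset β × Finset (Finset β))) :=
    Cardinal.mk_le_of_injective bigUF_injective
  -- transport along an equivalence of index types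
  have hcard : Cardinal.mk (Finset β × Finset (Finset β)) = Cardinal.mk β := by
    haveI : Infinite (Finset β) := inferInstance
    have hstep : Cardinal.mk (Finset β × Finset (Finset β)) = Cardinal.mk β * Cardinal.mk β := by
      simp [Cardinal.mk_prod, Cardinal.mk_finset_of_infinite]
    rw [hstep]
    exact Cardinal.mul_eq_self (Cardinal.infinite_iff.1 inferInstance)
  obtain ⟨e⟩ := Cardinal.eq.1 hcard
  have h2 : Cardinal.mk (Ultrafilter (Finset β × Finset (Finset β)))
      ≤ Cardinal.mk (Ultrafilter β) := by
    apply Cardinal.mk_le_of_injective (f := Ultrafilter.map e)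
    intro u v huv
    apply Ultrafilter.ext
    intro T
    have hu : T = e ⁻¹' (e.symm ⁻¹' T) := by
      ext j; simp
    rw [hu]
    constructor
    · intro hmem
      have : e.symm ⁻¹' T ∈ Ultrafilter.map e u := Ultrafilter.mem_map.2 hmem
      rw [huv] at this
      exact Ultrafilter.mem_map.1 this
    · intro hmem
      have : e.symm ⁻¹' T ∈ Ultrafilter.map e v := Ultrafilter.mem_map.2 hmem
      rw [← huv] at this
      exact Ultrafilter.mem_map.1 this
  calc (2 : Cardinal.{u}) ^ ((2 : Cardinal.{u}) ^ Cardinal.mk β)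
      = Cardinal.mk (Set (Set β)) := by rw [Cardinal.mk_set, Cardinal.mk_set]
    _ ≤ _ := h1.trans h2

end Pospisil

section CounterEx

variable {α : Type u} [TopologicalSpace α] [T0Space α]

/-- `(y, S)` is a *bad pair* for the ultrafilter `𝒰` if `S` meets every neighbourhood of `y`
and every subset of `S` meeting every neighbourhood of `y` belongs to `𝒰`. -/
def IsBadPair (𝒰 : Ultrafilter α) (y : α) (S : Set α) : Prop :=
  (∀ U : Set α, IsOpen U → y ∈ U → (U ∩ S).Nonempty) ∧
  (∀ B : Set α, B ⊆ S → (∀ U : Set α, IsOpen U → y ∈ U → (U ∩ B).Nonempty) → B ∈ 𝒰)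

/-- A good ultrafilter: free, and with no bad pairs. -/
def IsGoodUF (𝒰 : Ultrafilter α) : Prop :=
  (∀ x : α, {x} ∉ 𝒰) ∧ ∀ (y : α) (S : Set α), ¬ IsBadPair 𝒰 y S

lemma badPair_mem_iff {𝒰 : Ultrafilter α} {y : α} {S : Set α} (h : IsBadPair 𝒰 y S)
    (T : Set α) :
    T ∈ 𝒰 ↔ (∀ U : Set α, IsOpen U → y ∈ U → (U ∩ (T ∩ S)).Nonempty) := by
  constructor
  · intro hT
    have hS : S ∈ 𝒰 := h.2 S subset_rfl h.1
    have hTS : T ∩ S ∈ 𝒰 := Filter.inter_mem hT hS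
    intro U hUo hyU
    by_contra hem
    rw [Set.not_nonempty_iff_eq_empty] at hem
    have hUS : U ∩ S ∈ 𝒰 := by
      apply h.2 (U ∩ S) Set.inter_subset_right
      intro U' hU'o hyU'
      obtain ⟨w, hw⟩ := h.1 (U' ∩ U) (hU'o.inter hUo) ⟨hyU', hyU⟩
      exact ⟨w, ⟨hw.1.1, hw.1.2, hw.2⟩⟩
    have hmem : ((T ∩ S) ∩ (U ∩ S) : Set α) ∈ 𝒰 := Filter.inter_mem hTS hUS
    obtain ⟨w, hw⟩ := Filter.nonempty_of_mem hmem
    have : w ∈ U ∩ (T ∩ S) := ⟨hw.2.1, hw.1⟩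
    rw [hem] at this
    exact this
  · intro hmeets
    have hTS : T ∩ S ∈ 𝒰 := h.2 (T ∩ S) Set.inter_subset_right hmeets
    exact Filter.mem_of_superset hTS Set.inter_subset_left

lemma badPair_det {𝒰 𝒰' : Ultrafilter α} {y : α} {S : Set α}
    (h : IsBadPair 𝒰 y S) (h' : IsBadPair 𝒰' y S) : 𝒰 = 𝒰' := by
  apply Ultrafilter.ext
  intro T
  rw [badPair_mem_iff h T, badPair_mem_iff h' T]

lemma singleton_det {𝒰 𝒰' : Ultrafilter α} {x : α}
    (h : {x} ∈ 𝒰) (h' : {x} ∈ 𝒰') : 𝒰 = 𝒰' := by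
  have key : ∀ (𝒱 : Ultrafilter α), {x} ∈ 𝒱 → ∀ T : Set α, T ∈ 𝒱 ↔ x ∈ T := by
    intro 𝒱 hx T
    constructor
    · intro hT
      obtain ⟨w, hw⟩ := Filter.nonempty_of_mem (Filter.inter_mem hT hx)
      rw [Set.mem_singleton_iff.1 hw.2] at hw
      exact hw.1
    · intro hxT
      exact Filter.mem_of_superset hx (Set.singleton_subset_iff.2 hxT)
  apply Ultrafilter.ext
  intro T
  rw [key 𝒰 h T, key 𝒰' h' T]

theorem exists_goodUF [Infinite α] : ∃ 𝒰 : Ultrafilter α, IsGoodUF 𝒰 := by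
  classical
  by_contra hno
  push_neg at hno
  have hchoice : ∀ 𝒰 : Ultrafilter α,
      (∃ x : α, {x} ∈ 𝒰) ∨ (∃ p : α × Set α, IsBadPair 𝒰 p.1 p.2) := by
    intro 𝒰
    have hbad := hno 𝒰
    by_cases h1 : ∃ x : α, {x} ∈ 𝒰
    · exact Or.inl h1
    · right
      push_neg at h1
      have h2 : ¬ ∀ (y : α) (S : Set α), ¬ IsBadPair 𝒰 y S := fun hforall =>
        hbad ⟨h1, hforall⟩
      push_neg at h2
      obtain ⟨y, S, hb⟩ := h2
      exact ⟨(y, S), hb⟩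
  let f : Ultrafilter α → α ⊕ (α × Set α) := fun 𝒰 =>
    if h : ∃ x : α, {x} ∈ 𝒰 then Sum.inl h.choose
    else Sum.inr ((hchoice 𝒰).resolve_left h).choose
  have hinj : Function.Injective f := by
    intro u v huv
    by_cases hu : ∃ x : α, {x} ∈ u <;> by_cases hv : ∃ x : α, {x} ∈ v
    · have e1 : f u = Sum.inl hu.choose := dif_pos hu
      have e2 : f v = Sum.inl hv.choose := dif_pos hv
      rw [e1, e2] at huv
      have hx := Sum.inl.inj huv
      exact singleton_det hu.choose_spec (hx ▸ hv.choose_spec)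
    · have e1 : f u = Sum.inl hu.choose := dif_pos hu
      have e2 : f v = Sum.inr ((hchoice v).resolve_left hv).choose := dif_neg hv
      rw [e1, e2] at huv
      exact absurd huv (by simp)
    · have e1 : f u = Sum.inr ((hchoice u).resolve_left hu).choose := dif_neg hu
      have e2 : f v = Sum.inl hv.choose := dif_pos hv
      rw [e1, e2] at huv
      exact absurd huv (by simp)
    · have e1 : f u = Sum.inr ((hchoice u).resolve_left hu).choose := dif_neg hu
      have e2 : f v = Sum.inr ((hchoice v).resolve_left hv).choose := dif_neg hv
      rw [e1, e2] at huv
      have hp := Sum.inr.inj huv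
      have hbu := ((hchoice u).resolve_left hu).choose_spec
      have hbv := ((hchoice v).resolve_left hv).choose_spec
      rw [hp] at hbu
      exact badPair_det hbu hbv
  have hle : Cardinal.mk (Ultrafilter α) ≤ Cardinal.mk (α ⊕ (α × Set α)) :=
    Cardinal.mk_le_of_injective hinj
  have hkappa : (Cardinal.aleph0 : Cardinal.{u}) ≤ Cardinal.mk α :=
    Cardinal.infinite_iff.1 inferInstance
  have hk2 : (Cardinal.aleph0 : Cardinal.{u}) ≤ 2 ^ Cardinal.mk α :=
    hkappa.trans (Cardinal.cantor _).le
  have hsmall : Cardinal.mk (α ⊕ (α × Set α)) ≤ 2 ^ Cardinal.mk α := by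
    have h1 : Cardinal.mk (α ⊕ (α × Set α))
        = Cardinal.mk α + Cardinal.mk α * 2 ^ Cardinal.mk α := by
      simp [Cardinal.mk_sum, Cardinal.mk_prod, Cardinal.mk_set]
    rw [h1]
    have h2 : Cardinal.mk α * 2 ^ Cardinal.mk α ≤ 2 ^ Cardinal.mk α * 2 ^ Cardinal.mk α :=
      mul_le_mul_left (Cardinal.cantor _).le _
    have h3 : (2 : Cardinal.{u}) ^ Cardinal.mk α * 2 ^ Cardinal.mk α = 2 ^ Cardinal.mk α := by
      rw [← Cardinal.power_add, Cardinal.add_eq_self hkappa]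
    have h4 : Cardinal.mk α + Cardinal.mk α * 2 ^ Cardinal.mk α
        ≤ 2 ^ Cardinal.mk α + 2 ^ Cardinal.mk α :=
      add_le_add (Cardinal.cantor _).le (h2.trans_eq h3)
    rw [Cardinal.add_eq_self hk2] at h4
    exact h4
  have hbig := card_ultrafilter_ge (β := α)
  have : (2 : Cardinal.{u}) ^ ((2 : Cardinal.{u}) ^ Cardinal.mk α) ≤ 2 ^ Cardinal.mk α :=
    (hbig.trans hle).trans hsmall
  exact absurd this (not_le.2 (Cardinal.cantor _))

/-- The key point-set fact: a set all of whose traces on `𝒰`-small sets are relatively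
open must be open. -/
theorem detect {𝒰 : Ultrafilter α} (hgood : IsGoodUF 𝒰) (V : Set α)
    (h : ∀ A : Set α, A ∉ 𝒰 → ∃ U : Set α, IsOpen U ∧ V ∩ A = U ∩ A) : IsOpen V := by
  classical
  by_contra hNV
  rw [isOpen_iff_forall_mem_open] at hNV
  push_neg at hNV
  obtain ⟨y, hyV, hy⟩ := hNV
  have hScond : ∀ U : Set α, IsOpen U → y ∈ U → (U ∩ Vᶜ).Nonempty := by
    intro U hUo hyU
    rw [Set.nonempty_iff_ne_empty]
    intro hemp
    have hsub : U ⊆ V := by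
      intro u hu
      by_contra huV
      exact Set.eq_empty_iff_forall_notMem.1 hemp u ⟨hu, huV⟩
    exact hy U hsub hUo hyU
  have h2 : ¬ ∀ B : Set α, B ⊆ Vᶜ → (∀ U : Set α, IsOpen U → y ∈ U → (U ∩ B).Nonempty) →
      B ∈ 𝒰 := fun hforall => hgood.2 y Vᶜ ⟨hScond, hforall⟩
  push_neg at h2
  obtain ⟨B, hBsub, hBmeets, hBnot⟩ := h2
  have hA : ({y} ∪ B : Set α) ∉ 𝒰 := by
    rw [Ultrafilter.union_mem_iff]
    rintro (h1 | h1)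
    · exact hgood.1 y h1
    · exact hBnot h1
  obtain ⟨U, hUo, htr⟩ := h ({y} ∪ B) hA
  have hyU : y ∈ U := by
    have hyVA : y ∈ V ∩ ({y} ∪ B) := ⟨hyV, Or.inl rfl⟩
    rw [htr] at hyVA
    exact hyVA.1
  obtain ⟨b, hbU, hbB⟩ := hBmeets U hUo hyU
  have hbUA : b ∈ U ∩ ({y} ∪ B) := ⟨hbU, Or.inr hbB⟩
  rw [← htr] at hbUA
  exact hBsub hbB hbUA.1

end CounterEx

section Diagram

variable (X : ObjectProperty.FullSubcategory P0.{u}) (𝒰 : Ultrafilter X.obj)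

/-- The index poset: subsets of `X` not belonging to `𝒰`. -/
abbrev SmallSet : Type u := {A : Set X.obj // A ∉ 𝒰}

instance : PartialOrder (SmallSet X 𝒰) :=
  Subtype.partialOrder _

instance : Nonempty (SmallSet X 𝒰) := ⟨⟨∅, 𝒰.empty_notMem⟩⟩

instance : IsDirected (SmallSet X 𝒰) (· ≤ ·) := by
  constructor
  intro A B
  refine ⟨⟨A.1 ∪ B.1, ?_⟩, Set.subset_union_left, Set.subset_union_right⟩
  rw [Ultrafilter.union_mem_iff]
  rintro (h | h)
  · exact A.2 h
  · exact B.2 h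

/-- The diagram of subspaces indexed by `𝒰`-small subsets. -/
def stageF : SmallSet X 𝒰 ⥤ ObjectProperty.FullSubcategory P0.{u} where
  obj A := ⟨TopCat.of A.1,
    have : T0Space X.obj := X.property
    inferInstanceAs (T0Space A.1)⟩
  map {A B} g := toHom ⟨Set.inclusion (leOfHom g), continuous_inclusion (leOfHom g)⟩
  map_id := by
    intro A
    apply hom_ext'
    intro z
    rfl
  map_comp := by
    intro A B C g g'
    apply hom_ext'
    intro z
    rfl

/-- The cocone over the diagram of small subspaces, with point `X` itself. -/
def stageCocone : Cocone (stageF X 𝒰) where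
  pt := X
  ι :=
    { app := fun _ => toHom ⟨Subtype.val, continuous_subtype_val⟩
      naturality := by
        intro A B g
        apply hom_ext'
        intro z
        rfl }

variable {X 𝒰} (hgood : IsGoodUF 𝒰)

/-- The singleton stage of a point. -/
def sstage (x : X.obj) : SmallSet X 𝒰 := ⟨{x}, hgood.1 x⟩

/-- The canonical descent function for a cocone on the stage diagram. -/
def descFun (s : Cocone (stageF X 𝒰)) (x : X.obj) : s.pt.obj :=
  ofHom (s.ι.app (sstage hgood x)) ⟨x, rfl⟩

lemma descFun_eq (s : Cocone (stageF X 𝒰)) (A : SmallSet X 𝒰) (x : X.obj) (hx : x ∈ A.1) :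
    descFun hgood s x = ofHom (s.ι.app A) ⟨x, hx⟩ := by
  have hle : sstage hgood x ≤ A := by
    intro z hz
    rw [Set.mem_singleton_iff.1 hz]
    exact hx
  have hw := s.w (homOfLE hle)
  have h1 := congrArg (fun q => ofHom q (⟨x, rfl⟩ : ({x} : Set X.obj))) hw
  have h2 : ofHom (s.ι.app A) (Set.inclusion hle ⟨x, rfl⟩)
      = descFun hgood s x := h1
  rw [← h2]

lemma descFun_continuous (s : Cocone (stageF X 𝒰)) : Continuous (descFun hgood s) := by
  haveI : T0Space X.obj := X.property
  rw [continuous_def]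
  intro O hO
  apply detect hgood
  intro A hA
  have hopen : IsOpen ((ofHom (s.ι.app ⟨A, hA⟩)) ⁻¹' O) :=
    hO.preimage (ofHom (s.ι.app ⟨A, hA⟩)).continuous
  obtain ⟨U, hUo, hUpre⟩ := (Topology.IsInducing.subtypeVal).isOpen_iff.1 hopen
  refine ⟨U, hUo, ?_⟩
  ext x
  constructor
  · rintro ⟨hxV, hxA⟩
    have : descFun hgood s x ∈ O := hxV
    rw [descFun_eq hgood s ⟨A, hA⟩ x hxA] at this
    have hmem : (⟨x, hxA⟩ : A) ∈ (Subtype.val ⁻¹' U : Set A) := by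
      rw [hUpre]
      exact this
    exact ⟨hmem, hxA⟩
  · rintro ⟨hxU, hxA⟩
    have hmem : (⟨x, hxA⟩ : A) ∈ (Subtype.val ⁻¹' U : Set A) := hxU
    rw [hUpre] at hmem
    refine ⟨?_, hxA⟩
    show descFun hgood s x ∈ O
    rw [descFun_eq hgood s ⟨A, hA⟩ x hxA]
    exact hmem

/-- `X` is the colimit of its small subspaces. -/
def stageIsColimit : IsColimit (stageCocone X 𝒰) where
  desc s := toHom ⟨descFun hgood s, descFun_continuous hgood s⟩
  fac := by
    intro s A
    apply hom_ext'
    intro z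
    show descFun hgood s z.1 = ofHom (s.ι.app A) z
    rw [descFun_eq hgood s A z.1 z.2]
    exact congrArg (ofHom (s.ι.app A)) (Subtype.ext rfl)
  uniq := by
    intro s m hm
    apply hom_ext'
    intro x
    have h1 := congrArg (fun q => ofHom q (⟨x, rfl⟩ : ({x} : Set X.obj))) (hm (sstage hgood x))
    exact h1

end Diagram

lemma not_finGen_of_infinite (X : ObjectProperty.FullSubcategory P0.{u}) (hinf : Infinite X.obj) :
    ¬ TopCat.FinGenWrtEmbeddingsIn P0 X := by
  haveI : T0Space X.obj := X.property
  obtain ⟨𝒰, hgood⟩ := exists_goodUF (α := X.obj)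
  intro hFG
  have hembs : ∀ {i j : SmallSet X 𝒰} (f : i ⟶ j),
      Topology.IsEmbedding ((ObjectProperty.ι P0).map ((stageF X 𝒰).map f)) :=
    fun {i j} g => Topology.IsEmbedding.inclusion (leOfHom g)
  obtain ⟨⟨i, g, hg⟩, -⟩ := hFG (SmallSet X 𝒰) (stageF X 𝒰) hembs (stageCocone X 𝒰)
    (stageIsColimit hgood) (𝟙 X)
  have hall : ∀ x : X.obj, x ∈ i.1 := by
    intro x
    have h1 := congrArg (fun q => ofHom q x) hg
    have h2 : (ofHom g x).1 = x := h1
    rw [← h2]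
    exact (ofHom g x).2
  have huniv : i.1 = Set.univ := Set.eq_univ_of_forall hall
  apply i.2
  rw [huniv]
  exact Filter.univ_mem




end T0FG

/-- In the category `Top₀` of T₀-spaces, a space is finitely generated
with respect to embeddings if and only if its underlying set is finite. -/
theorem T0_finGenWrtEmbeddings_iff_finite
    (X : ObjectProperty.FullSubcategory (fun Y : TopCat.{u} => T0Space Y)) :
    TopCat.FinGenWrtEmbeddingsIn _ X ↔ Finite X.obj := by
  constructor
  · intro h
    by_contra hfin
    rw [not_finite_iff_infinite] at hfin
    exact T0FG.not_finGen_of_infinite X hfin h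
  · intro h
    exact T0FG.finGen_of_finite X h
end

section
/- Every infinite T₀ topological space X contains either a strictly increasing sequence U₀ ⊊ U₁ ⊊ U₂ ⊊ … of open subsets of X, or a strictly increasing sequence F₀ ⊊ F₁ ⊊ F₂ ⊊ … of closed subsets of X. -/
/-- Every infinite T₀ topological space contains either a strictly
increasing sequence of open subsets or a strictly increasing sequence of closed subsets. -/
theorem infinite_T0_strict_chain (X : Type*) [TopologicalSpace X] [T0Space X] [Infinite X] :
    (∃ U : ℕ → Set X, (∀ n, IsOpen (U n)) ∧ StrictMono U) ∨
    (∃ F : ℕ → Set X, (∀ n, IsClosed (F n)) ∧ StrictMono F) := by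
  by_cases h : Set.PartiallyWellOrderedOn (Set.univ : Set X) (· ⤳ ·)
  · -- PWO case: get a ⤳-monotone subsequence of an injective sequence;
    -- closures of singletons are strictly decreasing, complements strictly increasing open.
    left
    obtain ⟨f, hf⟩ : ∃ f : ℕ → X, Function.Injective f :=
      ⟨Infinite.natEmbedding X, (Infinite.natEmbedding X).injective⟩
    haveI : IsTrans X (· ⤳ ·) := ⟨fun _ _ _ => Specializes.trans⟩
    haveI : IsRefl X (· ⤳ ·) := ⟨fun x => specializes_refl x⟩
    haveI : IsPreorder X (· ⤳ ·) := {}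
    obtain ⟨g, hg⟩ := h.exists_monotone_subseq (f := f) (fun _ => Set.mem_univ _)
    refine ⟨fun n => (closure {f (g n)})ᶜ, fun n => (isClosed_closure).isOpen_compl, ?_⟩
    apply strictMono_nat_of_lt_succ
    intro n
    have hsub : closure ({f (g (n + 1))} : Set X) ⊆ closure {f (g n)} :=
      specializes_iff_closure_subset.mp (hg n (n + 1) (Nat.le_succ n))
    refine (Set.compl_subset_compl.mpr hsub).ssubset_of_ne ?_
    intro hEq
    have hEq' : closure ({f (g (n + 1))} : Set X) = closure {f (g n)} := by
      have := congrArg compl hEq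
      simpa using this.symm
    have h1 : f (g n) ⤳ f (g (n + 1)) := hg n (n + 1) (Nat.le_succ n)
    have h2 : f (g (n + 1)) ⤳ f (g n) :=
      specializes_iff_closure_subset.mpr hEq'.ge
    have : f (g n) = f (g (n + 1)) := (h1.antisymm h2).eq
    exact absurd (g.injective (hf this)) (by omega)
  · -- non-PWO case: a sequence where no earlier term specializes a later one;
    -- closures of initial segments give a strictly increasing closed chain.
    right
    rw [Set.partiallyWellOrderedOn_iff_exists_lt] at h
    push_neg at h
    obtain ⟨f, -, hf⟩ := h
    refine ⟨fun n => ⋃ i ∈ Finset.range (n + 1), closure {f i},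
      fun n => isClosed_biUnion_finset (fun i _ => isClosed_closure), ?_⟩
    apply strictMono_nat_of_lt_succ
    intro n
    constructor
    · intro x hx
      simp only [Set.mem_iUnion, Finset.mem_range] at hx ⊢
      obtain ⟨i, hi, hxi⟩ := hx
      exact ⟨i, by omega, hxi⟩
    · intro hsub
      have hmem : f (n + 1) ∈ ⋃ i ∈ Finset.range (n + 2), closure {f i} := by
        simp only [Set.mem_iUnion, Finset.mem_range]
        exact ⟨n + 1, by omega, subset_closure rfl⟩
      have := hsub hmem
      simp only [Set.mem_iUnion, Finset.mem_range] at this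
      obtain ⟨i, hi, hxi⟩ := this
      exact hf i (n + 1) (by omega) (specializes_iff_mem_closure.mpr hxi)
end

section
/- For every set-indexed family (X_i)_{i∈I} of topological spaces there exist a topological space Y and a subset V ⊆ Y such that V is not open in Y, yet for every i ∈ I and every continuous map f : X_i → Y the preimage f⁻¹(V) is open in X_i; moreover Y can be chosen to be a regular T₁-space. Consequently, none of the categories Top, Top₀, Top₁, Haus has a small strong generator (no small set of objects forms a final sink onto every object). -/
open CategoryTheory

universe u

def IsFinalSinkGenerator (P : TopCat.{u} → Prop) {γ : Type u} (g : γ → TopCat.{u}) : Prop :=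
  ∀ Y : TopCat.{u}, P Y →
    ∀ V : Set Y, (∀ (i : γ) (f : g i ⟶ Y), IsOpen (f ⁻¹' V)) → IsOpen V

section Aux

variable (T : Type u) [Infinite T]

/-- The topology on `Option (Set T)` where every point `some k` is isolated and
neighborhoods of `none` are sets missing at most `|T|` many points. -/
def auxTop : TopologicalSpace (Option (Set T)) where
  IsOpen U := none ∈ U → Cardinal.mk {k : Set T | some k ∉ U} ≤ Cardinal.mk T
  isOpen_univ := by
    intro _
    simp
  isOpen_inter := by
    intro U V hU hV h
    have hsub : {k : Set T | some k ∉ U ∩ V} ⊆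
        {k : Set T | some k ∉ U} ∪ {k : Set T | some k ∉ V} := by
      intro k hk
      by_cases hU' : some k ∈ U
      · exact Or.inr (fun hv => hk ⟨hU', hv⟩)
      · exact Or.inl hU'
    calc Cardinal.mk {k : Set T | some k ∉ U ∩ V}
        ≤ Cardinal.mk ({k : Set T | some k ∉ U} ∪ {k : Set T | some k ∉ V} : Set (Set T)) :=
          Cardinal.mk_le_mk_of_subset hsub
      _ ≤ Cardinal.mk {k : Set T | some k ∉ U} + Cardinal.mk {k : Set T | some k ∉ V} :=
          Cardinal.mk_union_le _ _
      _ ≤ Cardinal.mk T + Cardinal.mk T := add_le_add (hU h.1) (hV h.2)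
      _ = Cardinal.mk T := Cardinal.add_eq_self (Cardinal.aleph0_le_mk T)
  isOpen_sUnion := by
    intro S hS h
    obtain ⟨U, hU, hnU⟩ := h
    refine le_trans (Cardinal.mk_le_mk_of_subset ?_) (hS U hU hnU)
    intro k hk
    exact fun hkU => hk (Set.mem_sUnion.mpr ⟨U, hU, hkU⟩)

end Aux

/-- For every set-indexed family of topological spaces there exist a
regular T₁-space `Y` and a non-open subset `V ⊆ Y` such that the preimage of `V` under
every continuous map from a member of the family to `Y` is open. Consequently, none of the
categories `Top`, `Top₀`, `Top₁`, `Haus` has a small strong generator: no set-indexed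
family of objects of the category forms a final sink onto every object of the category. -/
theorem no_strong_generator_for_Top_T0_T1_Haus :
    (∀ (I : Type u) (X : I → TopCat.{u}),
      ∃ (Y : TopCat.{u}) (V : Set Y),
        ¬ IsOpen V ∧
        (∀ (i : I) (f : X i ⟶ Y), IsOpen (f ⁻¹' V)) ∧
        RegularSpace Y ∧ T1Space Y) ∧
    (∀ (γ : Type u) (g : γ → TopCat.{u}),
      ¬ IsFinalSinkGenerator (fun _ => True) g) ∧
    (∀ (γ : Type u) (g : γ → TopCat.{u}), (∀ i, T0Space (g i)) →
      ¬ IsFinalSinkGenerator (fun Y => T0Space Y) g) ∧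
    (∀ (γ : Type u) (g : γ → TopCat.{u}), (∀ i, T1Space (g i)) →
      ¬ IsFinalSinkGenerator (fun Y => T1Space Y) g) ∧
    (∀ (γ : Type u) (g : γ → TopCat.{u}), (∀ i, T2Space (g i)) →
      ¬ IsFinalSinkGenerator (fun Y => T2Space Y) g) := by
  have main : ∀ (I : Type u) (X : I → TopCat.{u}),
      ∃ (Y : TopCat.{u}) (V : Set Y),
        ¬ IsOpen V ∧
        (∀ (i : I) (f : X i ⟶ Y), IsOpen (f ⁻¹' V)) ∧
        RegularSpace Y ∧ T1Space Y := by
    intro I X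
    -- the big index type
    set T : Type u := ULift.{u} ℕ ⊕ (Σ i : I, (X i : Type u)) with hT
    haveI : Infinite T := Sum.infinite_of_left
    letI τ : TopologicalSpace (Option (Set T)) := auxTop T
    -- basic facts about the topology
    have open_iff : ∀ U : Set (Option (Set T)),
        IsOpen U ↔ (none ∈ U → Cardinal.mk {k : Set T | some k ∉ U} ≤ Cardinal.mk T) :=
      fun U => Iff.rfl
    have open_of_not_none : ∀ U : Set (Option (Set T)), none ∉ U → IsOpen U := by
      intro U h
      rw [open_iff]
      intro h'
      exact absurd h' h
    have closed_of_none : ∀ U : Set (Option (Set T)), none ∈ U → IsClosed U := by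
      intro U h
      rw [← isOpen_compl_iff]
      exact open_of_not_none _ (fun h' => h' h)
    refine ⟨TopCat.of (Option (Set T)), {none}, ?_, ?_, ?_, ?_⟩
    · -- {none} is not open
      intro hopen
      rw [open_iff] at hopen
      have h1 : Cardinal.mk {k : Set T | some k ∉ ({none} : Set (Option (Set T)))}
          ≤ Cardinal.mk T := hopen rfl
      have h2 : {k : Set T | some k ∉ ({none} : Set (Option (Set T)))} = Set.univ := by
        ext k; simp
      rw [h2, Cardinal.mk_univ, Cardinal.mk_set] at h1
      exact absurd h1 (not_le.mpr (Cardinal.cantor _))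
    · -- preimages are open
      intro i f
      classical
      set W : Set (Option (Set T)) := {y | y = none ∨ ∀ x : (X i : Type u), f x ≠ y} with hW
      have hpre : f ⁻¹' W = f ⁻¹' {none} := by
        ext x
        simp only [Set.mem_preimage, hW, Set.mem_setOf_eq, Set.mem_singleton_iff]
        constructor
        · rintro (h | h)
          · exact h
          · exact absurd rfl (h x)
        · intro h; exact Or.inl h
      have hWopen : IsOpen W := by
        rw [open_iff]
        intro _
        have hsub : {k : Set T | some k ∉ W} ⊆ {k : Set T | ∃ x : (X i : Type u), f x = some k} := by
          intro k hk
          simp only [hW, Set.mem_setOf_eq, not_or, not_forall, not_ne_iff] at hk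
          exact hk.2
        refine le_trans (Cardinal.mk_le_mk_of_subset hsub) ?_
        -- inject into X i, then into T
        have hinj : ∃ φ : {k : Set T | ∃ x : (X i : Type u), f x = some k} → T,
            Function.Injective φ := by
          refine ⟨fun k => Sum.inr ⟨i, Classical.choose k.2⟩, ?_⟩
          intro a b hab
          have ha := Classical.choose_spec a.2
          have hb := Classical.choose_spec b.2
          have : Classical.choose a.2 = Classical.choose b.2 := by
            injection hab with h'
            exact (Sigma.mk.inj_iff.mp h').2.eq
          apply Subtype.ext
          have : f (Classical.choose a.2) = f (Classical.choose b.2) := by rw [this]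
          rw [ha, hb] at this
          exact Option.some.inj this
        obtain ⟨φ, hφ⟩ := hinj
        exact Cardinal.mk_le_of_injective hφ
      have : f ⁻¹' {none} = f ⁻¹' W := hpre.symm
      rw [this]
      exact hWopen.preimage f.hom.continuous
    · -- regular
      refine RegularSpace.of_exists_mem_nhds_isClosed_subset ?_
      intro a s hs
      match a with
      | none =>
        obtain ⟨U, hUs, hUopen, hUa⟩ := mem_nhds_iff.mp hs
        exact ⟨U, hUopen.mem_nhds hUa, closed_of_none U hUa, hUs⟩
      | some k =>
        have hmem : some k ∈ s := mem_of_mem_nhds hs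
        have hopen : IsOpen ({some k} : Set (Option (Set T))) :=
          open_of_not_none _ (by simp)
        have hclosed : IsClosed ({some k} : Set (Option (Set T))) := by
          rw [← isOpen_compl_iff]
          rw [open_iff]
          intro _
          have : {k' : Set T | some k' ∉ ({some k} : Set (Option (Set T)))ᶜ} = {k} := by
            ext k'; simp
          rw [this]
          haveI : Nonempty T := inferInstance
          exact Cardinal.mk_le_of_injective
            (f := fun (_ : ({k} : Set (Set T))) => Classical.arbitrary T)
            (Function.injective_of_subsingleton _)
        exact ⟨{some k}, hopen.mem_nhds rfl, hclosed, Set.singleton_subset_iff.mpr hmem⟩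
    · -- T1
      refine ⟨fun y => ?_⟩
      match y with
      | none => exact closed_of_none _ rfl
      | some k =>
        rw [← isOpen_compl_iff]
        rw [open_iff]
        intro _
        have : {k' : Set T | some k' ∉ ({some k} : Set (Option (Set T)))ᶜ} = {k} := by
          ext k'; simp
        rw [this]
        haveI : Nonempty T := inferInstance
        exact Cardinal.mk_le_of_injective
          (f := fun (_ : ({k} : Set (Set T))) => Classical.arbitrary T)
          (Function.injective_of_subsingleton _)
  refine ⟨main, ?_, ?_, ?_, ?_⟩
  · intro γ g H
    obtain ⟨Y, V, hV, hpre, hreg, ht1⟩ := main γ g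
    exact hV (H Y trivial V hpre)
  · intro γ g _ H
    obtain ⟨Y, V, hV, hpre, hreg, ht1⟩ := main γ g
    haveI := ht1
    haveI : T0Space Y := inferInstance
    exact hV (H Y inferInstance V hpre)
  · intro γ g _ H
    obtain ⟨Y, V, hV, hpre, hreg, ht1⟩ := main γ g
    haveI := ht1
    exact hV (H Y inferInstance V hpre)
  · intro γ g _ H
    obtain ⟨Y, V, hV, hpre, hreg, ht1⟩ := main γ g
    haveI := ht1; haveI := hreg
    haveI : T3Space Y := ⟨⟩
    exact hV (H Y inferInstance V hpre)
end
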